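/- arXiv:2111.08332 — 9 statements merged into one kernel-verified Lean document; each statement's English description precedes it below -/
import Mathlib

section
/- Let n be a positive integer, n_p a positive integer, and for k = 0, ..., n-1 let a_k, b_k : ℝ^{n_p} → ℝ be continuous functions. For p ∈ ℝ^{n_p} and τ ≥ 0 define the quasipolynomial Δ(λ; p, τ) = λ^n + Σ_{k=0}^{n-1} a_k(p) λ^k + (Σ_{k=0}^{n-1} b_k(p) λ^k) e^{-λτ}. Suppose λ0 ∈ ℂ is a root of multiplicity k ≥ 1 of Δ(·; p0, τ0) for some p0 ∈ ℝ^{n_p} and τ0 ≥ 0. Then there exists ε̄ > 0 such that for every 0 < ε < ε̄ there exists δ_ε > 0 such that for every p ∈ ℝ^{n_p} and τ ≥ 0 with ‖p - p0‖ < δ_ε and |τ - τ0| < δ_ε, the set of zeros of Δ(·; p, τ) in the open disc {λ ∈ ℂ : |λ - λ0| < ε} is finite and the sum of the multiplicities of these zeros equals k. -/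
open Metric Set Filter Topology

noncomputable def AnalyticAt.order {f : ℂ → ℂ} {z : ℂ} (_hf : AnalyticAt ℂ f z) : ℕ∞ :=
  analyticOrderAt f z

lemma AnalyticAt.order_eq_nat_iff {f : ℂ → ℂ} {z : ℂ} (hf : AnalyticAt ℂ f z) (n : ℕ) :
    hf.order = (n : ℕ∞) ↔
      ∃ (g : ℂ → ℂ), AnalyticAt ℂ g z ∧ g z ≠ 0 ∧ ∀ᶠ y in 𝓝 z, f y = (y - z) ^ n • g y :=
  hf.analyticOrderAt_eq_natCast

lemma AnalyticAt.order_eq_top_iff {f : ℂ → ℂ} {z : ℂ} (hf : AnalyticAt ℂ f z) :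
    hf.order = ⊤ ↔ ∀ᶠ y in 𝓝 z, f y = 0 :=
  analyticOrderAt_eq_top

namespace Stmt0Aux

/-- Bridging lemma: order of an analytic function equals `k` iff the first `k`
iterated derivatives vanish and the `k`-th does not. -/
lemma order_eq_iff_iteratedDeriv {f : ℂ → ℂ} {z0 : ℂ} (hf : AnalyticAt ℂ f z0) (k : ℕ) :
    hf.order = (k : ℕ∞) ↔
      (∀ j < k, iteratedDeriv j f z0 = 0) ∧ iteratedDeriv k f z0 ≠ 0 := by
  obtain ⟨p, hp⟩ := id hf
  have hiter : ∀ j : ℕ, iteratedDeriv j f z0 = ((Nat.factorial j : ℕ) : ℂ) * p.coeff j := by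
    intro j
    obtain ⟨r, hr⟩ := hp
    have h1 := hr.factorial_smul (1 : ℂ) j
    rw [iteratedDeriv_eq_iteratedFDeriv, ← h1]
    rw [nsmul_eq_mul]; rfl
  have hiterzero : ∀ j : ℕ, (iteratedDeriv j f z0 = 0 ↔ p j = 0) := by
    intro j
    rw [hiter, mul_eq_zero, ← FormalMultilinearSeries.coeff_eq_zero]
    simp [Nat.factorial_ne_zero]
  have horder : p ≠ 0 → hf.order = (p.order : ℕ∞) := fun hp0 =>
    (hf.order_eq_nat_iff p.order).mpr ⟨_, ⟨_, hp.has_fpower_series_iterate_dslope_fslope p.order⟩,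
      hp.iterate_dslope_fslope_ne_zero hp0, Eventually.of_forall hp.eq_pow_order_mul_iterate_dslope⟩
  constructor
  · intro h
    have hp0 : p ≠ 0 := by
      intro h0
      rw [(hf.order_eq_top_iff).mpr (hp.locally_zero_iff.mpr h0)] at h
      simp at h
    have hpk : p.order = k := by
      have h2 := horder hp0; rw [h2] at h; exact_mod_cast h
    refine ⟨fun j hj => ?_, ?_⟩
    · exact (hiterzero j).mpr (p.apply_eq_zero_of_lt_order (by rw [hpk]; exact hj))
    · intro hzero
      exact p.apply_order_ne_zero hp0 (by rw [hpk]; exact (hiterzero k).mp hzero)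
  · rintro ⟨h0, hk⟩
    have hpk : p k ≠ 0 := fun h => hk ((hiterzero k).mpr h)
    have hp0 : p ≠ 0 := fun h => hpk (by simp [h])
    have hord : p.order = k := by
      refine le_antisymm (Nat.sInf_le hpk) ?_
      refine le_csInf ⟨k, hpk⟩ fun mm hm => ?_
      by_contra hmk
      exact hm ((hiterzero mm).mp (h0 mm (lt_of_not_ge hmk)))
    rw [horder hp0, hord]

lemma order_zero_iff {f : ℂ → ℂ} {z : ℂ} (hf : AnalyticAt ℂ f z) :
    hf.order = (0 : ℕ∞) ↔ f z ≠ 0 := by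
  constructor
  · intro h
    obtain ⟨g, hg_an, hg_ne, hg_eq⟩ := (hf.order_eq_nat_iff 0).mp (by exact_mod_cast h)
    have h2 : f z = g z := by simpa using hg_eq.self_of_nhds
    rw [h2]; exact hg_ne
  · intro h
    have : hf.order = ((0 : ℕ) : ℕ∞) := (hf.order_eq_nat_iff 0).mpr
      ⟨f, hf, h, by filter_upwards with y; simp⟩
    exact_mod_cast this

lemma not_eventually_zero {f : ℂ → ℂ} (hf : ∀ z, AnalyticAt ℂ f z) (hne : ∃ z, f z ≠ 0)
    (z : ℂ) : ¬ (∀ᶠ w in 𝓝 z, f w = 0) := by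
  intro h
  obtain ⟨w, hw⟩ := hne
  have h2 : EqOn f 0 univ := AnalyticOnNhd.eqOn_zero_of_preconnected_of_eventuallyEq_zero
    (fun x _ => hf x) isPreconnected_univ (mem_univ z)
    (by filter_upwards [h] with y hy; simpa using hy)
  exact hw (h2 (mem_univ w))

lemma zeros_finite {f : ℂ → ℂ} (hf : ∀ z, AnalyticAt ℂ f z) (hne : ∃ z, f z ≠ 0)
    {s : Set ℂ} (hs : IsCompact s) : {z ∈ s | f z = 0}.Finite := by
  by_contra hinf
  
  have hinf' : Set.Infinite {z ∈ s | f z = 0} := hinf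
  obtain ⟨x, hxK, hacc⟩ := hinf'.exists_accPt_of_subset_isCompact hs (sep_subset _ _)
  rw [accPt_iff_frequently] at hacc
  have hfreq : ∃ᶠ y in 𝓝[≠] x, f y = 0 := by
    rw [frequently_nhdsWithin_iff]
    exact hacc.mono fun y hy => ⟨hy.2.2, hy.1⟩
  rcases (hf x).eventually_eq_zero_or_eventually_ne_zero with h | h
  · exact not_eventually_zero hf hne x h
  · exact ((h.and_frequently hfreq).exists).elim fun y hy => hy.1 hy.2



/-- Peel off one zero of an analytic function on an open set. -/
lemma peel {U : Set ℂ} (hU : IsOpen U) {f : ℂ → ℂ} (hf : ∀ z ∈ U, AnalyticAt ℂ f z)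
    {w : ℂ} (hw : w ∈ U) {m : ℕ} (hm1 : 1 ≤ m) (hford : (hf w hw).order = (m : ℕ∞)) :
    ∃ h : ℂ → ℂ, (∀ z ∈ U, AnalyticAt ℂ h z) ∧ (∀ z, f z = (z - w) * h z) ∧
      (∀ hh : AnalyticAt ℂ h w, hh.order = ((m - 1 : ℕ) : ℕ∞)) ∧
      (∀ z ∈ U, z ≠ w → ∀ (hh : AnalyticAt ℂ h z) (hfz : AnalyticAt ℂ f z) (nn : ℕ),
        hfz.order = (nn : ℕ∞) → hh.order = (nn : ℕ∞)) := by
  obtain ⟨g, hg_an, hg_ne, hg_eq⟩ := ((hf w hw).order_eq_nat_iff m).mp hford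
  set h : ℂ → ℂ := fun z => if z = w then (if m = 1 then g w else 0) else f z / (z - w)
    with hh_def
  have hfw : f w = 0 := by
    have h2 := hg_eq.self_of_nhds
    simpa [zero_pow (by omega : m ≠ 0)] using h2
  have heqw : h =ᶠ[𝓝 w] fun z => (z - w) ^ (m - 1) * g z := by
    filter_upwards [hg_eq] with z hz
    by_cases hzw : z = w
    · subst hzw
      by_cases hm : m = 1
      · simp [hh_def, hm]
      · simp [hh_def, hm, zero_pow (show m - 1 ≠ 0 by omega)]
    · have hzw' : z - w ≠ 0 := sub_ne_zero.mpr hzw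
      simp only [hh_def, if_neg hzw]
      rw [hz, smul_eq_mul]
      have hpow : (z - w) ^ m = (z - w) * (z - w) ^ (m - 1) := by
        conv_lhs => rw [show m = 1 + (m - 1) by omega]
        rw [pow_add, pow_one]
      rw [hpow]
      field_simp
  have hanw : AnalyticAt ℂ h w := by
    have h2 : AnalyticAt ℂ (fun z => (z - w) ^ (m - 1) * g z) w :=
      ((analyticAt_id.sub analyticAt_const).pow _).mul hg_an
    exact h2.congr heqw.symm
  have heq : ∀ z, f z = (z - w) * h z := by
    intro z
    by_cases hzw : z = w
    · subst hzw; simp [hfw]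
    · have hzw' : z - w ≠ 0 := sub_ne_zero.mpr hzw
      simp only [hh_def, if_neg hzw]
      field_simp
  refine ⟨h, ?_, heq, ?_, ?_⟩
  · intro z hz
    by_cases hzw : z = w
    · subst hzw; exact hanw
    · have hzw' : z - w ≠ 0 := sub_ne_zero.mpr hzw
      have hev : (fun y => f y / (y - w)) =ᶠ[𝓝 z] h := by
        filter_upwards [eventually_ne_nhds hzw] with y hy
        simp [hh_def, if_neg hy]
      exact (((hf z hz).div (analyticAt_id.sub analyticAt_const) hzw').congr hev)
  · intro hh
    exact (hh.order_eq_nat_iff _).mpr ⟨g, hg_an, hg_ne, by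
      filter_upwards [heqw] with z hz; rw [hz, smul_eq_mul]⟩
  · intro z hz hzw hhz hfz nn hordn
    obtain ⟨G, hG_an, hG_ne, hG_eq⟩ := (hfz.order_eq_nat_iff nn).mp hordn
    refine (hhz.order_eq_nat_iff nn).mpr ⟨fun y => G y / (y - w),
      hG_an.div (analyticAt_id.sub analyticAt_const) (sub_ne_zero.mpr hzw),
      div_ne_zero hG_ne (sub_ne_zero.mpr hzw), ?_⟩
    filter_upwards [hG_eq, eventually_ne_nhds hzw] with y hy hyw
    have hyw' : y - w ≠ 0 := sub_ne_zero.mpr hyw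
    have h3 : h y = f y / (y - w) := by simp [hh_def, if_neg hyw]
    rw [h3, hy, smul_eq_mul, smul_eq_mul, mul_div_assoc]

/-- The argument principle, by induction on the number of zeros. -/
lemma argP : ∀ (N : ℕ) (f : ℂ → ℂ) (c : ℂ) (r R : ℝ), 0 < r → r < R →
    ∀ (hf : ∀ z ∈ ball c R, AnalyticAt ℂ f z)
      (S : Finset ℂ), (∀ z, z ∈ S ↔ z ∈ ball c R ∧ f z = 0) →
      (∀ z ∈ S, z ∈ ball c r) →
      ∀ mu : ℂ → ℕ, (∀ z (hz : z ∈ ball c R), f z = 0 → (hf z hz).order = (mu z : ℕ∞)) →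
      (∑ z ∈ S, mu z) = N →
      (∮ z in C(c, r), deriv f z / f z) = 2 * Real.pi * Complex.I * N := by
  intro N
  induction N with
  | zero =>
    intro f c r R hr hrR hf S hS hzr mu hm hsum
    have hzero : ∀ z ∈ ball c R, f z ≠ 0 := by
      intro z hz hz0
      have hzS : z ∈ S := (hS z).mpr ⟨hz, hz0⟩
      have hmz : mu z = 0 := Finset.sum_eq_zero_iff.mp hsum z hzS
      have h0 : (hf z hz).order = (0 : ℕ∞) := by rw [hm z hz hz0, hmz]; rfl
      exact (order_zero_iff (hf z hz)).mp h0 hz0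
    have hsub : closedBall c r ⊆ ball c R := closedBall_subset_ball hrR
    have hcont : ContinuousOn (fun z => deriv f z / f z) (closedBall c r) := by
      intro z hz
      have hz' := hsub hz
      exact ((AnalyticOnNhd.deriv hf z hz').continuousAt.continuousWithinAt).div
        ((hf z hz').continuousAt.continuousWithinAt) (hzero z hz')
    have hdiff : ∀ z ∈ ball c r \ (∅ : Set ℂ), DifferentiableAt ℂ (fun z => deriv f z / f z) z := by
      intro z hz
      have hz' : z ∈ ball c R := ball_subset_ball hrR.le hz.1
      exact (((AnalyticOnNhd.deriv hf z hz').div (hf z hz') (hzero z hz')).differentiableAt)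
    rw [Complex.circleIntegral_eq_zero_of_differentiable_on_off_countable hr.le countable_empty
      hcont hdiff]
    simp
  | succ N ih =>
    intro f c r R hr hrR hf S hS hzr mu hm hsum
    have hSne : S.Nonempty := by
      rcases S.eq_empty_or_nonempty with h | h
      · rw [h] at hsum; simp at hsum
      · exact h
    obtain ⟨w, hwS⟩ := hSne
    have hwball : w ∈ ball c R := ((hS w).mp hwS).1
    have hfw : f w = 0 := ((hS w).mp hwS).2
    have hwr : w ∈ ball c r := hzr w hwS
    have hmw1 : 1 ≤ mu w := by
      by_contra hmw
      have hmw0 : mu w = 0 := by omega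
      have h0 : (hf w hwball).order = (0 : ℕ∞) := by rw [hm w hwball hfw, hmw0]; rfl
      exact (order_zero_iff (hf w hwball)).mp h0 hfw
    obtain ⟨h, hh_an, hh_eq, hh_ordw, hh_ord⟩ := peel isOpen_ball hf hwball hmw1
      (hm w hwball hfw)
    have horw := hh_ordw (hh_an w hwball)
    have hfh : ∀ z, z ≠ w → (f z = 0 ↔ h z = 0) := by
      intro z hzw
      rw [hh_eq z]
      simp [sub_ne_zero.mpr hzw]
    have hw0iff : h w = 0 ↔ mu w ≠ 1 := by
      constructor
      · intro h0 h1
        rw [h1] at horw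
        exact (order_zero_iff (hh_an w hwball)).mp (by exact_mod_cast horw) h0
      · intro h1
        by_contra h0
        have h2 := (order_zero_iff (hh_an w hwball)).mpr h0
        rw [horw] at h2
        have : mu w - 1 = 0 := by exact_mod_cast h2
        omega
    set S' : Finset ℂ := if mu w = 1 then S.erase w else S with hS'def
    set mu' : ℂ → ℕ := Function.update mu w (mu w - 1) with hmu'def
    have hsub' : S' ⊆ S := by
      rw [hS'def]; split
      · exact Finset.erase_subset _ _
      · exact Finset.Subset.refl S
    have hS'mem : ∀ z, z ∈ S' ↔ z ∈ ball c R ∧ h z = 0 := by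
      intro z
      by_cases hzw : z = w
      · rw [hzw, hS'def]
        by_cases h1 : mu w = 1
        · rw [if_pos h1]
          constructor
          · intro hz; exact absurd (Finset.mem_erase.mp hz).1 (by simp)
          · intro hz; exact absurd (hw0iff.mp hz.2) (by simp [h1])
        · rw [if_neg h1]
          exact ⟨fun _ => ⟨hwball, hw0iff.mpr h1⟩, fun _ => hwS⟩
      · constructor
        · intro hz
          have hzS := hsub' hz
          exact ⟨((hS z).mp hzS).1, (hfh z hzw).mp ((hS z).mp hzS).2⟩
        · intro hz
          have hzS : z ∈ S := (hS z).mpr ⟨hz.1, (hfh z hzw).mpr hz.2⟩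
          rw [hS'def]; split
          · exact Finset.mem_erase.mpr ⟨hzw, hzS⟩
          · exact hzS
    have hzr' : ∀ z ∈ S', z ∈ ball c r := fun z hz => hzr z (hsub' hz)
    have hm' : ∀ z (hz : z ∈ ball c R), h z = 0 → (hh_an z hz).order = (mu' z : ℕ∞) := by
      intro z hz hz0
      by_cases hzw : z = w
      · subst hzw
        rw [hmu'def, Function.update_self]
        exact hh_ordw _
      · rw [hmu'def, Function.update_of_ne hzw]
        exact hh_ord z hz hzw (hh_an z hz) (hf z hz) (mu z)
          (hm z hz ((hfh z hzw).mpr hz0))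
    have hsum' : ∑ z ∈ S', mu' z = N := by
      have hsame : ∀ z ∈ S.erase w, mu' z = mu z := fun z hz => by
        rw [hmu'def, Function.update_of_ne (Finset.ne_of_mem_erase hz)]
      have hsame' : ∑ z ∈ S.erase w, mu' z = ∑ z ∈ S.erase w, mu z :=
        Finset.sum_congr rfl hsame
      have hadd : mu w + ∑ z ∈ S.erase w, mu z = ∑ z ∈ S, mu z :=
        Finset.add_sum_erase S mu hwS
      have hmu'w : mu' w = mu w - 1 := by rw [hmu'def, Function.update_self]
      by_cases h1 : mu w = 1
      · rw [hS'def, if_pos h1, hsame']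
        omega
      · rw [hS'def, if_neg h1]
        have h5 : mu' w + ∑ z ∈ S.erase w, mu' z = ∑ z ∈ S, mu' z :=
          Finset.add_sum_erase S mu' hwS
        rw [← h5, hsame']
        omega
    have hint := ih h c r R hr hrR hh_an S' hS'mem hzr' mu' hm' hsum'
    -- relate the two integrands on the circle
    have hsphsub : sphere c r ⊆ ball c R := sphere_subset_closedBall.trans
      (closedBall_subset_ball hrR)
    have hne_sphere : ∀ z ∈ sphere c r, f z ≠ 0 := by
      intro z hz hz0
      have hzS : z ∈ S := (hS z).mpr ⟨hsphsub hz, hz0⟩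
      have h2 := hzr z hzS
      rw [mem_ball] at h2
      rw [mem_sphere] at hz
      rw [hz] at h2
      exact lt_irrefl _ h2
    have hEq : EqOn (fun z => deriv f z / f z - (z - w)⁻¹) (fun z => deriv h z / h z)
        (sphere c r) := by
      intro z hz
      have hzR : z ∈ ball c R := hsphsub hz
      have hfz : f z ≠ 0 := hne_sphere z hz
      have hzw : z ≠ w := by
        rintro rfl
        rw [mem_ball] at hwr
        rw [mem_sphere] at hz
        rw [hz] at hwr
        exact lt_irrefl _ hwr
      have hzw' : z - w ≠ 0 := sub_ne_zero.mpr hzw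
      have hhz : h z ≠ 0 := fun h0 => hfz (by rw [hh_eq z, h0, mul_zero])
      have hder : deriv f z = h z + (z - w) * deriv h z := by
        have hfun : f = fun y => (y - w) * h y := funext hh_eq
        rw [hfun]
        have hd : HasDerivAt (fun y => (y - w) * h y) (1 * h z + (z - w) * deriv h z) z :=
          ((hasDerivAt_id z).sub_const w).mul ((hh_an z hzR).differentiableAt.hasDerivAt)
        simpa using hd.deriv
      simp only
      rw [hder, hh_eq z]
      field_simp
      ring
    have hcint_f : CircleIntegrable (fun z => deriv f z / f z) c r := by
      apply ContinuousOn.circleIntegrable hr.le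
      intro z hz
      have hzR : z ∈ ball c R := hsphsub hz
      exact ((AnalyticOnNhd.deriv hf z hzR).continuousAt.continuousWithinAt).div
        ((hf z hzR).continuousAt.continuousWithinAt) (hne_sphere z hz)
    have hcint_inv : CircleIntegrable (fun z => (z - w)⁻¹) c r := by
      apply ContinuousOn.circleIntegrable hr.le
      intro z hz
      have hzw : z - w ≠ 0 := by
        apply sub_ne_zero.mpr
        rintro rfl
        rw [mem_ball] at hwr
        rw [mem_sphere] at hz
        rw [hz] at hwr
        exact lt_irrefl _ hwr
      exact ((continuous_id.sub continuous_const).continuousWithinAt).inv₀ hzw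
    have e1 : (∮ z in C(c, r), (deriv f z / f z - (z - w)⁻¹)) =
        (∮ z in C(c, r), deriv h z / h z) := circleIntegral.integral_congr hr.le hEq
    rw [circleIntegral.integral_sub hcint_f hcint_inv] at e1
    rw [hint, circleIntegral.integral_sub_inv_of_mem_ball hwr] at e1
    have : (∮ z in C(c, r), deriv f z / f z) = 2 * Real.pi * Complex.I * N
        + 2 * Real.pi * Complex.I := by linear_combination e1
    rw [this]
    push_cast
    ring

end Stmt0Aux

open Stmt0Aux

set_option maxHeartbeats 2000000 in
/-- Continuity of roots (with multiplicity) of a parameter-dependent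
quasipolynomial `Δ(λ; p, τ) = λ^n + Σ a_k(p) λ^k + (Σ b_k(p) λ^k) e^{-λτ}`:
if `lam0` is a root of multiplicity `k` of `Δ(·; p0, τ0)`, then for every sufficiently
small `ε > 0` there is `δ > 0` such that for all nearby parameters `(p, τ)`, the zeros
of `Δ(·; p, τ)` in the disc `|λ - lam0| < ε` form a finite set whose multiplicities sum
to `k`. -/
theorem stmt_0
    (n np : ℕ) (hn : 0 < n) (hnp : 0 < np)
    (a b : Fin n → EuclideanSpace ℝ (Fin np) → ℝ)
    (ha : ∀ k, Continuous (a k)) (hb : ∀ k, Continuous (b k))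
    (Δ : EuclideanSpace ℝ (Fin np) → ℝ → ℂ → ℂ)
    (hΔ : ∀ p τ lam, Δ p τ lam =
      lam ^ n + ∑ k : Fin n, (a k p : ℂ) * lam ^ (k : ℕ)
        + (∑ k : Fin n, (b k p : ℂ) * lam ^ (k : ℕ)) * Complex.exp (-lam * τ))
    (lam0 : ℂ) (p0 : EuclideanSpace ℝ (Fin np)) (τ0 : ℝ) (hτ0 : 0 ≤ τ0)
    (k : ℕ) (hk : 1 ≤ k)
    (hroot : ∀ j < k, iteratedDeriv j (Δ p0 τ0) lam0 = 0)
    (hk' : iteratedDeriv k (Δ p0 τ0) lam0 ≠ 0) :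
    ∃ εbar > (0 : ℝ), ∀ ε : ℝ, 0 < ε → ε < εbar → ∃ δ > (0 : ℝ),
      ∀ (p : EuclideanSpace ℝ (Fin np)) (τ : ℝ), 0 ≤ τ →
        ‖p - p0‖ < δ → |τ - τ0| < δ →
        ∃ (S : Finset ℂ) (mult : ℂ → ℕ),
          (↑S = {z : ℂ | ‖z - lam0‖ < ε ∧ Δ p τ z = 0}) ∧
          (∀ z ∈ S, (∀ j < mult z, iteratedDeriv j (Δ p τ) z = 0) ∧
            iteratedDeriv (mult z) (Δ p τ) z ≠ 0) ∧
          (∑ z ∈ S, mult z) = k := by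
  classical
  -- the parametrized function and its λ-derivative
  set F : (EuclideanSpace ℝ (Fin np) × ℝ) → ℂ → ℂ := fun q z =>
    z ^ n + (∑ k : Fin n, (a k q.1 : ℂ) * z ^ (k : ℕ))
      + (∑ k : Fin n, (b k q.1 : ℂ) * z ^ (k : ℕ)) * Complex.exp (-z * q.2) with hFdef
  set FD : (EuclideanSpace ℝ (Fin np) × ℝ) → ℂ → ℂ := fun q z =>
    ((n : ℂ) * z ^ (n - 1) + ∑ k : Fin n, (a k q.1 : ℂ) * ((k : ℕ) * z ^ ((k : ℕ) - 1)))
      + ((∑ k : Fin n, (b k q.1 : ℂ) * ((k : ℕ) * z ^ ((k : ℕ) - 1)))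
          * Complex.exp (-z * q.2)
        + (∑ k : Fin n, (b k q.1 : ℂ) * z ^ (k : ℕ))
          * (Complex.exp (-z * q.2) * (-1 * q.2))) with hFDdef
  have hFΔ : ∀ p τ, Δ p τ = F (p, τ) := fun p τ => funext fun z => by
    rw [hΔ, hFdef]
  simp only [hFΔ] at hroot hk' ⊢
  have hHasD : ∀ q (z : ℂ), HasDerivAt (F q) (FD q z) z := by
    intro q z
    have h1 : HasDerivAt (fun z : ℂ => z ^ n) ((n : ℂ) * z ^ (n - 1)) z := hasDerivAt_pow n z
    have h2 : HasDerivAt (fun z : ℂ => ∑ k : Fin n, (a k q.1 : ℂ) * z ^ (k : ℕ))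
        (∑ k : Fin n, (a k q.1 : ℂ) * ((k : ℕ) * z ^ ((k : ℕ) - 1))) z :=
      HasDerivAt.fun_sum fun k _ => (hasDerivAt_pow (k : ℕ) z).const_mul _
    have h3 : HasDerivAt (fun z : ℂ => ∑ k : Fin n, (b k q.1 : ℂ) * z ^ (k : ℕ))
        (∑ k : Fin n, (b k q.1 : ℂ) * ((k : ℕ) * z ^ ((k : ℕ) - 1))) z :=
      HasDerivAt.fun_sum fun k _ => (hasDerivAt_pow (k : ℕ) z).const_mul _
    have h4 : HasDerivAt (fun z : ℂ => Complex.exp (-z * q.2))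
        (Complex.exp (-z * q.2) * (-1 * q.2)) z := by
      have h5 : HasDerivAt (fun z : ℂ => -z * (q.2 : ℂ)) (-1 * q.2) z :=
        (hasDerivAt_id z).neg.mul_const _
      exact h5.cexp
    exact (h1.add h2).add (h3.mul h4)
  have hderiv : ∀ q (z : ℂ), deriv (F q) z = FD q z := fun q z => (hHasD q z).deriv
  have hFanalAt : ∀ q (z : ℂ), AnalyticAt ℂ (F q) z := by
    intro q z
    have hdiff : Differentiable ℂ (F q) := fun z => (hHasD q z).differentiableAt
    exact (hdiff.differentiableOn.analyticOnNhd isOpen_univ) z (mem_univ z)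
  have hFcontz : ∀ q, Continuous (F q) := fun q =>
    continuous_iff_continuousAt.mpr fun z => (hFanalAt q z).continuousAt
  have hacont : ∀ k : Fin n, Continuous
      (fun x : (EuclideanSpace ℝ (Fin np) × ℝ) × ℂ => ((a k x.1.1 : ℂ))) := fun k =>
    Complex.continuous_ofReal.comp ((ha k).comp (continuous_fst.comp continuous_fst))
  have hbcont : ∀ k : Fin n, Continuous
      (fun x : (EuclideanSpace ℝ (Fin np) × ℝ) × ℂ => ((b k x.1.1 : ℂ))) := fun k =>
    Complex.continuous_ofReal.comp ((hb k).comp (continuous_fst.comp continuous_fst))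
  have hecont : Continuous
      (fun x : (EuclideanSpace ℝ (Fin np) × ℝ) × ℂ => Complex.exp (-x.2 * x.1.2)) :=
    Complex.continuous_exp.comp (continuous_snd.neg.mul
      (Complex.continuous_ofReal.comp (continuous_snd.comp continuous_fst)))
  have hFcont : Continuous (fun x : (EuclideanSpace ℝ (Fin np) × ℝ) × ℂ => F x.1 x.2) := by
    simp only [hFdef]
    exact ((continuous_snd.pow n).add
        (continuous_finset_sum _ fun k _ => (hacont k).mul (continuous_snd.pow _))).add
      ((continuous_finset_sum _ fun k _ => (hbcont k).mul (continuous_snd.pow _)).mul hecont)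
  have hFDcont : Continuous (fun x : (EuclideanSpace ℝ (Fin np) × ℝ) × ℂ => FD x.1 x.2) := by
    simp only [hFDdef]
    refine Continuous.add (Continuous.add ?_ ?_) (Continuous.add ?_ ?_)
    · exact continuous_const.mul (continuous_snd.pow _)
    · exact continuous_finset_sum _ fun k _ =>
        (hacont k).mul (continuous_const.mul (continuous_snd.pow _))
    · exact (continuous_finset_sum _ fun k _ =>
        (hbcont k).mul (continuous_const.mul (continuous_snd.pow _))).mul hecont
    · exact (continuous_finset_sum _ fun k _ => (hbcont k).mul (continuous_snd.pow _)).mul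
        (hecont.mul (continuous_const.mul
          (Complex.continuous_ofReal.comp (continuous_snd.comp continuous_fst))))
  have hFDcontz : ∀ q, Continuous (FD q) := fun q =>
    hFDcont.comp (continuous_const.prodMk continuous_id)
  have hFne : ∀ q : EuclideanSpace ℝ (Fin np) × ℝ, 0 ≤ q.2 → ∃ z, F q z ≠ 0 := by
    intro q hq
    set C : ℝ := ∑ k : Fin n, (|a k q.1| + |b k q.1|) with hC
    have hC0 : 0 ≤ C := Finset.sum_nonneg fun k _ => by positivity
    set x : ℝ := max 1 (C + 1) with hx
    have hx1 : (1 : ℝ) ≤ x := le_max_left _ _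
    have hx0 : (0 : ℝ) ≤ x := by linarith
    have hxC : C + 1 ≤ x := le_max_right _ _
    refine ⟨(x : ℂ), fun h0 => ?_⟩
    have habs_exp : ‖Complex.exp (-(x : ℂ) * q.2)‖ ≤ 1 := by
      rw [show (-(x : ℂ) * q.2) = ((-(x * q.2) : ℝ) : ℂ) by push_cast; ring, Complex.norm_exp]
      rw [Complex.ofReal_re]
      exact Real.exp_le_one_iff.mpr (by nlinarith)
    have hxpow : ∀ k : Fin n, |x| ^ (k : ℕ) ≤ x ^ (n - 1) := by
      intro k
      rw [abs_of_nonneg hx0]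
      exact pow_le_pow_right₀ hx1 (by omega)
    have hterm1 : ∀ k : Fin n, ‖(a k q.1 : ℂ) * (x : ℂ) ^ (k : ℕ)‖
        ≤ |a k q.1| * x ^ (n - 1) := by
      intro k
      simp only [norm_mul, norm_pow, Complex.norm_real, Real.norm_eq_abs]
      exact mul_le_mul_of_nonneg_left (hxpow k) (abs_nonneg _)
    have hterm2 : ∀ k : Fin n, ‖(b k q.1 : ℂ) * (x : ℂ) ^ (k : ℕ)‖
        ≤ |b k q.1| * x ^ (n - 1) := by
      intro k
      simp only [norm_mul, norm_pow, Complex.norm_real, Real.norm_eq_abs]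
      exact mul_le_mul_of_nonneg_left (hxpow k) (abs_nonneg _)
    have hsum1 : ‖∑ k : Fin n, (a k q.1 : ℂ) * (x : ℂ) ^ (k : ℕ)‖
        ≤ (∑ k : Fin n, |a k q.1|) * x ^ (n - 1) := by
      calc ‖∑ k : Fin n, (a k q.1 : ℂ) * (x : ℂ) ^ (k : ℕ)‖
          ≤ ∑ k : Fin n, ‖(a k q.1 : ℂ) * (x : ℂ) ^ (k : ℕ)‖ :=
            norm_sum_le _ _
        _ ≤ ∑ k : Fin n, |a k q.1| * x ^ (n - 1) := Finset.sum_le_sum fun k _ => hterm1 k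
        _ = (∑ k : Fin n, |a k q.1|) * x ^ (n - 1) := by rw [Finset.sum_mul]
    have hsum2 : ‖∑ k : Fin n, (b k q.1 : ℂ) * (x : ℂ) ^ (k : ℕ)‖
        ≤ (∑ k : Fin n, |b k q.1|) * x ^ (n - 1) := by
      calc ‖∑ k : Fin n, (b k q.1 : ℂ) * (x : ℂ) ^ (k : ℕ)‖
          ≤ ∑ k : Fin n, ‖(b k q.1 : ℂ) * (x : ℂ) ^ (k : ℕ)‖ :=
            norm_sum_le _ _
        _ ≤ ∑ k : Fin n, |b k q.1| * x ^ (n - 1) := Finset.sum_le_sum fun k _ => hterm2 k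
        _ = (∑ k : Fin n, |b k q.1|) * x ^ (n - 1) := by rw [Finset.sum_mul]
    have hxn : ((x : ℂ)) ^ n = -((∑ k : Fin n, (a k q.1 : ℂ) * (x : ℂ) ^ (k : ℕ))
        + (∑ k : Fin n, (b k q.1 : ℂ) * (x : ℂ) ^ (k : ℕ)) * Complex.exp (-(x : ℂ) * q.2)) := by
      rw [hFdef] at h0
      linear_combination h0
    have habsxn : x ^ n ≤ C * x ^ (n - 1) := by
      have h1 : ‖(x : ℂ) ^ n‖ = x ^ n := by
        rw [norm_pow, Complex.norm_real, Real.norm_eq_abs, abs_of_nonneg hx0]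
      rw [← h1, hxn, norm_neg]
      calc ‖_‖ ≤ _ + ‖(∑ k : Fin n, (b k q.1 : ℂ) * (x : ℂ) ^ (k : ℕ))
            * Complex.exp (-(x : ℂ) * q.2)‖ := norm_add_le _ _
        _ ≤ (∑ k : Fin n, |a k q.1|) * x ^ (n - 1)
            + (∑ k : Fin n, |b k q.1|) * x ^ (n - 1) * 1 := by
          rw [norm_mul]
          exact add_le_add hsum1 (mul_le_mul hsum2 habs_exp (norm_nonneg _)
            (by positivity))
        _ = C * x ^ (n - 1) := by rw [hC, Finset.sum_add_distrib]; ring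
    have hxpow1 : (1 : ℝ) ≤ x ^ (n - 1) := one_le_pow₀ hx1
    have hxgrow : x ^ n = x * x ^ (n - 1) := by
      conv_lhs => rw [show n = 1 + (n - 1) by omega]
      rw [pow_add, pow_one]
    nlinarith [pow_nonneg hx0 (n - 1)]
  -- setup at the nominal parameter
  set q0 : EuclideanSpace ℝ (Fin np) × ℝ := (p0, τ0) with hq0def
  have horder0 : (hFanalAt q0 lam0).order = (k : ℕ∞) :=
    (order_eq_iff_iteratedDeriv (hFanalAt q0 lam0) k).mpr ⟨hroot, hk'⟩
  have hnotloc0 := not_eventually_zero (hFanalAt q0) (hFne q0 hτ0)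
  have hevne : ∀ᶠ z in 𝓝[≠] lam0, F q0 z ≠ 0 := by
    rcases (hFanalAt q0 lam0).eventually_eq_zero_or_eventually_ne_zero with h | h
    · exact absurd h (hnotloc0 lam0)
    · exact h
  rw [eventually_nhdsWithin_iff, Metric.eventually_nhds_iff] at hevne
  obtain ⟨ε0, hε0, hball0⟩ := hevne
  set εbar := ε0 / 2 with hεbardef
  have hεbar0 : 0 < εbar := by positivity
  have honly0 : ∀ z ∈ closedBall lam0 εbar, F q0 z = 0 → z = lam0 := by
    intro z hz h0
    by_contra hne
    exact hball0 (lt_of_le_of_lt (mem_closedBall.mp hz) (by rw [hεbardef]; linarith)) hne h0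
  refine ⟨εbar, hεbar0, ?_⟩
  intro ε hε hεlt
  -- minimum of ‖F q0‖ on the sphere
  have hsphne : (sphere lam0 ε).Nonempty := NormedSpace.sphere_nonempty.mpr hε.le
  have hsphcpt : IsCompact (sphere lam0 ε) := isCompact_sphere _ _
  obtain ⟨zm, hzm, hzmin⟩ := hsphcpt.exists_isMinOn hsphne ((hFcontz q0).norm.continuousOn)
  set m := ‖F q0 zm‖ with hmdef
  have hminle : ∀ z ∈ sphere lam0 ε, m ≤ ‖F q0 z‖ := fun z hz => hzmin hz
  have hsphsubcb : sphere lam0 ε ⊆ closedBall lam0 εbar := fun z hz => by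
    rw [mem_sphere] at hz; rw [mem_closedBall, hz]; linarith
  have hm0 : 0 < m := by
    rcases (norm_nonneg (F q0 zm)).lt_or_eq with h | h
    · exact h
    · exfalso
      have h0 : F q0 zm = 0 := norm_eq_zero.mp h.symm
      have h1 := honly0 zm (hsphsubcb hzm) h0
      rw [h1, mem_sphere, dist_self] at hzm
      exact hε.ne hzm
  have hf0ne_sph : ∀ z ∈ sphere lam0 ε, F q0 z ≠ 0 := fun z hz h0 => by
    have := hminle z hz; rw [h0, norm_zero] at this; linarith
  -- uniform bounds on the sphere
  obtain ⟨M1, hM1⟩ := hsphcpt.exists_bound_of_continuousOn ((hFcontz q0).continuousOn)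
  obtain ⟨M2, hM2⟩ := hsphcpt.exists_bound_of_continuousOn ((hFDcontz q0).continuousOn)
  set B := max M1 M2 + 1 with hBdef
  have hM1nonneg : 0 ≤ M1 := le_trans (norm_nonneg _) (hM1 zm hzm)
  have hB0 : 0 < B := by
    have h2 : M1 ≤ max M1 M2 := le_max_left _ _
    rw [hBdef]; linarith
  have hBF : ∀ z ∈ sphere lam0 ε, ‖F q0 z‖ ≤ B := fun z hz => by
    have h2 := hM1 z hz
    have h3 : M1 ≤ max M1 M2 := le_max_left _ _
    rw [hBdef]; linarith
  have hBFD : ∀ z ∈ sphere lam0 ε, ‖FD q0 z‖ ≤ B := fun z hz => by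
    have h2 := hM2 z hz
    have h3 : M2 ≤ max M1 M2 := le_max_right _ _
    rw [hBdef]; linarith
  -- choice of η and δ
  set η := min (m / 2) (m ^ 2 / (4 * B * (ε + 1))) with hηdef
  have hη0 : 0 < η := lt_min (by positivity) (by positivity)
  have hηm2 : η ≤ m / 2 := min_le_left _ _
  have hη2 : 4 * B * (ε + 1) * η ≤ m ^ 2 := by
    have h2 : η ≤ m ^ 2 / (4 * B * (ε + 1)) := min_le_right _ _
    rw [le_div_iff₀ (by positivity)] at h2
    linarith
  set K : Set ((EuclideanSpace ℝ (Fin np) × ℝ) × ℂ) :=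
    closedBall q0 1 ×ˢ sphere lam0 ε with hKdef
  have hKcpt : IsCompact K := (isCompact_closedBall q0 1).prod hsphcpt
  have hucF := hKcpt.uniformContinuousOn_of_continuous hFcont.continuousOn
  have hucFD := hKcpt.uniformContinuousOn_of_continuous hFDcont.continuousOn
  rw [Metric.uniformContinuousOn_iff] at hucF hucFD
  obtain ⟨δ1, hδ1, hδ1'⟩ := hucF η hη0
  obtain ⟨δ2, hδ2, hδ2'⟩ := hucFD η hη0
  refine ⟨min (min δ1 δ2) 1, by positivity, ?_⟩
  intro p τ hτ hpnear hτnear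
  set q : EuclideanSpace ℝ (Fin np) × ℝ := (p, τ) with hqdef
  have hdq : dist q q0 < min (min δ1 δ2) 1 := by
    rw [Prod.dist_eq]
    apply max_lt
    · exact lt_of_lt_of_le (by rw [dist_eq_norm]; exact hpnear) (le_refl _)
    · exact lt_of_lt_of_le (by rw [Real.dist_eq]; exact hτnear) (le_refl _)
  have hclose : ∀ z ∈ sphere lam0 ε, ‖F q z - F q0 z‖ < η ∧ ‖FD q z - FD q0 z‖ < η := by
    intro z hz
    have hq1 : ((q, z) : (EuclideanSpace ℝ (Fin np) × ℝ) × ℂ) ∈ K :=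
      ⟨mem_closedBall.mpr (le_trans hdq.le (min_le_right _ _)), hz⟩
    have hq2 : ((q0, z) : (EuclideanSpace ℝ (Fin np) × ℝ) × ℂ) ∈ K :=
      ⟨mem_closedBall_self zero_le_one, hz⟩
    have hd12 : dist ((q, z) : (EuclideanSpace ℝ (Fin np) × ℝ) × ℂ) (q0, z) = dist q q0 := by
      rw [Prod.dist_eq, dist_self]; exact max_eq_left dist_nonneg
    constructor
    · have h2 := hδ1' (q, z) hq1 (q0, z) hq2
        (by rw [hd12]; exact lt_of_lt_of_le hdq (le_trans (min_le_left _ _) (min_le_left _ _)))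
      rwa [dist_eq_norm] at h2
    · have h2 := hδ2' (q, z) hq1 (q0, z) hq2
        (by rw [hd12]; exact lt_of_lt_of_le hdq (le_trans (min_le_left _ _) (min_le_right _ _)))
      rwa [dist_eq_norm] at h2
  have hlow : ∀ z ∈ sphere lam0 ε, m / 2 ≤ ‖F q z‖ := by
    intro z hz
    have h1 := (hclose z hz).1
    have h2 : m ≤ ‖F q0 z‖ := hminle z hz
    have h3 : ‖F q0 z‖ - ‖F q z‖ ≤ ‖F q z - F q0 z‖ := by
      rw [norm_sub_rev]; exact norm_sub_norm_le _ _
    linarith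
  have hfne_sph : ∀ z ∈ sphere lam0 ε, F q z ≠ 0 := fun z hz h0 => by
    have h2 := hlow z hz; rw [h0, norm_zero] at h2; linarith
  -- the finite zero set of F q near lam0
  have hZfin : {z ∈ closedBall lam0 εbar | F q z = 0}.Finite :=
    zeros_finite (hFanalAt q) (hFne q hτ) (isCompact_closedBall _ _)
  set Zf := hZfin.toFinset with hZfdef
  have hZfmem : ∀ z, z ∈ Zf ↔ z ∈ closedBall lam0 εbar ∧ F q z = 0 := fun z => by
    rw [hZfdef, Set.Finite.mem_toFinset]; exact Iff.rfl
  set D : Finset ℝ := insert εbar ((Zf.filter (fun z => ε < dist z lam0)).image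
    (fun z => dist z lam0)) with hDdef
  have hDne : D.Nonempty := ⟨εbar, Finset.mem_insert_self _ _⟩
  set ρ := D.min' hDne with hρdef
  have hρgt : ε < ρ := by
    rw [hρdef, Finset.lt_min'_iff]
    intro y hy
    rcases Finset.mem_insert.mp hy with h2 | h2
    · rw [h2]; exact hεlt
    · obtain ⟨z, hz, rfl⟩ := Finset.mem_image.mp h2
      exact (Finset.mem_filter.mp hz).2
  have hρle : ρ ≤ εbar := Finset.min'_le _ _ (Finset.mem_insert_self _ _)
  set R := (ε + ρ) / 2 with hRdef
  have hεR : ε < R := by rw [hRdef]; linarith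
  have hRρ : R < ρ := by rw [hRdef]; linarith
  have hRεbar : R ≤ εbar := le_trans hRρ.le hρle
  have hzin : ∀ z ∈ ball lam0 R, F q z = 0 → z ∈ ball lam0 ε := by
    intro z hz h0
    rw [mem_ball] at hz ⊢
    by_contra hge
    push_neg at hge
    rcases eq_or_lt_of_le hge with heq | hlt
    · exact hfne_sph z (by rw [mem_sphere]; exact heq.symm) h0
    · have hzZ : z ∈ Zf := (hZfmem z).mpr
        ⟨mem_closedBall.mpr (le_trans hz.le hRεbar), h0⟩
      have hmem : dist z lam0 ∈ D := Finset.mem_insert_of_mem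
        (Finset.mem_image.mpr ⟨z, Finset.mem_filter.mpr ⟨hzZ, hlt⟩, rfl⟩)
      have h2 := Finset.min'_le _ _ hmem
      rw [← hρdef] at h2
      linarith
  set Sq : Finset ℂ := Zf.filter (fun z => dist z lam0 < R) with hSqdef
  have hSqmem : ∀ z, z ∈ Sq ↔ z ∈ ball lam0 R ∧ F q z = 0 := by
    intro z
    rw [hSqdef, Finset.mem_filter, hZfmem z, mem_ball, mem_closedBall]
    constructor
    · rintro ⟨⟨h1, h2⟩, h3⟩; exact ⟨h3, h2⟩
    · rintro ⟨h1, h2⟩; exact ⟨⟨le_trans h1.le hRεbar, h2⟩, h1⟩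
  have hSqr : ∀ z ∈ Sq, z ∈ ball lam0 ε := fun z hz =>
    hzin z ((hSqmem z).mp hz).1 ((hSqmem z).mp hz).2
  set muq : ℂ → ℕ := fun z => ((hFanalAt q z).order).toNat with hmuqdef
  have hordne : ∀ z : ℂ, (hFanalAt q z).order ≠ ⊤ := by
    intro z htop
    exact not_eventually_zero (hFanalAt q) (hFne q hτ) z
      ((hFanalAt q z).order_eq_top_iff.mp htop)
  have hmuq : ∀ (z : ℂ) (hz : z ∈ ball lam0 R), F q z = 0 →
      (hFanalAt q z).order = (muq z : ℕ∞) := by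
    intro z hz h0
    rw [hmuqdef]
    exact (ENat.coe_toNat (hordne z)).symm
  set Nq := ∑ z ∈ Sq, muq z with hNqdef
  have hIq := argP Nq (F q) lam0 ε R hε hεR (fun z _ => hFanalAt q z) Sq hSqmem
    hSqr muq hmuq rfl
  -- the count at the nominal parameter
  set R0 := (ε + εbar) / 2 with hR0def
  have hεR0 : ε < R0 := by rw [hR0def]; linarith
  have hR0εbar : R0 < εbar := by rw [hR0def]; linarith
  have hf0lam0 : F q0 lam0 = 0 := by
    have h2 := hroot 0 (by omega)
    rwa [iteratedDeriv_zero] at h2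
  have hS0mem : ∀ z, z ∈ ({lam0} : Finset ℂ) ↔ z ∈ ball lam0 R0 ∧ F q0 z = 0 := by
    intro z
    rw [Finset.mem_singleton]
    constructor
    · rintro rfl; exact ⟨mem_ball_self (by linarith), hf0lam0⟩
    · rintro ⟨h1, h2⟩
      exact honly0 z (mem_closedBall.mpr (le_trans (mem_ball.mp h1).le hR0εbar.le)) h2
  have hmu0 : ∀ (z : ℂ) (hz : z ∈ ball lam0 R0), F q0 z = 0 →
      (hFanalAt q0 z).order = (((fun _ => k) : ℂ → ℕ) z : ℕ∞) := by
    intro z hz h0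
    have hzl : z = lam0 :=
      honly0 z (mem_closedBall.mpr (le_trans (mem_ball.mp hz).le hR0εbar.le)) h0
    rw [hzl]
    exact horder0
  have hI0 := argP k (F q0) lam0 ε R0 hε hεR0 (fun z _ => hFanalAt q0 z) {lam0} hS0mem
    (fun z hz => by rw [Finset.mem_singleton] at hz; rw [hz]; exact mem_ball_self hε)
    (fun _ => k) hmu0 (by simp)
  -- compare the two integrals
  have hdeqq : (fun z => deriv (F q) z / F q z) = fun z => FD q z / F q z :=
    funext fun z => by rw [hderiv]
  have hdeq0 : (fun z => deriv (F q0) z / F q0 z) = fun z => FD q0 z / F q0 z :=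
    funext fun z => by rw [hderiv]
  have hintq : CircleIntegrable (fun z => deriv (F q) z / F q z) lam0 ε := by
    rw [hdeqq]
    exact (ContinuousOn.div (hFDcontz q).continuousOn (hFcontz q).continuousOn
      hfne_sph).circleIntegrable hε.le
  have hint0 : CircleIntegrable (fun z => deriv (F q0) z / F q0 z) lam0 ε := by
    rw [hdeq0]
    exact (ContinuousOn.div (hFDcontz q0).continuousOn (hFcontz q0).continuousOn
      hf0ne_sph).circleIntegrable hε.le
  have hsub_int := circleIntegral.integral_sub hintq hint0
  have hptw : ∀ z ∈ sphere lam0 ε,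
      ‖deriv (F q) z / F q z - deriv (F q0) z / F q0 z‖ ≤ 1 / (ε + 1) := by
    intro z hz
    rw [hderiv, hderiv]
    have hu : m / 2 ≤ ‖F q z‖ := hlow z hz
    have hu0 : m ≤ ‖F q0 z‖ := hminle z hz
    have hvv0 : ‖FD q z - FD q0 z‖ < η := (hclose z hz).2
    have huu0 : ‖F q z - F q0 z‖ < η := (hclose z hz).1
    have hv0B : ‖FD q0 z‖ ≤ B := hBFD z hz
    have hu0B : ‖F q0 z‖ ≤ B := hBF z hz
    have hune : F q z ≠ 0 := hfne_sph z hz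
    have hu0ne : F q0 z ≠ 0 := hf0ne_sph z hz
    rw [div_sub_div _ _ hune hu0ne, norm_div]
    have hnum : ‖FD q z * F q0 z - F q z * FD q0 z‖ ≤ 2 * η * B := by
      have h2 : FD q z * F q0 z - F q z * FD q0 z
          = (FD q z - FD q0 z) * F q0 z + FD q0 z * (F q0 z - F q z) := by ring
      rw [h2]
      calc ‖(FD q z - FD q0 z) * F q0 z + FD q0 z * (F q0 z - F q z)‖
          ≤ ‖(FD q z - FD q0 z) * F q0 z‖ + ‖FD q0 z * (F q0 z - F q z)‖ := norm_add_le _ _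
        _ = ‖FD q z - FD q0 z‖ * ‖F q0 z‖ + ‖FD q0 z‖ * ‖F q0 z - F q z‖ := by
            rw [norm_mul, norm_mul]
        _ ≤ η * B + B * η := by
            have h3 : ‖F q0 z - F q z‖ < η := by rwa [norm_sub_rev]
            have h4 : (0:ℝ) ≤ ‖FD q z - FD q0 z‖ := norm_nonneg _
            have h5 : (0:ℝ) ≤ ‖F q0 z - F q z‖ := norm_nonneg _
            have h6 : (0:ℝ) ≤ ‖FD q0 z‖ := norm_nonneg _
            have h7 : (0:ℝ) ≤ ‖F q0 z‖ := norm_nonneg _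
            nlinarith
        _ = 2 * η * B := by ring
    have hden : m ^ 2 / 2 ≤ ‖F q z * F q0 z‖ := by
      rw [norm_mul]
      have h2 : (0:ℝ) ≤ m / 2 := by linarith
      calc m ^ 2 / 2 = (m / 2) * m := by ring
        _ ≤ ‖F q z‖ * ‖F q0 z‖ := mul_le_mul hu hu0 hm0.le (norm_nonneg _)
    calc ‖FD q z * F q0 z - F q z * FD q0 z‖ / ‖F q z * F q0 z‖
        ≤ (2 * η * B) / (m ^ 2 / 2) := by
          apply div_le_div₀ (by positivity) hnum (by positivity) hden
      _ ≤ 1 / (ε + 1) := by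
          rw [div_le_div_iff₀ (by positivity) (by positivity)]
          nlinarith
  have hIdiff : ‖(∮ z in C(lam0, ε), deriv (F q) z / F q z)
      - (∮ z in C(lam0, ε), deriv (F q0) z / F q0 z)‖
      ≤ 2 * Real.pi * ε * (1 / (ε + 1)) := by
    rw [← hsub_int]
    exact circleIntegral.norm_integral_le_of_norm_le_const hε.le hptw
  have hNqk : Nq = k := by
    by_contra hnek
    rw [hIq, hI0] at hIdiff
    have h2 : 2 * (Real.pi : ℂ) * Complex.I * Nq - 2 * Real.pi * Complex.I * k
        = 2 * Real.pi * Complex.I * (((Nq : ℤ) - (k : ℤ) : ℤ) : ℂ) := by push_cast; ring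
    rw [h2] at hIdiff
    have h3 : ‖(2 : ℂ) * Real.pi * Complex.I * (((Nq : ℤ) - (k : ℤ) : ℤ) : ℂ)‖
        = 2 * Real.pi * |(((Nq : ℤ) - (k : ℤ) : ℤ) : ℝ)| := by
      rw [norm_mul, norm_mul, norm_mul, Complex.norm_I]
      have e1 : ‖(2 : ℂ)‖ = 2 := by norm_num
      have e2 : ‖((Real.pi : ℝ) : ℂ)‖ = Real.pi := by
        rw [Complex.norm_real, Real.norm_eq_abs, abs_of_nonneg Real.pi_nonneg]
      have e3 : ‖(((Nq : ℤ) - (k : ℤ) : ℤ) : ℂ)‖ = |(((Nq : ℤ) - (k : ℤ) : ℤ) : ℝ)| := by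
        rw [← Complex.ofReal_intCast, Complex.norm_real, Real.norm_eq_abs]
      rw [e1, e2, e3]; ring
    rw [h3] at hIdiff
    have h4 : (1 : ℝ) ≤ |(((Nq : ℤ) - (k : ℤ) : ℤ) : ℝ)| := by
      have h5 : (1 : ℤ) ≤ |(Nq : ℤ) - (k : ℤ)| := Int.one_le_abs (by
        intro h6
        apply hnek
        have h7 := sub_eq_zero.mp h6
        exact_mod_cast h7)
      calc (1 : ℝ) = ((1 : ℤ) : ℝ) := by norm_num
        _ ≤ ((|(Nq : ℤ) - (k : ℤ)| : ℤ) : ℝ) := by exact_mod_cast h5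
        _ = |(((Nq : ℤ) - (k : ℤ) : ℤ) : ℝ)| := by rw [Int.cast_abs]
    have h7 : ε / (ε + 1) < 1 := by rw [div_lt_one (by linarith)]; linarith
    have h8 : 2 * Real.pi ≤ 2 * Real.pi * |(((Nq : ℤ) - (k : ℤ) : ℤ) : ℝ)| := by
      nlinarith [Real.pi_pos]
    have h9 : 2 * Real.pi * ε * (1 / (ε + 1)) < 2 * Real.pi := by
      rw [mul_one_div, div_lt_iff₀ (by linarith : (0:ℝ) < ε + 1)]
      nlinarith [Real.pi_pos]
    linarith [hIdiff, h8, h9]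
  -- final assembly
  refine ⟨Sq, muq, ?_, ?_, by rw [← hNqdef]; exact hNqk⟩
  · ext z
    simp only [Finset.coe_filter, mem_setOf_eq, Finset.mem_coe]
    rw [show (z ∈ Sq ↔ z ∈ ball lam0 R ∧ F q z = 0) from hSqmem z]
    constructor
    · rintro ⟨h1, h2⟩
      refine ⟨?_, h2⟩
      have h3 := hzin z h1 h2
      rw [mem_ball, Complex.dist_eq] at h3
      exact h3
    · rintro ⟨h1, h2⟩
      refine ⟨?_, h2⟩
      rw [mem_ball, Complex.dist_eq]
      linarith
  · intro z hz
    have h2 := hmuq z ((hSqmem z).mp hz).1 ((hSqmem z).mp hz).2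
    exact (order_eq_iff_iteratedDeriv (hFanalAt q z) (muq z)).mp h2
end

section
/- Let N ≥ 0 be an integer, let P_0, ..., P_N be nonzero real polynomials, and let 0 = τ_0 < τ_1 < ... < τ_N be real numbers. Define the quasipolynomial Δ(λ) = Σ_{k=0}^{N} P_k(λ) e^{-λ τ_k}. Then Δ is not identically zero, and every root λ0 ∈ ℂ of Δ has multiplicity at most 𝒟 = N + Σ_{k=0}^{N} deg P_k (the Pólya–Szegő bound). -/
open Polynomial

namespace PSaux

/-- Exponential polynomial attached to a list of (polynomial, exponent) pairs. -/
noncomputable def E (l : List (ℂ[X] × ℂ)) : ℂ → ℂ :=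
  fun z => (l.map (fun p => p.1.eval z * Complex.exp (p.2 * z))).sum

/-- entrywise operator corresponding to f ↦ f' - μ f -/
noncomputable def dop (μ : ℂ) (p : ℂ[X] × ℂ) : ℂ[X] × ℂ :=
  (derivative p.1 + C (p.2 - μ) * p.1, p.2)

noncomputable def astep (μ : ℂ) (l : List (ℂ[X] × ℂ)) : List (ℂ[X] × ℂ) :=
  l.map (dop μ)

lemma astep_iterate (μ : ℂ) (j : ℕ) (l : List (ℂ[X] × ℂ)) :
    (astep μ)^[j] l = l.map ((dop μ)^[j]) := by
  induction j generalizing l with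
  | zero => simp
  | succ n ih =>
    rw [Function.iterate_succ_apply, ih]
    simp [astep, List.map_map, ← Function.iterate_succ_apply]

lemma E_nil (z : ℂ) : E [] z = 0 := rfl

lemma E_cons (p : ℂ[X] × ℂ) (l : List (ℂ[X] × ℂ)) (z : ℂ) :
    E (p :: l) z = p.1.eval z * Complex.exp (p.2 * z) + E l z := by
  simp [E]

lemma hasDerivAt_E (l : List (ℂ[X] × ℂ)) (z : ℂ) :
    HasDerivAt (E l) (E (astep 0 l) z) z := by
  induction l with
  | nil => exact hasDerivAt_const z (0:ℂ)
  | cons p t ih =>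
    have h1 : HasDerivAt (fun w => p.1.eval w * Complex.exp (p.2 * w))
        ((derivative p.1 + C (p.2 - 0) * p.1).eval z * Complex.exp (p.2 * z)) z := by
      have hp : HasDerivAt (fun w : ℂ => p.1.eval w) (p.1.derivative.eval z) z :=
        p.1.hasDerivAt z
      have he : HasDerivAt (fun w : ℂ => Complex.exp (p.2 * w))
          (Complex.exp (p.2 * z) * p.2) z := by
        have := ((hasDerivAt_id z).const_mul p.2).cexp
        simpa using this
      have := hp.mul he
      simp only [eval_add, eval_mul, eval_C, sub_zero]
      exact this.congr_deriv (by ring)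
    have := h1.add ih
    have heq : (fun w => E (p :: t) w) = fun w =>
        p.1.eval w * Complex.exp (p.2 * w) + E t w := by
      funext w; exact E_cons p t w
    rw [show E (p :: t) = fun w => p.1.eval w * Complex.exp (p.2 * w) + E t w from heq]
    exact this.congr_deriv (by rw [show astep 0 (p :: t) = dop 0 p :: astep 0 t from rfl, E_cons]; rfl)

lemma deriv_E (l : List (ℂ[X] × ℂ)) : deriv (E l) = E (astep 0 l) := by
  funext z; exact (hasDerivAt_E l z).deriv

lemma iteratedDeriv_E (j : ℕ) (l : List (ℂ[X] × ℂ)) :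
    iteratedDeriv j (E l) = E ((astep 0)^[j] l) := by
  induction j with
  | zero => simp
  | succ n ih => rw [iteratedDeriv_succ, ih, deriv_E, Function.iterate_succ_apply']

lemma E_astep (μ : ℂ) (l : List (ℂ[X] × ℂ)) (z : ℂ) :
    E (astep μ l) z = E (astep 0 l) z - μ * E l z := by
  induction l with
  | nil => simp [E, astep]
  | cons p t ih =>
    rw [show astep μ (p :: t) = dop μ p :: astep μ t from rfl,
        show astep 0 (p :: t) = dop 0 p :: astep 0 t from rfl,
        E_cons, E_cons, E_cons, ih]
    simp only [dop, eval_add, eval_mul, eval_C]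
    ring

lemma astep_comm (μ : ℂ) (l : List (ℂ[X] × ℂ)) :
    astep 0 (astep μ l) = astep μ (astep 0 l) := by
  simp only [astep, List.map_map]
  refine congrArg (fun f => List.map f l) ?_
  funext p
  simp only [Function.comp, dop, derivative_add, derivative_mul, derivative_C]
  ext : 1
  · simp; ring
  · rfl

lemma astep_comm_iter (μ : ℂ) (i : ℕ) (l : List (ℂ[X] × ℂ)) :
    (astep 0)^[i] (astep μ l) = astep μ ((astep 0)^[i] l) := by
  induction i generalizing l with
  | zero => simp
  | succ n ih =>
    rw [Function.iterate_succ_apply, astep_comm, ih, ← Function.iterate_succ_apply]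

/-- vanishing transfer -/
lemma vanish (μ : ℂ) (z : ℂ) : ∀ (j : ℕ) (l : List (ℂ[X] × ℂ)),
    (∀ i ≤ j, E ((astep 0)^[i] l) z = 0) → E ((astep μ)^[j] l) z = 0 := by
  intro j
  induction j with
  | zero => intro l h; have h0 := h 0 (le_refl 0); rw [Function.iterate_zero_apply] at h0 ⊢; exact h0
  | succ n ih =>
    intro l h
    rw [Function.iterate_succ_apply]
    apply ih
    intro i hi
    rw [astep_comm_iter, E_astep,
      ← Function.iterate_succ_apply' (astep 0) i l,
      h (i+1) (by omega), h i (by omega)]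
    ring

end PSaux

namespace PSaux
open Polynomial

lemma step_ne {c : ℂ} (hc : c ≠ 0) {Q : ℂ[X]} (hQ : Q ≠ 0) :
    derivative Q + C c * Q ≠ 0 ∧ (derivative Q + C c * Q).natDegree = Q.natDegree := by
  set d := Q.natDegree with hd
  have hcoeff : (derivative Q + C c * Q).coeff d = c * Q.coeff d := by
    rw [coeff_add, coeff_derivative, coeff_C_mul,
      Polynomial.coeff_eq_zero_of_natDegree_lt (lt_add_one d)]
    ring
  have hQd : Q.coeff d ≠ 0 := by
    rw [hd, ← Polynomial.leadingCoeff]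
    exact leadingCoeff_ne_zero.mpr hQ
  have hne : (derivative Q + C c * Q).coeff d ≠ 0 := by
    rw [hcoeff]; exact mul_ne_zero hc hQd
  refine ⟨fun h => hne (by simp [h]), le_antisymm ?_ (le_natDegree_of_ne_zero hne)⟩
  refine (natDegree_add_le _ _).trans ?_
  exact max_le ((natDegree_derivative_le Q).trans (Nat.sub_le _ _)) (natDegree_C_mul_le _ _)

lemma dop_snd (μ : ℂ) (j : ℕ) (p : ℂ[X] × ℂ) : ((dop μ)^[j] p).2 = p.2 := by
  induction j with
  | zero => rfl
  | succ n ih => rw [Function.iterate_succ_apply']; simpa [dop] using ih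

lemma dop_iter_fst (μ : ℂ) (j : ℕ) (p : ℂ[X] × ℂ) (hν : p.2 ≠ μ) (hQ : p.1 ≠ 0) :
    ((dop μ)^[j] p).1 ≠ 0 ∧ ((dop μ)^[j] p).1.natDegree = p.1.natDegree := by
  induction j with
  | zero => exact ⟨hQ, rfl⟩
  | succ n ih =>
    obtain ⟨h1, hdeg⟩ := ih
    have h2 := dop_snd μ n p
    have hc : ((dop μ)^[n] p).2 - μ ≠ 0 := by rw [h2]; exact sub_ne_zero.mpr hν
    have hs := step_ne hc h1
    rw [Function.iterate_succ_apply']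
    exact ⟨hs.1, by rw [show (dop μ ((dop μ)^[n] p)).1
      = derivative ((dop μ)^[n] p).1 + C (((dop μ)^[n] p).2 - μ) * ((dop μ)^[n] p).1
      from rfl, hs.2, hdeg]⟩

lemma dop_iter_head (μ : ℂ) (j : ℕ) (P : ℂ[X]) :
    (dop μ)^[j] (P, μ) = ((derivative)^[j] P, μ) := by
  induction j with
  | zero => rfl
  | succ n ih =>
    rw [Function.iterate_succ_apply', ih, Function.iterate_succ_apply']
    simp [dop]

lemma dop_iter_zeropoly (ν μ : ℂ) (j : ℕ) :
    (dop ν)^[j] ((0 : ℂ[X]), μ) = ((0 : ℂ[X]), μ) := by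
  induction j with
  | zero => rfl
  | succ n ih => rw [Function.iterate_succ_apply', ih]; simp [dop]

lemma iterate_deriv_top (Q : ℂ[X]) (hQ : Q ≠ 0) (z : ℂ) :
    ((derivative)^[Q.natDegree] Q).eval z ≠ 0 := by
  set d := Q.natDegree with hd
  have hc0 : ((derivative)^[d] Q).coeff 0 ≠ 0 := by
    rw [coeff_iterate_derivative]
    simp only [zero_add]
    have : Q.coeff d ≠ 0 := by
      rw [hd, ← Polynomial.leadingCoeff]; exact leadingCoeff_ne_zero.mpr hQ
    simp only [nsmul_eq_mul]
    refine mul_ne_zero ?_ this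
    rw [Nat.descFactorial_self]
    exact_mod_cast Nat.cast_ne_zero.mpr (Nat.factorial_ne_zero d)
  have hdeg : ((derivative)^[d] Q).natDegree = 0 := by
    refine Nat.le_zero.mp (Polynomial.natDegree_le_iff_coeff_eq_zero.mpr fun m hm => ?_)
    rw [coeff_iterate_derivative]
    rw [Polynomial.coeff_eq_zero_of_natDegree_lt (by omega : Q.natDegree < m + d)]
    simp
  rw [eq_C_of_natDegree_eq_zero hdeg]
  simpa using hc0

lemma comm_iter2 (μ : ℂ) (a b : ℕ) (l : List (ℂ[X] × ℂ)) :
    (astep 0)^[a] ((astep μ)^[b] l) = (astep μ)^[b] ((astep 0)^[a] l) := by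
  induction b generalizing l with
  | zero => rfl
  | succ n ih =>
    rw [Function.iterate_succ_apply, ih, astep_comm_iter, ← Function.iterate_succ_apply]

lemma main : ∀ (n : ℕ) (l : List (ℂ[X] × ℂ)), l.length = n + 1 →
    (∀ p ∈ l, p.1 ≠ 0) → l.Pairwise (fun a b => a.2 ≠ b.2) → ∀ z : ℂ,
    ∃ j, j ≤ n + (l.map (fun p => p.1.natDegree)).sum ∧ E ((astep 0)^[j] l) z ≠ 0 := by
  intro n
  induction n with
  | zero =>
    intro l hlen hne _ z
    obtain ⟨p, rfl⟩ : ∃ p, l = [p] := by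
      match l, hlen with | [p], _ => exact ⟨p, rfl⟩
    by_contra hcon
    push_neg at hcon
    have hp1 := hne p (by simp)
    have hvan : E ((astep p.2)^[p.1.natDegree] [p]) z = 0 := by
      apply vanish
      intro i hi
      exact hcon i (by simpa using hi)
    rw [astep_iterate] at hvan
    have hhead : (dop p.2)^[p.1.natDegree] p = ((derivative)^[p.1.natDegree] p.1, p.2) := by
      rw [show p = (p.1, p.2) from rfl, dop_iter_head]
    rw [show List.map ((dop p.2)^[p.1.natDegree]) [p]
        = [((derivative)^[p.1.natDegree] p.1, p.2)] by simp [hhead]] at hvan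
    simp only [E, List.map_cons, List.map_nil, List.sum_cons, List.sum_nil, add_zero,
      mul_eq_zero] at hvan
    rcases hvan with h | h
    · exact iterate_deriv_top p.1 hp1 z h
    · exact Complex.exp_ne_zero _ h
  | succ n ih =>
    intro l hlen hne hpw z
    obtain ⟨p, t, rfl⟩ : ∃ p t, l = p :: t := by
      match l, hlen with | (p :: t), _ => exact ⟨p, t, rfl⟩
    set d := p.1.natDegree with hdd
    set μ := p.2 with hμ
    set g := (dop μ)^[d+1] with hg
    have htne : ∀ q ∈ t, μ ≠ q.2 := fun q hq => (List.pairwise_cons.mp hpw).1 q hq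
    have hprop : ∀ q ∈ t, (g q).1 ≠ 0 ∧ (g q).1.natDegree = q.1.natDegree :=
      fun q hq => dop_iter_fst μ (d+1) q (fun h => htne q hq h.symm) (hne q (List.mem_cons_of_mem _ hq))
    have hsnd : ∀ q : ℂ[X] × ℂ, (g q).2 = q.2 := fun q => dop_snd μ (d+1) q
    -- apply IH to t.map g
    obtain ⟨j, hj, hEj⟩ := ih (t.map g)
      (by simpa using Nat.succ_injective hlen)
      (by intro q hq
          obtain ⟨q', hq', rfl⟩ := List.mem_map.mp hq
          exact (hprop q' hq').1)
      (by refine (List.pairwise_map).mpr ?_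
          refine (List.pairwise_cons.mp hpw).2.imp ?_
          intro a b hab
          rw [hsnd, hsnd]; exact hab)
      z
    -- rewrite degree sum
    have hsum : ((t.map g).map (fun p => p.1.natDegree)).sum
        = (t.map (fun p => p.1.natDegree)).sum := by
      rw [List.map_map]
      exact congrArg List.sum (List.map_congr_left fun q hq => (hprop q hq).2)
    rw [hsum] at hj
    -- identify E ((astep 0)^[j] (t.map g)) with E ((astep 0)^[j] ((astep μ)^[d+1] (p::t)))
    have hlist : (astep μ)^[d+1] (p :: t) = ((0 : ℂ[X]), μ) :: t.map g := by
      rw [astep_iterate, List.map_cons, ← hg]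
      congr 1
      rw [show p = (p.1, μ) from rfl, hg, dop_iter_head,
        iterate_derivative_eq_zero (by omega)]
    have hkey : E ((astep 0)^[j] ((astep μ)^[d+1] (p :: t))) z ≠ 0 := by
      rw [hlist, astep_iterate, List.map_cons, dop_iter_zeropoly, ← astep_iterate]
      rw [E_cons]
      simpa using hEj
    rw [comm_iter2] at hkey
    -- contrapositive of vanish
    by_contra hcon
    push_neg at hcon
    apply hkey
    apply vanish
    intro i hi
    rw [← Function.iterate_add_apply]
    apply hcon
    simp only [List.map_cons, List.sum_cons]
    omega

end PSaux

namespace PSaux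

lemma iteratedDeriv_zero_fun (j : ℕ) :
    iteratedDeriv j (fun _ : ℂ => (0:ℂ)) = fun _ => 0 := by
  induction j with
  | zero => rfl
  | succ n ih => rw [iteratedDeriv_succ, ih]; funext z; simp

end PSaux

/-- Pólya–Szegő bound: for the quasipolynomial
`Δ(λ) = Σ_{k=0}^{N} P_k(λ) e^{-λ τ_k}` with nonzero real polynomials `P_k` and delays
`0 = τ_0 < τ_1 < ... < τ_N`, the function `Δ` is not identically zero and every root
has multiplicity at most `𝒟 = N + Σ_k deg P_k`. -/
theorem stmt_1 (N : ℕ) (P : Fin (N + 1) → Polynomial ℝ) (hP : ∀ k, P k ≠ 0)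
    (τ : Fin (N + 1) → ℝ) (hτ0 : τ 0 = 0) (hτmono : StrictMono τ)
    (Δ : ℂ → ℂ)
    (hΔ : ∀ lam : ℂ, Δ lam =
      ∑ k : Fin (N + 1), Polynomial.aeval lam (P k) * Complex.exp (-lam * (τ k : ℂ))) :
    (∃ lam : ℂ, Δ lam ≠ 0) ∧
    ∀ lam0 : ℂ, Δ lam0 = 0 →
      ∃ j ≤ N + ∑ k : Fin (N + 1), (P k).natDegree, iteratedDeriv j Δ lam0 ≠ 0 := by
  set l : List (ℂ[X] × ℂ) :=
    List.ofFn (fun k : Fin (N+1) => ((P k).map (algebraMap ℝ ℂ), -((τ k : ℝ) : ℂ))) with hl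
  have hΔE : Δ = PSaux.E l := by
    funext z
    rw [hΔ z]
    simp only [PSaux.E, hl, List.map_ofFn, List.sum_ofFn, Function.comp]
    refine Finset.sum_congr rfl fun k _ => ?_
    rw [Polynomial.aeval_def, ← Polynomial.eval_map (algebraMap ℝ ℂ) z]
    congr 1
    rw [show -((τ k : ℝ) : ℂ) * z = -z * ((τ k : ℝ) : ℂ) by ring]
  have key : ∀ z : ℂ, ∃ j, j ≤ N + ∑ k : Fin (N + 1), (P k).natDegree ∧
      iteratedDeriv j Δ z ≠ 0 := by
    intro z
    have hlen : l.length = N + 1 := by simp [hl]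
    have hne : ∀ p ∈ l, p.1 ≠ 0 := by
      intro p hp
      rw [hl, List.mem_ofFn] at hp
      obtain ⟨k, rfl⟩ := hp
      exact Polynomial.map_ne_zero (hP k)
    have hpw : l.Pairwise (fun a b => a.2 ≠ b.2) := by
      rw [hl, List.pairwise_ofFn]
      intro i j hij
      simp only [ne_eq, neg_inj, Complex.ofReal_inj]
      exact (hτmono hij).ne
    have hsum : (l.map (fun p => p.1.natDegree)).sum
        = ∑ k : Fin (N + 1), (P k).natDegree := by
      rw [hl, List.map_ofFn, List.sum_ofFn]
      refine Finset.sum_congr rfl fun k _ => ?_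
      simp [Polynomial.natDegree_map]
    obtain ⟨j, hj, hE⟩ := PSaux.main N l hlen hne hpw z
    rw [hsum] at hj
    exact ⟨j, hj, by rw [hΔE, PSaux.iteratedDeriv_E]; exact hE⟩
  constructor
  · by_contra h
    push_neg at h
    obtain ⟨j, _, hj⟩ := key 0
    apply hj
    have : Δ = fun _ => 0 := funext h
    rw [this, PSaux.iteratedDeriv_zero_fun]
  · intro lam0 _
    obtain ⟨j, hj, hne⟩ := key lam0
    exact ⟨j, hj, hne⟩
end

section
/- Let n ≥ 1 and 0 ≤ m ≤ n be integers, and define the quasipolynomial Δ(λ) = λ^n + Σ_{k=0}^{n-1} a_k λ^k + e^{-λ} Σ_{k=0}^{m} α_k λ^k, where the real coefficients are given by the MID formulas with delay τ = 1 and root λ0 = 0: a_k = (-1)^{n-k} n! C(m+n-k, m) / k! for 0 ≤ k ≤ n-1, and α_k = (-1)^{n-1} (m+n-k)! / ( k! (m-k)! ) for 0 ≤ k ≤ m. Then for every λ ∈ ℂ, Δ(λ) = (λ^{m+n+1} / m!) ∫_0^1 t^m (1-t)^n e^{-λ t} dt. -/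
open Finset intervalIntegral

lemma keyA (n : ℕ) : ∀ p k : ℕ, n ≤ p + k →
    ∑ i ∈ range (k+1), (-1:ℂ)^i * (n.choose (k-i)) * ((p+i).choose i) =
      (-1)^k * ((p+k-n).choose k) := by
  induction n with
  | zero =>
      intro p k _
      rw [Finset.sum_eq_single k]
      · simp
      · intro i hi hne
        have : 0 < k - i := Nat.sub_pos_of_lt (lt_of_le_of_ne (Nat.lt_succ_iff.mp (mem_range.mp hi)) hne)
        simp [Nat.choose_eq_zero_of_lt this]
      · simp
  | succ n ih =>
      intro p k hpk
      cases k with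
      | zero => simp
      | succ k =>
          have hmain : ∑ i ∈ range (k+1), (-1:ℂ)^i * ((n+1).choose (k+1-i)) * ((p+i).choose i)
              = (∑ i ∈ range (k+1), (-1:ℂ)^i * (n.choose (k+1-i)) * ((p+i).choose i))
                + ∑ i ∈ range (k+1), (-1:ℂ)^i * (n.choose (k-i)) * ((p+i).choose i) := by
            rw [← Finset.sum_add_distrib]
            apply Finset.sum_congr rfl
            intro i hi
            have hik : i ≤ k := Nat.lt_succ_iff.mp (mem_range.mp hi)
            have h4 : k + 1 - i = (k - i) + 1 := by omega
            rw [h4, Nat.choose_succ_succ]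
            push_cast
            ring
          have h1 : ∑ i ∈ range (k+2), (-1:ℂ)^i * ((n+1).choose (k+1-i)) * ((p+i).choose i)
              = (∑ i ∈ range (k+2), (-1:ℂ)^i * (n.choose (k+1-i)) * ((p+i).choose i))
                + ∑ i ∈ range (k+1), (-1:ℂ)^i * (n.choose (k-i)) * ((p+i).choose i) := by
            rw [Finset.sum_range_succ, Finset.sum_range_succ
              (f := fun i => (-1:ℂ)^i * (n.choose (k+1-i)) * ((p+i).choose i)), hmain]
            simp only [Nat.sub_self, Nat.choose_zero_right]
            ring
          rw [h1, ih p (k+1) (by omega), ih p k (by omega)]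
          have h2 : (p + (k+1) - (n+1)) = p + k - n := by omega
          have h3 : p + (k+1) - n = p + k - n + 1 := by omega
          rw [h2, h3]
          have : ((p + k - n + 1).choose (k+1) : ℂ) = ((p+k-n).choose k : ℂ) + ((p+k-n).choose (k+1) : ℂ) := by
            rw [← Nat.cast_add, ← Nat.choose_succ_succ]
          rw [this]
          ring

lemma contI (p : ℕ) (z : ℂ) : Continuous (fun t : ℝ => (t:ℂ)^p * Complex.exp (-z * t)) := by
  fun_prop

lemma ibp (p : ℕ) (z : ℂ) :
    (-z) * ∫ t in (0:ℝ)..1, (t:ℂ)^(p+1) * Complex.exp (-z*t)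
      = Complex.exp (-z) - (p+1) * ∫ t in (0:ℝ)..1, (t:ℂ)^p * Complex.exp (-z*t) := by
  have hu : ∀ x ∈ Set.uIcc (0:ℝ) 1, HasDerivAt (fun t : ℝ => (t:ℂ)^(p+1))
      (((p:ℂ)+1) * (x:ℂ)^p) x := by
    intro x _
    have h2 := (hasDerivAt_pow (p+1) ((x:ℂ))).comp_ofReal
    simpa using h2
  have hv : ∀ x ∈ Set.uIcc (0:ℝ) 1, HasDerivAt (fun t : ℝ => Complex.exp (-z * t))
      (-z * Complex.exp (-z * x)) x := by
    intro x _
    have h1 : HasDerivAt (fun w : ℂ => Complex.exp (-z * w)) (Complex.exp (-z * (x:ℂ)) * (-z)) (x:ℂ) := by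
      simpa using ((hasDerivAt_id ((x:ℂ))).const_mul (-z)).cexp
    simpa [mul_comm] using h1.comp_ofReal
  have hiu : IntervalIntegrable (fun x : ℝ => ((p:ℂ)+1) * (x:ℂ)^p) MeasureTheory.volume 0 1 := by
    apply Continuous.intervalIntegrable; fun_prop
  have hiv : IntervalIntegrable (fun x : ℝ => -z * Complex.exp (-z * x)) MeasureTheory.volume 0 1 := by
    apply Continuous.intervalIntegrable; fun_prop
  have h := integral_mul_deriv_eq_deriv_mul hu hv hiu hiv
  have hl : ∫ x in (0:ℝ)..1, (x:ℂ)^(p+1) * (-z * Complex.exp (-z * x))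
      = -z * ∫ t in (0:ℝ)..1, (t:ℂ)^(p+1) * Complex.exp (-z*t) := by
    rw [← integral_const_mul]
    congr 1; ext x; ring
  have hr : ∫ x in (0:ℝ)..1, ((p:ℂ)+1) * (x:ℂ)^p * Complex.exp (-z * x)
      = ((p:ℂ)+1) * ∫ t in (0:ℝ)..1, (t:ℂ)^p * Complex.exp (-z*t) := by
    rw [← integral_const_mul]
    congr 1; ext x; ring
  rw [hl, hr] at h
  rw [h]
  push_cast
  simp

lemma intB (z : ℂ) : ∀ p : ℕ,
    z^(p+1) * ∫ t in (0:ℝ)..1, (t:ℂ)^p * Complex.exp (-z*t)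
      = (p.factorial : ℂ) * (1 - Complex.exp (-z) * ∑ i ∈ range (p+1), z^i / (i.factorial : ℂ)) := by
  intro p
  induction p with
  | zero =>
      rcases eq_or_ne z 0 with hz | hz
      · simp [hz]
      · have h0 : ∫ t in (0:ℝ)..1, (t:ℂ)^0 * Complex.exp (-z*t)
            = ∫ t in (0:ℝ)..1, Complex.exp (-z*t) := by simp
        rw [h0, integral_exp_mul_complex (neg_ne_zero.mpr hz)]
        simp only [Nat.factorial_zero, Nat.cast_one, range_one, sum_singleton, pow_zero,
          div_one, one_mul, pow_one]
        field_simp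
        simp only [zero_add, range_one, sum_singleton, pow_zero, pow_one, Nat.factorial_zero, Nat.cast_one, div_one, Complex.ofReal_one, Complex.ofReal_zero, mul_one, mul_zero, neg_zero, Complex.exp_zero]
        ring
  | succ p ih =>
      have h := ibp p z
      have key : z^(p+1+1) * ∫ t in (0:ℝ)..1, (t:ℂ)^(p+1) * Complex.exp (-z*t)
          = ((p:ℂ)+1) * (z^(p+1) * ∫ t in (0:ℝ)..1, (t:ℂ)^p * Complex.exp (-z*t))
            - z^(p+1) * Complex.exp (-z) := by
        have h2 : z^(p+1+1) * ∫ t in (0:ℝ)..1, (t:ℂ)^(p+1) * Complex.exp (-z*t)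
            = (-(z^(p+1))) * ((-z) * ∫ t in (0:ℝ)..1, (t:ℂ)^(p+1) * Complex.exp (-z*t)) := by
          ring
        rw [h2, h]
        ring
      rw [key, ih]
      conv_rhs => rw [Finset.sum_range_succ]
      have hf : ((p+1).factorial : ℂ) = ((p:ℂ)+1) * (p.factorial : ℂ) := by
        rw [Nat.factorial_succ]; push_cast; ring
      rw [hf]
      have h1 : ((p:ℂ)+1) ≠ 0 := Nat.cast_add_one_ne_zero p
      have h2 : (p.factorial : ℂ) ≠ 0 := Nat.cast_ne_zero.mpr (Nat.factorial_ne_zero _)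
      field_simp
      ring

lemma intMain (m n : ℕ) (z : ℂ) :
    z^(m+n+1) * ∫ t in (0:ℝ)..1, (t:ℂ)^m * ((1 - t:ℝ):ℂ)^n * Complex.exp (-z*t)
      = ∑ j ∈ range (n+1), (-1:ℂ)^j * (n.choose j) * ((m+j).factorial : ℂ) * z^(n-j)
          * (1 - Complex.exp (-z) * ∑ i ∈ range (m+j+1), z^i / (i.factorial:ℂ)) := by
  have hexp : ∀ t : ℝ, (t:ℂ)^m * ((1 - t:ℝ):ℂ)^n * Complex.exp (-z*t)
      = ∑ j ∈ range (n+1), ((-1:ℂ)^j * (n.choose j)) * ((t:ℂ)^(m+j) * Complex.exp (-z*t)) := by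
    intro t
    have h1 : ((1 - t:ℝ):ℂ) = (-(t:ℂ)) + 1 := by push_cast; ring
    rw [h1, add_pow, Finset.mul_sum, Finset.sum_mul]
    apply Finset.sum_congr rfl
    intro j _
    rw [neg_pow, pow_add]
    ring
  have hint : (∫ t in (0:ℝ)..1, (t:ℂ)^m * ((1 - t:ℝ):ℂ)^n * Complex.exp (-z*t))
      = ∑ j ∈ range (n+1), ((-1:ℂ)^j * (n.choose j)) *
          ∫ t in (0:ℝ)..1, (t:ℂ)^(m+j) * Complex.exp (-z*t) := by
    simp only [hexp]
    rw [intervalIntegral.integral_finset_sum]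
    · exact Finset.sum_congr rfl (fun j _ => intervalIntegral.integral_const_mul _ _)
    · intro j _
      apply Continuous.intervalIntegrable
      fun_prop
  rw [hint, Finset.mul_sum]
  apply Finset.sum_congr rfl
  intro j hj
  have hjn : j ≤ n := Nat.lt_succ_iff.mp (Finset.mem_range.mp hj)
  have hpow : z^(m+n+1) = z^(n-j) * z^(m+j+1) := by
    rw [← pow_add]
    congr 1
    omega
  calc z^(m+n+1) * (((-1:ℂ)^j * (n.choose j)) * ∫ t in (0:ℝ)..1, (t:ℂ)^(m+j) * Complex.exp (-z*t))
      = ((-1:ℂ)^j * (n.choose j)) * z^(n-j) *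
          (z^(m+j+1) * ∫ t in (0:ℝ)..1, (t:ℂ)^(m+j) * Complex.exp (-z*t)) := by
        rw [hpow]; ring
    _ = _ := by rw [intB]; ring

lemma lemQ (m n : ℕ) (z : ℂ) :
    ∑ j ∈ range (n+1), (-1:ℂ)^j * (n.choose j) * ((m+j).factorial : ℂ) * z^(n-j)
        * ∑ i ∈ range (m+j+1), z^i / (i.factorial:ℂ)
      = ∑ k ∈ range (m+1), (-1:ℂ)^n * ((m+n-k).factorial : ℂ) * ((m.choose k) : ℂ) * z^k := by
  -- write LHS as a sigma sum
  have h1 : ∑ j ∈ range (n+1), (-1:ℂ)^j * (n.choose j) * ((m+j).factorial : ℂ) * z^(n-j)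
        * ∑ i ∈ range (m+j+1), z^i / (i.factorial:ℂ)
      = ∑ x ∈ (range (n+1)).sigma (fun j => range (m+j+1)),
          (-1:ℂ)^x.1 * (n.choose x.1) * ((m+x.1).factorial : ℂ) / (x.2.factorial : ℂ)
            * z^(n-x.1+x.2) := by
    rw [Finset.sum_sigma]
    apply Finset.sum_congr rfl
    intro j _
    rw [Finset.mul_sum]
    apply Finset.sum_congr rfl
    intro i _
    rw [pow_add]
    ring
  rw [h1]
  -- reindex
  have h2 : ∑ x ∈ (range (n+1)).sigma (fun j => range (m+j+1)),
          (-1:ℂ)^x.1 * (n.choose x.1) * ((m+x.1).factorial : ℂ) / (x.2.factorial : ℂ)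
            * z^(n-x.1+x.2)
      = ∑ x ∈ ((range (m+n+1)).sigma (fun k => range (k+1))).filter
            (fun x => x.1 ≤ n + x.2),
          (-1:ℂ)^(n+x.1+x.2) * (n.choose (x.1-x.2)) * ((m+n-x.1+x.2).factorial : ℂ)
            / (x.2.factorial : ℂ) * z^x.1 := by
    apply Finset.sum_nbij' (i := fun x => ⟨n - x.1 + x.2, x.2⟩)
      (j := fun x => ⟨n + x.2 - x.1, x.2⟩)
    · rintro ⟨j, i⟩ hx
      simp only [Finset.mem_sigma, Finset.mem_range] at hx
      simp only [Finset.mem_filter, Finset.mem_sigma, Finset.mem_range]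
      omega
    · rintro ⟨k, i⟩ hx
      simp only [Finset.mem_filter, Finset.mem_sigma, Finset.mem_range] at hx
      simp only [Finset.mem_sigma, Finset.mem_range]
      omega
    · rintro ⟨j, i⟩ hx
      simp only [Finset.mem_sigma, Finset.mem_range] at hx
      have : n + i - (n - j + i) = j := by omega
      simp [this]
    · rintro ⟨k, i⟩ hx
      simp only [Finset.mem_filter, Finset.mem_sigma, Finset.mem_range] at hx
      have : n - (n + i - k) + i = k := by omega
      simp [this]
    · rintro ⟨j, i⟩ hx
      simp only [Finset.mem_sigma, Finset.mem_range] at hx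
      have hj : j ≤ n := by omega
      have e1 : n - j + i - i = n - j := by omega
      have e2 : n.choose (n - j + i - i) = n.choose j := by
        rw [e1, Nat.choose_symm hj]
      have e3 : m + n - (n - j + i) + i = m + j := by omega
      have e4 : (-1:ℂ)^(n+(n-j+i)+i) = (-1:ℂ)^j := by
        have : n+(n-j+i)+i = j + 2*(n-j+i) := by omega
        rw [this, pow_add, pow_mul]
        simp
      simp only [e2, e3, e4]
  rw [h2]
  -- drop the filter
  have h3 : ∑ x ∈ ((range (m+n+1)).sigma (fun k => range (k+1))).filter
            (fun x => x.1 ≤ n + x.2),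
          (-1:ℂ)^(n+x.1+x.2) * (n.choose (x.1-x.2)) * ((m+n-x.1+x.2).factorial : ℂ)
            / (x.2.factorial : ℂ) * z^x.1
      = ∑ x ∈ (range (m+n+1)).sigma (fun k => range (k+1)),
          (-1:ℂ)^(n+x.1+x.2) * (n.choose (x.1-x.2)) * ((m+n-x.1+x.2).factorial : ℂ)
            / (x.2.factorial : ℂ) * z^x.1 := by
    apply Finset.sum_filter_of_ne
    rintro ⟨k, i⟩ hx hne
    simp only [Finset.mem_sigma, Finset.mem_range] at hx
    by_contra hc
    apply hne
    simp only [not_le] at hc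
    have : n < k - i := by omega
    rw [Nat.choose_eq_zero_of_lt this]
    simp
  rw [h3, Finset.sum_sigma]
  -- inner sums via keyA
  have h4 : ∀ k ∈ range (m+n+1),
      ∑ i ∈ range (k+1), (-1:ℂ)^(n+k+i) * (n.choose (k-i)) * ((m+n-k+i).factorial : ℂ)
          / (i.factorial : ℂ) * z^k
        = (-1:ℂ)^n * ((m+n-k).factorial : ℂ) * ((m.choose k) : ℂ) * z^k := by
    intro k hk
    have hkmn : k ≤ m + n := Nat.lt_succ_iff.mp (Finset.mem_range.mp hk)
    have hfac : ∀ i : ℕ, ((m+n-k+i).factorial : ℂ) / (i.factorial : ℂ)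
        = ((m+n-k).factorial : ℂ) * (((m+n-k+i).choose i) : ℂ) := by
      intro i
      have hN : ((m+n-k+i).choose i) * i.factorial * (m+n-k).factorial
          = (m+n-k+i).factorial := by
        have := Nat.choose_mul_factorial_mul_factorial (Nat.le_add_left i (m+n-k))
        simpa [Nat.add_sub_cancel] using this
      have hi0 : (i.factorial : ℂ) ≠ 0 := Nat.cast_ne_zero.mpr (Nat.factorial_ne_zero _)
      field_simp
      rw [← Nat.cast_mul, ← Nat.cast_mul]
      rw [← hN]
      push_cast
      ring
    have hkey := keyA n (m+n-k) k (by omega)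
    have hp : m + n - k + k - n = m := by omega
    rw [hp] at hkey
    calc ∑ i ∈ range (k+1), (-1:ℂ)^(n+k+i) * (n.choose (k-i)) * ((m+n-k+i).factorial : ℂ)
          / (i.factorial : ℂ) * z^k
        = ((-1:ℂ)^(n+k) * ((m+n-k).factorial : ℂ) * z^k) *
            ∑ i ∈ range (k+1), (-1:ℂ)^i * (n.choose (k-i)) * (((m+n-k+i).choose i) : ℂ) := by
          rw [Finset.mul_sum]
          apply Finset.sum_congr rfl
          intro i _
          rw [mul_div_assoc, hfac i, pow_add]
          ring
      _ = _ := by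
          rw [hkey]
          have : (-1:ℂ)^(n+k) * (-1:ℂ)^k = (-1:ℂ)^n := by
            rw [← pow_add]
            have : n + k + k = n + 2*k := by omega
            rw [this, pow_add, pow_mul]
            simp
          calc ((-1:ℂ)^(n+k) * ((m+n-k).factorial : ℂ) * z^k) * ((-1)^k * ((m.choose k):ℂ))
              = ((-1:ℂ)^(n+k) * (-1:ℂ)^k) * ((m+n-k).factorial : ℂ) * ((m.choose k):ℂ) * z^k := by ring
            _ = _ := by rw [this]
  rw [Finset.sum_congr rfl h4]
  -- drop vanishing terms k > m
  symm
  apply Finset.sum_subset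
  · apply Finset.range_subset_range.mpr
    omega
  · intro k _ hk2
    have : m < k := by
      simp only [Finset.mem_range] at hk2
      omega
    rw [Nat.choose_eq_zero_of_lt this]
    simp

lemma lemP (m n : ℕ) (z : ℂ) :
    ∑ j ∈ range (n+1), (-1:ℂ)^j * (n.choose j) * ((m+j).factorial : ℂ) * z^(n-j)
      = (m.factorial : ℂ) * z^n
        + ∑ k ∈ range n, (-1:ℂ)^(n-k) * ((n.choose (n-k)) : ℂ) * ((m+n-k).factorial : ℂ) * z^k := by
  have hrefl := Finset.sum_range_reflect
    (fun j => (-1:ℂ)^j * (n.choose j) * ((m+j).factorial : ℂ) * z^(n-j)) (n+1)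
  rw [← hrefl, Finset.sum_range_succ]
  have hlast : (-1:ℂ)^(n+1-1-n) * (n.choose (n+1-1-n)) * ((m+(n+1-1-n)).factorial : ℂ)
      * z^(n-(n+1-1-n)) = (m.factorial : ℂ) * z^n := by
    have e : n+1-1-n = 0 := by omega
    rw [e]
    simp
  rw [hlast, add_comm]
  congr 1
  apply Finset.sum_congr rfl
  intro k hk
  have hkn : k < n := Finset.mem_range.mp hk
  have e1 : n+1-1-k = n-k := by omega
  have e2 : m+(n-k) = m+n-k := by omega
  have e3 : n-(n-k) = k := by omega
  rw [e1, e2, e3]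



open intervalIntegral in
/-- integral/Kummer factorization at `τ = 1`, `λ0 = 0`: with the MID
coefficients `a_k = (-1)^{n-k} n! C(m+n-k, m) / k!` and
`α_k = (-1)^{n-1} (m+n-k)! / (k! (m-k)!)`, the quasipolynomial
`Δ(λ) = λ^n + Σ_{k<n} a_k λ^k + e^{-λ} Σ_{k≤m} α_k λ^k` factorizes as
`Δ(λ) = (λ^{m+n+1} / m!) ∫_0^1 t^m (1-t)^n e^{-λ t} dt`. -/
theorem stmt_5 (n m : ℕ) (hn : 1 ≤ n) (hm : m ≤ n)
    (a : Fin n → ℝ) (α : Fin (m + 1) → ℝ)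
    (ha : ∀ k : Fin n, a k =
      (-1 : ℝ) ^ (n - (k : ℕ)) * (n.factorial : ℝ) * ((m + n - (k : ℕ)).choose m : ℝ) /
        ((k : ℕ).factorial : ℝ))
    (hα : ∀ k : Fin (m + 1), α k =
      (-1 : ℝ) ^ (n - 1) * ((m + n - (k : ℕ)).factorial : ℝ) /
        (((k : ℕ).factorial : ℝ) * ((m - (k : ℕ)).factorial : ℝ)))
    (Δ : ℂ → ℂ)
    (hΔ : ∀ lam : ℂ, Δ lam =
      lam ^ n + ∑ k : Fin n, (a k : ℂ) * lam ^ (k : ℕ)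
        + Complex.exp (-lam) * ∑ k : Fin (m + 1), (α k : ℂ) * lam ^ (k : ℕ)) :
    ∀ lam : ℂ, Δ lam =
      lam ^ (m + n + 1) / (m.factorial : ℂ) *
        ∫ t in (0 : ℝ)..1, (t : ℂ) ^ m * ((1 - t : ℝ) : ℂ) ^ n * Complex.exp (-lam * (t : ℂ)) := by
  intro lam
  have hM : (m.factorial : ℂ) ≠ 0 := Nat.cast_ne_zero.mpr (Nat.factorial_ne_zero _)
  rw [hΔ lam, div_mul_eq_mul_div, eq_div_iff hM, intMain m n lam]
  have hA0 : ∑ k : Fin n, ((a k : ℝ) : ℂ) * lam^(k:ℕ)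
      = ∑ k ∈ range n, ((-1:ℂ)^(n-k) * (n.factorial:ℂ) * (((m+n-k).choose m):ℂ)
          / ((k.factorial:ℕ):ℂ)) * lam^k := by
    rw [← Fin.sum_univ_eq_sum_range (fun k => ((-1:ℂ)^(n-k) * (n.factorial:ℂ)
      * (((m+n-k).choose m):ℂ) / ((k.factorial:ℕ):ℂ)) * lam^k) n]
    apply Finset.sum_congr rfl
    intro k _
    rw [ha k]
    push_cast
    ring
  have hB0 : ∑ k : Fin (m+1), ((α k : ℝ) : ℂ) * lam^(k:ℕ)
      = ∑ k ∈ range (m+1), ((-1:ℂ)^(n-1) * (((m+n-k).factorial):ℂ)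
          / (((k.factorial):ℂ) * (((m-k).factorial):ℂ))) * lam^k := by
    rw [← Fin.sum_univ_eq_sum_range (fun k => ((-1:ℂ)^(n-1) * (((m+n-k).factorial):ℂ)
      / (((k.factorial):ℂ) * (((m-k).factorial):ℂ))) * lam^k) (m+1)]
    apply Finset.sum_congr rfl
    intro k _
    rw [hα k]
    push_cast
    ring
  have hsplit : ∑ j ∈ range (n+1), (-1:ℂ)^j * (n.choose j) * ((m+j).factorial : ℂ) * lam^(n-j)
        * (1 - Complex.exp (-lam) * ∑ i ∈ range (m+j+1), lam^i / (i.factorial:ℂ))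
      = (∑ j ∈ range (n+1), (-1:ℂ)^j * (n.choose j) * ((m+j).factorial : ℂ) * lam^(n-j))
        - Complex.exp (-lam) * ∑ j ∈ range (n+1), (-1:ℂ)^j * (n.choose j)
            * ((m+j).factorial : ℂ) * lam^(n-j) * ∑ i ∈ range (m+j+1), lam^i / (i.factorial:ℂ) := by
    rw [Finset.mul_sum, ← Finset.sum_sub_distrib]
    apply Finset.sum_congr rfl
    intro j _
    ring
  rw [hA0, hB0, hsplit, lemP m n lam, lemQ m n lam]
  have SA : (∑ k ∈ range n, ((-1:ℂ)^(n-k) * (n.factorial:ℂ) * (((m+n-k).choose m):ℂ)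
          / ((k.factorial:ℕ):ℂ)) * lam^k) * (m.factorial : ℂ)
      = ∑ k ∈ range n, (-1:ℂ)^(n-k) * ((n.choose (n-k)) : ℂ) * ((m+n-k).factorial : ℂ) * lam^k := by
    rw [Finset.sum_mul]
    apply Finset.sum_congr rfl
    intro k hk
    have hkn : k < n := Finset.mem_range.mp hk
    have hN1 : n.factorial * ((m+n-k).choose m) * m.factorial
        = (n.choose (n-k)) * (m+n-k).factorial * k.factorial := by
      apply Nat.eq_of_mul_eq_mul_right (Nat.factorial_pos (n-k))
      have h1 := Nat.choose_mul_factorial_mul_factorial (show n-k ≤ n by omega)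
      have h2 := Nat.choose_mul_factorial_mul_factorial (show m ≤ m+n-k by omega)
      have e1 : n-(n-k) = k := by omega
      have e2 : m+n-k-m = n-k := by omega
      rw [e1] at h1
      rw [e2] at h2
      calc n.factorial * ((m+n-k).choose m) * m.factorial * (n-k).factorial
          = n.factorial * ((m+n-k).choose m * m.factorial * (n-k).factorial) := by ring
        _ = n.factorial * (m+n-k).factorial := by rw [h2]
        _ = (n.choose (n-k) * (n-k).factorial * k.factorial) * (m+n-k).factorial := by rw [h1]
        _ = n.choose (n-k) * (m+n-k).factorial * k.factorial * (n-k).factorial := by ring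
    have hk0 : ((k.factorial:ℕ):ℂ) ≠ 0 := Nat.cast_ne_zero.mpr (Nat.factorial_ne_zero _)
    field_simp
    have := congrArg (fun x : ℕ => (x : ℂ)) hN1
    push_cast at this
    linear_combination lam^k * this
  have SB : (∑ k ∈ range (m+1), ((-1:ℂ)^(n-1) * (((m+n-k).factorial):ℂ)
          / (((k.factorial):ℂ) * (((m-k).factorial):ℂ))) * lam^k) * (m.factorial : ℂ)
      = - ∑ k ∈ range (m+1), (-1:ℂ)^n * ((m+n-k).factorial : ℂ) * ((m.choose k) : ℂ) * lam^k := by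
    rw [Finset.sum_mul, ← Finset.sum_neg_distrib]
    apply Finset.sum_congr rfl
    intro k hk
    have hkm : k ≤ m := Nat.lt_succ_iff.mp (Finset.mem_range.mp hk)
    have hN2 : (m.choose k) * k.factorial * (m-k).factorial = m.factorial :=
      Nat.choose_mul_factorial_mul_factorial hkm
    have hsign : (-1:ℂ)^n = -(-1:ℂ)^(n-1) := by
      obtain ⟨c, rfl⟩ := Nat.exists_eq_add_of_le hn
      rw [show 1+c-1 = c from by omega, pow_add]
      ring
    have hk0 : ((k.factorial):ℂ) ≠ 0 := Nat.cast_ne_zero.mpr (Nat.factorial_ne_zero _)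
    have hmk0 : (((m-k).factorial):ℂ) ≠ 0 := Nat.cast_ne_zero.mpr (Nat.factorial_ne_zero _)
    rw [hsign]
    field_simp
    have := congrArg (fun x : ℕ => (x : ℂ)) hN2
    push_cast at this
    linear_combination -((m+n-k).factorial : ℂ) * lam^k * this
  linear_combination SA + Complex.exp (-lam) * SB
end

section
/- Let m, n ≥ 0 be integers and define F : ℂ → ℂ by F(λ) = ∫_0^1 t^m (1-t)^n e^{-λ t} dt. If m < n, then every λ ∈ ℂ with F(λ) = 0 satisfies Re(λ) < 0. If m = n, then every λ ∈ ℂ with F(λ) = 0 satisfies Re(λ) = 0. -/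
open MeasureTheory intervalIntegral Set Complex
noncomputable section
namespace Stmt6

def itg (j n : ℕ) (z : ℂ) (r t : ℝ) : ℂ :=
  (t:ℂ)^j * ((1-t:ℝ):ℂ)^n * Complex.exp (-(z * (r:ℂ)) * (t:ℂ))

def J (j n : ℕ) (z : ℂ) (r : ℝ) : ℂ := ∫ t in (0:ℝ)..1, itg j n z r t

lemma cont_itg (j n : ℕ) (z : ℂ) (r : ℝ) : Continuous (itg j n z r) := by
  unfold itg; fun_prop

lemma hasDerivAt_itg (j n : ℕ) (z : ℂ) (t : ℝ) (r : ℝ) :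
    HasDerivAt (fun r : ℝ => itg j n z r t) (-z * itg (j+1) n z r t) r := by
  have key : ∀ s : ℝ, itg j n z s t
      = (t:ℂ)^j * ((1-t:ℝ):ℂ)^n * Complex.exp ((-(z*(t:ℂ))) * (s:ℂ)) := by
    intro s; unfold itg; ring_nf
  have h1 : HasDerivAt (fun s : ℝ => Complex.exp ((-(z*(t:ℂ))) * (s:ℂ)))
      ((-(z*(t:ℂ))) * Complex.exp ((-(z*(t:ℂ))) * (r:ℂ))) r := by
    have hc : HasDerivAt (fun s : ℂ => Complex.exp ((-(z*(t:ℂ))) * s))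
        ((-(z*(t:ℂ))) * Complex.exp ((-(z*(t:ℂ))) * (r:ℂ))) (r:ℂ) := by
      simpa [mul_comm] using ((hasDerivAt_id ((r:ℝ):ℂ)).const_mul (-(z*(t:ℂ)))).cexp
    exact hc.comp_ofReal
  have h2 := h1.const_mul ((t:ℂ)^j * ((1-t:ℝ):ℂ)^n)
  have : HasDerivAt (fun s : ℝ => itg j n z s t)
      ((t:ℂ)^j * ((1-t:ℝ):ℂ)^n * ((-(z*(t:ℂ))) * Complex.exp ((-(z*(t:ℂ))) * (r:ℂ)))) r := by
    simpa [key] using h2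
  convert this using 1
  unfold itg; ring_nf


lemma norm_itg_le (j n : ℕ) (z : ℂ) (r t : ℝ) (ht : t ∈ Set.Ioc (0:ℝ) 1) :
    ‖itg j n z r t‖ ≤ Real.exp (‖z‖ * |r|) := by
  unfold itg
  rw [norm_mul, norm_mul, show ‖cexp (-(z * (r:ℂ)) * (t:ℂ))‖
      = Real.exp ((-(z * (r:ℂ)) * (t:ℂ)).re) from by rw [Complex.norm_exp]]
  have h1 : ‖((t:ℝ):ℂ)^j‖ ≤ 1 := by
    rw [norm_pow, Complex.norm_real, Real.norm_eq_abs]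
    exact pow_le_one₀ (abs_nonneg t) (by rw [abs_of_pos ht.1]; exact ht.2)
  have h2 : ‖((1-t:ℝ):ℂ)^n‖ ≤ 1 := by
    rw [norm_pow, Complex.norm_real, Real.norm_eq_abs]
    refine pow_le_one₀ (abs_nonneg _) ?_
    rw [abs_le]; constructor
    · nlinarith [ht.2]
    · nlinarith [ht.1]
  have h3 : (-(z * (r:ℂ)) * (t:ℂ)).re ≤ ‖z‖ * |r| := by
    have he : (-(z * (r:ℂ)) * (t:ℂ)).re = -(z.re * r * t) := by
      simp [Complex.mul_re]
    rw [he]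
    have hz : |z.re| ≤ ‖z‖ := Complex.abs_re_le_norm z
    have h4 : -(z.re * r * t) ≤ |z.re * r * t| := neg_le_abs _
    have h5 : |z.re * r * t| = |z.re| * |r| * |t| := by rw [abs_mul, abs_mul]
    have h6 : |t| ≤ 1 := by rw [abs_of_pos ht.1]; exact ht.2
    have s1 : |z.re| * |r| * |t| ≤ |z.re| * |r| :=
      mul_le_of_le_one_right (mul_nonneg (abs_nonneg z.re) (abs_nonneg r)) h6
    have s2 : |z.re| * |r| ≤ ‖z‖ * |r| := mul_le_mul_of_nonneg_right hz (abs_nonneg r)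
    linarith [h4, h5 ▸ h4]
  have hnn1 : (0:ℝ) ≤ ‖((1-t:ℝ):ℂ)^n‖ := norm_nonneg _
  calc ‖((t:ℝ):ℂ)^j‖ * ‖((1-t:ℝ):ℂ)^n‖ * Real.exp ((-(z * (r:ℂ)) * (t:ℂ)).re)
      ≤ 1 * 1 * Real.exp (‖z‖ * |r|) := by
        have hm : ‖((t:ℝ):ℂ)^j‖ * ‖((1-t:ℝ):ℂ)^n‖ ≤ 1 * 1 :=
          mul_le_mul h1 h2 hnn1 zero_le_one
        exact mul_le_mul hm (Real.exp_le_exp.2 h3) (Real.exp_nonneg _) (by norm_num)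
    _ = Real.exp (‖z‖ * |r|) := by ring

lemma hasDerivAt_J (j n : ℕ) (z : ℂ) (r : ℝ) :
    HasDerivAt (J j n z) (-z * J (j+1) n z r) r := by
  have main := intervalIntegral.hasDerivAt_integral_of_dominated_loc_of_deriv_le
    (F := fun (x : ℝ) (t : ℝ) => itg j n z x t)
    (F' := fun (x : ℝ) (t : ℝ) => -z * itg (j+1) n z x t)
    (μ := volume) (a := (0:ℝ)) (b := 1) (x₀ := r)
    (bound := fun _ => ‖z‖ * Real.exp (‖z‖ * (|r|+1)))
    (s := Metric.ball r 1) (Metric.ball_mem_nhds r one_pos)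
    (Filter.Eventually.of_forall fun x => ((cont_itg j n z x).aestronglyMeasurable).restrict)
    ((cont_itg j n z r).intervalIntegrable 0 1)
    (((continuous_const.mul (cont_itg (j+1) n z r)).aestronglyMeasurable).restrict)
    ?_ (intervalIntegrable_const) ?_
  · have := main.2
    rwa [intervalIntegral.integral_const_mul] at this
  · refine Filter.Eventually.of_forall fun t ht x hx => ?_
    rw [Set.uIoc_of_le (by norm_num : (0:ℝ) ≤ 1)] at ht
    rw [norm_mul, norm_neg]
    have hb := norm_itg_le (j+1) n z x t ht
    have hxr : |x| ≤ |r| + 1 := by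
      have := mem_ball_iff_norm.1 hx
      have h2 : |x - r| < 1 := by simpa [Real.norm_eq_abs] using this
      calc |x| = |x - r + r| := by ring_nf
        _ ≤ |x - r| + |r| := abs_add_le _ _
        _ ≤ |r| + 1 := by linarith
    have : Real.exp (‖z‖ * |x|) ≤ Real.exp (‖z‖ * (|r|+1)) :=
      Real.exp_le_exp.2 (by nlinarith [norm_nonneg z])
    exact mul_le_mul_of_nonneg_left (le_trans hb this) (norm_nonneg z)
  · exact Filter.Eventually.of_forall fun t ht x _ => hasDerivAt_itg j n z t x


lemma cont_J (j n : ℕ) (z : ℂ) : Continuous (J j n z) := by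
  have : Differentiable ℝ (J j n z) := fun r => (hasDerivAt_J j n z r).differentiableAt
  exact this.continuous

lemma keyODE (m n : ℕ) (z : ℂ) (r : ℝ) :
    ((m:ℂ)+1) * J m n z r
      = (((m:ℂ)+(n:ℂ)+2) + z*(r:ℂ)) * J (m+1) n z r - (z*(r:ℂ)) * J (m+2) n z r := by
  set c : ℂ := z * (r:ℂ) with hc
  -- complex-differentiable auxiliary function
  have hQ : ∀ s : ℂ, HasDerivAt (fun s : ℂ => s^(m+1) * (1-s)^(n+1) * Complex.exp (-c * s))
      ((((m:ℂ)+1) * s^m * (1-s)^(n+1) - ((n:ℂ)+1) * s^(m+1) * (1-s)^n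
        - c * (s^(m+1) * (1-s)^(n+1))) * Complex.exp (-c * s)) s := by
    intro s
    have h1 : HasDerivAt (fun s : ℂ => s^(m+1)) (((m:ℂ)+1) * s^m) s := by
      simpa using hasDerivAt_pow (m+1) s
    have h2 : HasDerivAt (fun s : ℂ => (1-s)^(n+1)) (-(((n:ℂ)+1) * (1-s)^n)) s := by
      have hin : HasDerivAt (fun s : ℂ => 1 - s) (-1) s := by
        exact (hasDerivAt_id' s).const_sub (1:ℂ)
      have := (hasDerivAt_pow (n+1) (1-s)).comp s hin
      simpa [mul_comm, mul_assoc, Function.comp_def] using this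
    have h3 : HasDerivAt (fun s : ℂ => Complex.exp (-c * s)) (-c * Complex.exp (-c * s)) s := by
      simpa [mul_comm] using ((hasDerivAt_id s).const_mul (-c)).cexp
    have := (h1.mul h2).mul h3
    refine this.congr_deriv ?_
    simp only [Pi.mul_apply]
    ring
  have hP : ∀ t ∈ Set.uIcc (0:ℝ) 1,
      HasDerivAt (fun t : ℝ => ((t:ℂ))^(m+1) * ((1-(t:ℂ)))^(n+1) * Complex.exp (-c * (t:ℂ)))
      ((((m:ℂ)+1) * (t:ℂ)^m * (1-(t:ℂ))^(n+1) - ((n:ℂ)+1) * (t:ℂ)^(m+1) * (1-(t:ℂ))^n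
        - c * ((t:ℂ)^(m+1) * (1-(t:ℂ))^(n+1))) * Complex.exp (-c * (t:ℂ))) t :=
    fun t _ => (hQ (t:ℂ)).comp_ofReal
  have hcont : Continuous (fun t : ℝ =>
      (((m:ℂ)+1) * (t:ℂ)^m * (1-(t:ℂ))^(n+1) - ((n:ℂ)+1) * (t:ℂ)^(m+1) * (1-(t:ℂ))^n
        - c * ((t:ℂ)^(m+1) * (1-(t:ℂ))^(n+1))) * Complex.exp (-c * (t:ℂ))) := by
    fun_prop
  have hFTC := intervalIntegral.integral_eq_sub_of_hasDerivAt hP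
    (hcont.intervalIntegrable 0 1)
  have hends : (((1:ℝ):ℂ))^(m+1) * ((1-((1:ℝ):ℂ)))^(n+1) * Complex.exp (-c * ((1:ℝ):ℂ))
      - (((0:ℝ):ℂ))^(m+1) * ((1-((0:ℝ):ℂ)))^(n+1) * Complex.exp (-c * ((0:ℝ):ℂ)) = 0 := by
    simp [zero_pow]
  rw [hends] at hFTC
  -- rewrite the integrand as a combination of itg's
  have hsplit : (fun t : ℝ =>
      (((m:ℂ)+1) * (t:ℂ)^m * (1-(t:ℂ))^(n+1) - ((n:ℂ)+1) * (t:ℂ)^(m+1) * (1-(t:ℂ))^n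
        - c * ((t:ℂ)^(m+1) * (1-(t:ℂ))^(n+1))) * Complex.exp (-c * (t:ℂ)))
      = fun t : ℝ => ((m:ℂ)+1) * itg m n z r t
          - ((((m:ℂ)+(n:ℂ)+2) + c) * itg (m+1) n z r t - c * itg (m+2) n z r t) := by
    funext t
    unfold itg
    have h1c : ((1 - t : ℝ) : ℂ) = 1 - (t:ℂ) := by push_cast; ring
    rw [h1c, hc]
    ring
  rw [hsplit] at hFTC
  have i1 := (cont_itg m n z r).intervalIntegrable (μ := MeasureTheory.volume) 0 1
  have i2 := (cont_itg (m+1) n z r).intervalIntegrable (μ := MeasureTheory.volume) 0 1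
  have i3 := (cont_itg (m+2) n z r).intervalIntegrable (μ := MeasureTheory.volume) 0 1
  rw [intervalIntegral.integral_sub ((i1.const_mul _))
      (((i2.const_mul _)).sub ((i3.const_mul _))),
    intervalIntegral.integral_sub ((i2.const_mul _)) ((i3.const_mul _)),
    intervalIntegral.integral_const_mul, intervalIntegral.integral_const_mul,
    intervalIntegral.integral_const_mul] at hFTC
  unfold J
  rw [sub_eq_zero] at hFTC
  rw [hFTC]

end Stmt6

namespace Stmt6
open Complex

lemma realint_pos (m n : ℕ) (c : ℝ) :
    0 < ∫ t in (0:ℝ)..1, t^m * (1-t)^n * Real.exp (-c*t) := by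
  apply intervalIntegral_pos_of_pos_on
  · apply Continuous.intervalIntegrable; fun_prop
  · intro t ht
    have h1 : 0 < t^m := pow_pos ht.1 m
    have h2 : 0 < (1-t)^n := pow_pos (by linarith [ht.2]) n
    positivity
  · norm_num

lemma J_eq_ofReal (m n : ℕ) (z : ℂ) (r : ℝ) (c : ℝ) (h : z * (r:ℂ) = (c:ℂ)) :
    J m n z r = ((∫ t in (0:ℝ)..1, t^m * (1-t)^n * Real.exp (-c*t) : ℝ) : ℂ) := by
  unfold J
  rw [← intervalIntegral.integral_ofReal]
  apply intervalIntegral.integral_congr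
  intro t _
  unfold itg
  rw [h]
  push_cast [Complex.ofReal_exp]
  ring_nf

lemma J_ne_zero_of_real (m n : ℕ) (z : ℂ) (r : ℝ) (c : ℝ) (h : z * (r:ℂ) = (c:ℂ)) :
    J m n z r ≠ 0 := by
  rw [J_eq_ofReal m n z r c h]
  exact_mod_cast (realint_pos m n c).ne'

lemma core (m n : ℕ) (z : ℂ)
    (h : (m < n ∧ 0 ≤ z.re) ∨ (m = n ∧ 0 < z.re)) : J m n z 1 ≠ 0 := by
  intro h0
  by_cases hy : z.im = 0
  · exact J_ne_zero_of_real m n z 1 z.re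
      (by rw [Complex.ofReal_one, mul_one]; exact (Complex.ext_iff.2 ⟨rfl, hy⟩)) h0
  set x := z.re with hx
  set y := z.im with hyy
  set Φ := J m n z with hΦdef
  set Ψ := J (m+1) n z with hΨdef
  set Θ := J (m+2) n z with hΘdef
  have hΦ : ∀ r, HasDerivAt Φ (-z * Ψ r) r := hasDerivAt_J m n z
  have hΨ : ∀ r, HasDerivAt Ψ (-z * Θ r) r := hasDerivAt_J (m+1) n z
  set G : ℝ → ℂ := fun r => -z * (Ψ r * star (Φ r)) with hGdef
  set Gd : ℝ → ℂ := fun r => -z * ((-z * Θ r) * star (Φ r) + Ψ r * star (-z * Ψ r)) with hGddef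
  have hG : ∀ r, HasDerivAt G (Gd r) r := fun r => ((hΨ r).mul ((hΦ r).star)).const_mul (-z)
  have CID : ∀ r : ℝ, (r:ℂ) * Gd r
      = -((((m:ℕ):ℂ)+(n:ℕ)+2) + z*(r:ℂ)) * G r - (((m:ℕ):ℂ)+1) * z * (Φ r * star (Φ r))
        + (r:ℂ) * ((z * Ψ r) * star (z * Ψ r)) := by
    intro r
    have O := keyODE m n z r
    simp only [hGddef, hGdef, star_mul', star_neg]
    linear_combination (z * star (Φ r)) * O
  have RID : ∀ r : ℝ, r * (Gd r).im
      = -(((m:ℝ)+(n:ℝ)+2 + x*r) * (G r).im + y*r*(G r).re)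
        - ((m:ℝ)+1)*y*Complex.normSq (Φ r) := by
    intro r
    have hh := congrArg Complex.im (CID r)
    simp only [Complex.star_def, Complex.mul_conj] at hh
    simp only [Complex.mul_im, Complex.add_im, Complex.sub_im, Complex.neg_im, Complex.add_re,
      Complex.sub_re, Complex.neg_re, Complex.mul_re, Complex.ofReal_re, Complex.ofReal_im,
      Complex.natCast_re, Complex.natCast_im, Complex.one_re, Complex.one_im,
      Complex.re_ofNat, Complex.im_ofNat, mul_zero, zero_mul, add_zero, zero_add, sub_zero] at hh
    rw [← hx, ← hyy] at hh
    linear_combination hh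
  clear CID
  have hx0 : 0 ≤ x := by rcases h with ⟨_, h2⟩ | ⟨_, h2⟩; exact h2; exact le_of_lt h2
  set b : ℕ := m+n+2 with hb
  have him : ∀ r, HasDerivAt (fun r => (G r).im) ((Gd r).im) r := by
    intro r
    simpa [Function.comp_def] using (Complex.imCLM.hasFDerivAt (x := G r)).comp_hasDerivAt r (hG r)
  have hφd : ∀ r, HasDerivAt (fun r => Complex.normSq (Φ r)) (2 * (G r).re) r := by
    intro r
    have h1 : HasDerivAt (fun r => Φ r * star (Φ r))
        ((-z * Ψ r) * star (Φ r) + Φ r * star (-z * Ψ r)) r := (hΦ r).mul ((hΦ r).star)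
    have h2 := (Complex.reCLM.hasFDerivAt (x := Φ r * star (Φ r))).comp_hasDerivAt r h1
    simp only [Function.comp_def, Complex.reCLM_apply, Complex.star_def, Complex.mul_conj,
      Complex.ofReal_re] at h2
    refine h2.congr_deriv (Eq.symm ?_)
    have hsw : Φ r * (starRingEnd ℂ) (-z * Ψ r)
        = (starRingEnd ℂ) ((-z * Ψ r) * (starRingEnd ℂ) (Φ r)) := by
      simp only [map_mul, map_neg, Complex.conj_conj]
      ring
    rw [Complex.add_re, hsw, Complex.conj_re]
    simp only [hGdef, Complex.star_def]
    ring
  have hpb : ∀ r : ℝ, HasDerivAt (fun r : ℝ => r^b) ((((m:ℝ))+n+2) * r^(m+n+1)) r := by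
    intro r
    have := hasDerivAt_pow b r
    rw [hb] at this ⊢
    have h1 : m+n+2-1 = m+n+1 := rfl
    rw [h1] at this
    refine this.congr_deriv (Eq.symm ?_)
    push_cast
    ring
  have hed : ∀ r : ℝ, HasDerivAt (fun r : ℝ => Real.exp (x*r)) (x * Real.exp (x*r)) r := by
    intro r
    simpa [mul_comm] using ((hasDerivAt_id r).const_mul x).exp
  -- derivatives of N and K
  have hN : ∀ r : ℝ, HasDerivAt (fun r => r^b * Real.exp (x*r) * (G r).im)
      (-y * (Real.exp (x*r) * (r^b * (G r).re
        + ((m:ℝ)+1) * r^(m+n+1) * Complex.normSq (Φ r)))) r := by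
    intro r
    have hraw := ((hpb r).mul (hed r)).mul (him r)
    refine hraw.congr_deriv (Eq.symm ?_)
    simp only [Pi.mul_apply]
    have hrid := RID r
    have hpow : r^b = r^(m+n+1) * r := by rw [hb, pow_succ]
    rw [hpow]
    linear_combination (-(r^(m+n+1) * Real.exp (x*r))) * hrid
  have hK : ∀ r : ℝ, HasDerivAt (fun r => r^b * Real.exp (x*r) * Complex.normSq (Φ r))
      (Real.exp (x*r) * (((((m:ℝ)+n+2) * r^(m+n+1)) + x*r^b) * Complex.normSq (Φ r)
        + 2*r^b*(G r).re)) r := by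
    intro r
    have hraw := ((hpb r).mul (hed r)).mul (hφd r)
    refine hraw.congr_deriv ?_
    simp only [Pi.mul_apply]
    ring
  -- continuity facts
  have hGc : Continuous G := by
    have : Differentiable ℝ G := fun r => (hG r).differentiableAt
    exact this.continuous
  have cGre : Continuous fun r => (G r).re := Complex.continuous_re.comp hGc
  have cφ : Continuous fun r => Complex.normSq (Φ r) :=
    Complex.continuous_normSq.comp (cont_J m n z)
  have ce : Continuous fun r : ℝ => Real.exp (x*r) := by fun_prop
  have cq1 : Continuous fun r : ℝ => Real.exp (x*r) * (r^b * (G r).re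
      + ((m:ℝ)+1) * r^(m+n+1) * Complex.normSq (Φ r)) :=
    ce.mul (((continuous_pow b).mul cGre).add
      ((continuous_const.mul (continuous_pow (m+n+1))).mul cφ))
  have cq2 : Continuous fun r : ℝ => Real.exp (x*r)
      * (((((m:ℝ)+n+2) * r^(m+n+1)) + x*r^b) * Complex.normSq (Φ r) + 2*r^b*(G r).re) :=
    ce.mul ((((continuous_const.mul (continuous_pow (m+n+1))).add
      (continuous_const.mul (continuous_pow b))).mul cφ).add
      ((continuous_const.mul (continuous_pow b)).mul cGre))
  -- FTC for N
  have hbne : b ≠ 0 := by omega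
  have hG1 : G 1 = 0 := by rw [hGdef]; simp only [h0]; simp
  have hφ1 : Complex.normSq (Φ 1) = 0 := by rw [h0]; simp
  have hNint : ∫ r in (0:ℝ)..1, (-y * (Real.exp (x*r) * (r^b * (G r).re
      + ((m:ℝ)+1) * r^(m+n+1) * Complex.normSq (Φ r)))) = 0 := by
    rw [intervalIntegral.integral_eq_sub_of_hasDerivAt (fun r _ => hN r)
      ((continuous_const.mul cq1).intervalIntegrable (μ := MeasureTheory.volume) 0 1)]
    simp [hG1, zero_pow hbne]
  have hq1 : ∫ r in (0:ℝ)..1, (Real.exp (x*r) * (r^b * (G r).re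
      + ((m:ℝ)+1) * r^(m+n+1) * Complex.normSq (Φ r))) = 0 := by
    rw [intervalIntegral.integral_const_mul] at hNint
    rcases mul_eq_zero.1 hNint with h1 | h1
    · exact absurd (neg_eq_zero.1 h1) hy
    · exact h1
  have hq2 : ∫ r in (0:ℝ)..1, (Real.exp (x*r)
      * (((((m:ℝ)+n+2) * r^(m+n+1)) + x*r^b) * Complex.normSq (Φ r) + 2*r^b*(G r).re)) = 0 := by
    rw [intervalIntegral.integral_eq_sub_of_hasDerivAt (fun r _ => hK r)
      (cq2.intervalIntegrable (μ := MeasureTheory.volume) 0 1)]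
    simp [hφ1, zero_pow hbne]
  -- the final positive integrand
  set g : ℝ → ℝ := fun r => Real.exp (x*r)
      * (r^(m+n+1) * (((n:ℝ)-m + x*r) * Complex.normSq (Φ r))) with hgdef
  have cg : Continuous g := by
    rw [hgdef]
    exact ce.mul ((continuous_pow (m+n+1)).mul
      (((continuous_const.add (continuous_const.mul continuous_id)).mul cφ)))
  have hgint : ∫ r in (0:ℝ)..1, g r = 0 := by
    have hgeq : ∀ r : ℝ, g r = (Real.exp (x*r)
        * (((((m:ℝ)+n+2) * r^(m+n+1)) + x*r^b) * Complex.normSq (Φ r) + 2*r^b*(G r).re))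
      - 2 * (Real.exp (x*r) * (r^b * (G r).re
        + ((m:ℝ)+1) * r^(m+n+1) * Complex.normSq (Φ r))) := by
      intro r
      rw [hgdef]
      have hpow : r^b = r^(m+n+1) * r := by rw [hb, pow_succ]
      simp only [hpow]
      ring
    rw [show (fun r => g r) = _ from funext hgeq]
    rw [intervalIntegral.integral_sub (cq2.intervalIntegrable 0 1)
      ((cq1.intervalIntegrable 0 1).const_mul 2)]
    rw [intervalIntegral.integral_const_mul, hq1, hq2]
    ring
  -- positivity near 0
  have hΦ0 : Φ 0 ≠ 0 := J_ne_zero_of_real m n z 0 0 (by simp)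
  have hφ0 : 0 < Complex.normSq (Φ 0) := Complex.normSq_pos.2 hΦ0
  have hev : ∀ᶠ r in nhds (0:ℝ), 0 < Complex.normSq (Φ r) :=
    (cφ.continuousAt (x := 0)).eventually_const_lt hφ0
  obtain ⟨ε, hεpos, hball⟩ := Metric.eventually_nhds_iff_ball.1 hev
  set δ : ℝ := min (ε/2) 1 with hδdef
  have hδpos : 0 < δ := lt_min (by linarith) one_pos
  have hδ1 : δ ≤ 1 := min_le_right _ _
  have hφδ : ∀ r ∈ Set.Icc (0:ℝ) δ, 0 < Complex.normSq (Φ r) := by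
    intro r hr
    apply hball
    rw [Metric.mem_ball, Real.dist_eq, sub_zero, _root_.abs_of_nonneg hr.1]
    have : δ ≤ ε/2 := min_le_left _ _
    linarith [hr.2]
  have hcoefpos : ∀ r ∈ Set.Ioo (0:ℝ) δ, 0 < (n:ℝ)-m + x*r := by
    intro r hr
    rcases h with ⟨hmn, _⟩ | ⟨hmn, hxp⟩
    · have : (1:ℝ) ≤ (n:ℝ)-m := by
        have : (m:ℝ) + 1 ≤ n := by exact_mod_cast hmn
        linarith
      nlinarith [hr.1]
    · subst hmn
      simp only [sub_self, zero_add]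
      exact mul_pos hxp hr.1
  have hI1 : 0 < ∫ r in (0:ℝ)..δ, g r := by
    apply intervalIntegral_pos_of_pos_on (cg.intervalIntegrable 0 δ)
    · intro r hr
      rw [hgdef]
      have h1 := hφδ r ⟨le_of_lt hr.1, le_of_lt hr.2⟩
      have h2 := hcoefpos r hr
      have h3 : (0:ℝ) < r^(m+n+1) := pow_pos hr.1 _
      positivity
    · exact hδpos
  have hI2 : 0 ≤ ∫ r in δ..1, g r := by
    apply intervalIntegral.integral_nonneg hδ1
    intro r hr
    rw [hgdef]
    have h1 : (0:ℝ) ≤ r := le_trans (le_of_lt hδpos) hr.1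
    have h2 : (0:ℝ) ≤ (n:ℝ)-m + x*r := by
      rcases h with ⟨hmn, _⟩ | ⟨hmn, hxp⟩
      · have : (m:ℝ) ≤ n := by exact_mod_cast le_of_lt hmn
        nlinarith
      · subst hmn; simp only [sub_self, zero_add]; positivity
    have h3 : (0:ℝ) ≤ Complex.normSq (Φ r) := Complex.normSq_nonneg _
    positivity
  have hadj := intervalIntegral.integral_add_adjacent_intervals
    (cg.intervalIntegrable (μ := MeasureTheory.volume) 0 δ)
    (cg.intervalIntegrable (μ := MeasureTheory.volume) δ 1)
  rw [hgint] at hadj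
  linarith

end Stmt6

namespace Stmt6

lemma J_one_eq (m n : ℕ) (lam : ℂ) :
    J m n lam 1 = ∫ t in (0:ℝ)..1, (t:ℂ)^m * ((1-t:ℝ):ℂ)^n * Complex.exp (-lam * (t:ℂ)) := by
  unfold J
  apply intervalIntegral.integral_congr
  intro t _
  unfold itg
  norm_num

lemma sym (m : ℕ) (lam : ℂ) :
    J m m (-lam) 1 = Complex.exp lam * J m m lam 1 := by
  rw [J_one_eq, J_one_eq]
  set f : ℝ → ℂ := fun u => (u:ℂ)^m * ((1-u:ℝ):ℂ)^m * Complex.exp (-lam * (u:ℂ))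
    * Complex.exp lam with hfdef
  have h1 : ∫ u in (0:ℝ)..1, f (1-u) = ∫ u in (0:ℝ)..1, f u := by
    have := intervalIntegral.integral_comp_sub_left (a := (0:ℝ)) (b := 1) f 1
    simpa using this
  have h2 : ∀ u : ℝ, f (1-u)
      = (u:ℂ)^m * ((1-u:ℝ):ℂ)^m * Complex.exp (-(-lam) * (u:ℂ)) := by
    intro u
    have hexp : Complex.exp (-lam * ((1-u:ℝ):ℂ)) * Complex.exp lam
        = Complex.exp (-(-lam) * (u:ℂ)) := by
      rw [← Complex.exp_add]
      congr 1
      push_cast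
      ring
    have hc1 : ((1-(1-u):ℝ):ℂ) = (u:ℂ) := by push_cast; ring
    have hc2 : (((1-u):ℝ):ℂ) = 1 - (u:ℂ) := by push_cast; ring
    show ((1-u:ℝ):ℂ)^m * ((1-(1-u):ℝ):ℂ)^m * Complex.exp (-lam * ((1-u:ℝ):ℂ))
        * Complex.exp lam = _
    rw [hc1, mul_assoc, hexp, hc2]
    ring
  calc ∫ t in (0:ℝ)..1, (t:ℂ)^m * ((1-t:ℝ):ℂ)^m * Complex.exp (-(-lam) * (t:ℂ))
      = ∫ u in (0:ℝ)..1, f (1-u) := by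
        apply intervalIntegral.integral_congr
        intro u _
        simpa using (h2 u).symm
    _ = ∫ u in (0:ℝ)..1, f u := h1
    _ = Complex.exp lam * ∫ t in (0:ℝ)..1, (t:ℂ)^m * ((1-t:ℝ):ℂ)^m
          * Complex.exp (-lam * (t:ℂ)) := by
        rw [← intervalIntegral.integral_const_mul]
        apply intervalIntegral.integral_congr
        intro u _
        simp only [hfdef]
        ring

end Stmt6

/-- zeros of the Kummer-type integral function: let
`F(λ) = ∫_0^1 t^m (1-t)^n e^{-λ t} dt`. If `m < n`, every zero of `F` has negative real
part; if `m = n`, every zero of `F` has real part zero. -/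
theorem stmt_6 (m n : ℕ) (F : ℂ → ℂ)
    (hF : ∀ lam : ℂ, F lam =
      ∫ t in (0 : ℝ)..1, (t : ℂ) ^ m * ((1 - t : ℝ) : ℂ) ^ n * Complex.exp (-lam * (t : ℂ))) :
    (m < n → ∀ lam : ℂ, F lam = 0 → lam.re < 0) ∧
    (m = n → ∀ lam : ℂ, F lam = 0 → lam.re = 0) := by
  constructor
  · intro hmn lam hlam
    by_contra hre
    push_neg at hre
    apply Stmt6.core m n lam (Or.inl ⟨hmn, hre⟩)
    rw [Stmt6.J_one_eq, ← hF lam]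
    exact hlam
  · intro hmn lam hlam
    subst hmn
    by_contra hre
    rcases lt_or_gt_of_ne hre with hneg | hpos
    · apply Stmt6.core m m (-lam) (Or.inr ⟨rfl, by simpa using hneg⟩)
      rw [Stmt6.sym m lam]
      rw [Stmt6.J_one_eq, ← hF lam, hlam, mul_zero]
    · apply Stmt6.core m m lam (Or.inr ⟨rfl, hpos⟩)
      rw [Stmt6.J_one_eq, ← hF lam]
      exact hlam
end
end

section
/- Let τ > 0, a_1, a_0, α_1, α_0 ∈ ℝ, and define the quasipolynomial Δ(λ) = λ^2 + a_1 λ + a_0 + (α_1 λ + α_0) e^{-λτ}. Let λ0 = σ0 + i θ0 with σ0, θ0 ∈ ℝ and θ0 ≠ 0 (so that τ^2 θ0^2 - sin^2(τ θ0) > 0). Then λ0 and its conjugate λ̄0 are both roots of Δ of multiplicity 2 if and only if: a_1 = -2σ0 - θ0 (2τθ0 - sin(2τθ0)) / (τ^2 θ0^2 - sin^2(τθ0)), a_0 = σ0^2 + [σ0 θ0 (2τθ0 - sin(2τθ0)) + τ^2 θ0^4 + θ0^2 sin^2(τθ0)] / (τ^2 θ0^2 - sin^2(τθ0)), α_1 =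 2 θ0 e^{σ0 τ} (τθ0 cos(τθ0) - sin(τθ0)) / (τ^2 θ0^2 - sin^2(τθ0)), and α_0 = 2 θ0 e^{σ0 τ} [(σ0 - τθ0^2) sin(τθ0) - τ σ0 θ0 cos(τθ0)] / (τ^2 θ0^2 - sin^2(τθ0)). -/
/-- double complex-conjugate roots of a second-order retarded
quasipolynomial: `λ0 = σ0 + iθ0` (with `θ0 ≠ 0`) and its conjugate are roots of
multiplicity 2 of `Δ(λ) = λ² + a₁λ + a₀ + (α₁λ + α₀)e^{-λτ}` if and only if the
coefficients are given by the stated trigonometric formulas. -/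
theorem stmt_7 (τ a1 a0 α1 α0 σ0 θ0 : ℝ) (hτ : 0 < τ) (hθ : θ0 ≠ 0)
    (Δ : ℂ → ℂ)
    (hΔ : ∀ lam : ℂ, Δ lam =
      lam ^ 2 + (a1 : ℂ) * lam + (a0 : ℂ)
        + ((α1 : ℂ) * lam + (α0 : ℂ)) * Complex.exp (-lam * (τ : ℂ)))
    (lam0 : ℂ) (hlam0 : lam0 = (σ0 : ℂ) + (θ0 : ℂ) * Complex.I) :
    ((∀ j < 2, iteratedDeriv j Δ lam0 = 0) ∧ iteratedDeriv 2 Δ lam0 ≠ 0 ∧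
        (∀ j < 2, iteratedDeriv j Δ (starRingEnd ℂ lam0) = 0) ∧
        iteratedDeriv 2 Δ (starRingEnd ℂ lam0) ≠ 0)
    ↔ (a1 = -2 * σ0 - θ0 * (2 * τ * θ0 - Real.sin (2 * τ * θ0)) /
          (τ ^ 2 * θ0 ^ 2 - Real.sin (τ * θ0) ^ 2) ∧
        a0 = σ0 ^ 2 + (σ0 * θ0 * (2 * τ * θ0 - Real.sin (2 * τ * θ0))
            + τ ^ 2 * θ0 ^ 4 + θ0 ^ 2 * Real.sin (τ * θ0) ^ 2) /
          (τ ^ 2 * θ0 ^ 2 - Real.sin (τ * θ0) ^ 2) ∧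
        α1 = 2 * θ0 * Real.exp (σ0 * τ) * (τ * θ0 * Real.cos (τ * θ0) - Real.sin (τ * θ0)) /
          (τ ^ 2 * θ0 ^ 2 - Real.sin (τ * θ0) ^ 2) ∧
        α0 = 2 * θ0 * Real.exp (σ0 * τ) *
            ((σ0 - τ * θ0 ^ 2) * Real.sin (τ * θ0) - τ * σ0 * θ0 * Real.cos (τ * θ0)) /
          (τ ^ 2 * θ0 ^ 2 - Real.sin (τ * θ0) ^ 2)) := by
  -- abbreviations
  set s := Real.sin (τ * θ0) with hs
  set c := Real.cos (τ * θ0) with hc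
  set er := Real.exp (-(σ0 * τ)) with her
  set Ex := Real.exp (σ0 * τ) with hEx
  have hsc : s ^ 2 + c ^ 2 = 1 := Real.sin_sq_add_cos_sq _
  have hτθ : τ * θ0 ≠ 0 := mul_ne_zero hτ.ne' hθ
  have hDpos : 0 < τ ^ 2 * θ0 ^ 2 - s ^ 2 := by
    have h := Real.sin_sq_lt_sq hτθ
    rw [← hs] at h
    nlinarith [h]
  have hD : τ ^ 2 * θ0 ^ 2 - s ^ 2 ≠ 0 := ne_of_gt hDpos
  have hE1 : er * Ex = 1 := by rw [her, hEx, ← Real.exp_add]; simp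
  -- derivative functions
  have hd1 : ∀ z : ℂ, HasDerivAt Δ
      (2*z + (a1:ℂ) + ((α1:ℂ) - (τ:ℂ)*((α1:ℂ)*z+(α0:ℂ))) * Complex.exp (-z*(τ:ℂ))) z := by
    intro z
    rw [show Δ = fun lam : ℂ => lam ^ 2 + (a1 : ℂ) * lam + (a0 : ℂ)
        + ((α1 : ℂ) * lam + (α0 : ℂ)) * Complex.exp (-lam * (τ : ℂ)) from funext hΔ]
    have hlin : HasDerivAt (fun w : ℂ => -w * (τ:ℂ)) (-(τ:ℂ)) z := by
      simpa using ((hasDerivAt_id z).neg.mul_const (τ:ℂ))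
    have hexp : HasDerivAt (fun w : ℂ => Complex.exp (-w * (τ:ℂ)))
        (Complex.exp (-z*(τ:ℂ)) * (-(τ:ℂ))) z :=
      (Complex.hasDerivAt_exp (-z*(τ:ℂ))).comp z hlin
    have h := (((hasDerivAt_pow 2 z).add ((hasDerivAt_id z).const_mul (a1:ℂ))).add_const
        (a0:ℂ)).add
        ((((hasDerivAt_id z).const_mul (α1:ℂ)).add_const (α0:ℂ)).mul hexp)
    have hv : ((2:ℕ) * z ^ (2 - 1) + (a1:ℂ) * 1 +
        ((α1:ℂ) * 1 * Complex.exp (-z * (τ:ℂ))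
          + ((α1:ℂ) * id z + (α0:ℂ)) * (Complex.exp (-z * (τ:ℂ)) * -(τ:ℂ))))
        = 2*z + (a1:ℂ) + ((α1:ℂ) - (τ:ℂ)*((α1:ℂ)*z+(α0:ℂ))) * Complex.exp (-z*(τ:ℂ)) := by
      simp [id]; ring
    rw [← hv]; exact h
  have hd2 : ∀ z : ℂ, HasDerivAt
      (fun w : ℂ => 2*w + (a1:ℂ) + ((α1:ℂ) - (τ:ℂ)*((α1:ℂ)*w+(α0:ℂ))) * Complex.exp (-w*(τ:ℂ)))
      ((2:ℂ) + (-2*(τ:ℂ)*(α1:ℂ) + (τ:ℂ)^2*((α1:ℂ)*z+(α0:ℂ))) * Complex.exp (-z*(τ:ℂ))) z := by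
    intro z
    have hlin : HasDerivAt (fun w : ℂ => -w * (τ:ℂ)) (-(τ:ℂ)) z := by
      simpa using ((hasDerivAt_id z).neg.mul_const (τ:ℂ))
    have hexp : HasDerivAt (fun w : ℂ => Complex.exp (-w * (τ:ℂ)))
        (Complex.exp (-z*(τ:ℂ)) * (-(τ:ℂ))) z :=
      (Complex.hasDerivAt_exp (-z*(τ:ℂ))).comp z hlin
    have h := (((hasDerivAt_id z).const_mul (2:ℂ)).add_const (a1:ℂ)).add
        ((((((hasDerivAt_id z).const_mul (α1:ℂ)).add_const (α0:ℂ)).const_mul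
          (τ:ℂ)).const_sub (α1:ℂ)).mul hexp)
    have hv : ((2:ℂ) * 1 +
        (-((τ:ℂ) * ((α1:ℂ) * 1)) * Complex.exp (-z * (τ:ℂ))
          + ((α1:ℂ) - (τ:ℂ) * ((α1:ℂ) * id z + (α0:ℂ))) * (Complex.exp (-z * (τ:ℂ)) * -(τ:ℂ))))
        = (2:ℂ) + (-2*(τ:ℂ)*(α1:ℂ) + (τ:ℂ)^2*((α1:ℂ)*z+(α0:ℂ))) * Complex.exp (-z*(τ:ℂ)) := by
      simp [id]; ring
    rw [← hv]
    exact h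
  -- iterated derivative formulas
  have hder1 : deriv Δ = fun z : ℂ =>
      2*z + (a1:ℂ) + ((α1:ℂ) - (τ:ℂ)*((α1:ℂ)*z+(α0:ℂ))) * Complex.exp (-z*(τ:ℂ)) :=
    funext fun z => (hd1 z).deriv
  have hit1 : ∀ w : ℂ, iteratedDeriv 1 Δ w =
      2*w + (a1:ℂ) + ((α1:ℂ) - (τ:ℂ)*((α1:ℂ)*w+(α0:ℂ))) * Complex.exp (-w*(τ:ℂ)) := by
    intro w; rw [iteratedDeriv_one, hder1]
  have hit2 : ∀ w : ℂ, iteratedDeriv 2 Δ w =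
      (2:ℂ) + (-2*(τ:ℂ)*(α1:ℂ) + (τ:ℂ)^2*((α1:ℂ)*w+(α0:ℂ))) * Complex.exp (-w*(τ:ℂ)) := by
    intro w
    rw [show (2:ℕ) = 1 + 1 from rfl, iteratedDeriv_succ]
    rw [show deriv (iteratedDeriv 1 Δ) = deriv (fun z : ℂ =>
        2*z + (a1:ℂ) + ((α1:ℂ) - (τ:ℂ)*((α1:ℂ)*z+(α0:ℂ))) * Complex.exp (-z*(τ:ℂ))) from by
      rw [iteratedDeriv_one, hder1]]
    exact (hd2 w).deriv
  -- conjugation equivariance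
  have hcj : ∀ z : ℂ, -(starRingEnd ℂ z) * (τ:ℂ) = starRingEnd ℂ (-z * (τ:ℂ)) := by
    intro z; simp [map_mul, Complex.conj_ofReal]
  have hconj0 : ∀ z : ℂ, Δ (starRingEnd ℂ z) = starRingEnd ℂ (Δ z) := by
    intro z
    rw [hΔ, hΔ, hcj, Complex.exp_conj]
    simp [map_add, map_mul, map_pow, Complex.conj_ofReal]
  have hconj1 : ∀ z : ℂ,
      (2*(starRingEnd ℂ z) + (a1:ℂ) + ((α1:ℂ) - (τ:ℂ)*((α1:ℂ)*(starRingEnd ℂ z)+(α0:ℂ)))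
          * Complex.exp (-(starRingEnd ℂ z)*(τ:ℂ)))
        = starRingEnd ℂ (2*z + (a1:ℂ) + ((α1:ℂ) - (τ:ℂ)*((α1:ℂ)*z+(α0:ℂ)))
          * Complex.exp (-z*(τ:ℂ))) := by
    intro z
    rw [hcj, Complex.exp_conj]
    simp [map_add, map_mul, map_sub, map_ofNat, Complex.conj_ofReal]
  have hconj2 : ∀ z : ℂ,
      ((2:ℂ) + (-2*(τ:ℂ)*(α1:ℂ) + (τ:ℂ)^2*((α1:ℂ)*(starRingEnd ℂ z)+(α0:ℂ)))
          * Complex.exp (-(starRingEnd ℂ z)*(τ:ℂ)))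
        = starRingEnd ℂ ((2:ℂ) + (-2*(τ:ℂ)*(α1:ℂ) + (τ:ℂ)^2*((α1:ℂ)*z+(α0:ℂ)))
          * Complex.exp (-z*(τ:ℂ))) := by
    intro z
    rw [hcj, Complex.exp_conj]
    simp [map_add, map_mul, map_sub, map_neg, map_pow, map_ofNat, Complex.conj_ofReal]
  -- reduce LHS to conditions at lam0 only
  have hLHS : ((∀ j < 2, iteratedDeriv j Δ lam0 = 0) ∧ iteratedDeriv 2 Δ lam0 ≠ 0 ∧
        (∀ j < 2, iteratedDeriv j Δ (starRingEnd ℂ lam0) = 0) ∧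
        iteratedDeriv 2 Δ (starRingEnd ℂ lam0) ≠ 0)
      ↔ (Δ lam0 = 0
          ∧ (2*lam0 + (a1:ℂ) + ((α1:ℂ) - (τ:ℂ)*((α1:ℂ)*lam0+(α0:ℂ)))
              * Complex.exp (-lam0*(τ:ℂ)) = 0)
          ∧ ((2:ℂ) + (-2*(τ:ℂ)*(α1:ℂ) + (τ:ℂ)^2*((α1:ℂ)*lam0+(α0:ℂ)))
              * Complex.exp (-lam0*(τ:ℂ)) ≠ 0)) := by
    constructor
    · rintro ⟨h, h2, -, -⟩
      refine ⟨by simpa using h 0 (by norm_num), ?_, ?_⟩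
      · have := h 1 (by norm_num); rwa [hit1 lam0] at this
      · rwa [hit2 lam0] at h2
    · rintro ⟨h0, h1, h2⟩
      refine ⟨?_, ?_, ?_, ?_⟩
      · intro j hj
        interval_cases j
        · simpa using h0
        · rw [hit1 lam0]; exact h1
      · rw [hit2 lam0]; exact h2
      · intro j hj
        interval_cases j
        · simp only [iteratedDeriv_zero]
          rw [hconj0, h0, map_zero]
        · rw [hit1 (starRingEnd ℂ lam0), hconj1 lam0, h1, map_zero]
      · rw [hit2 (starRingEnd ℂ lam0), hconj2 lam0]
        intro hzero
        exact h2 (by have := congrArg (starRingEnd ℂ) hzero; simpa using this)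
  rw [hLHS, hlam0]
  -- the exponential at lam0
  have hexp0 : Complex.exp (-((σ0:ℂ) + (θ0:ℂ)*Complex.I) * (τ:ℂ))
      = (er:ℂ) * ((c:ℂ) - (s:ℂ)*Complex.I) := by
    rw [hs, hc, her]
    rw [show -((σ0:ℂ) + (θ0:ℂ)*Complex.I) * (τ:ℂ)
        = ((-(σ0*τ) : ℝ) : ℂ) + ((-(τ*θ0) : ℝ) : ℂ) * Complex.I by push_cast; ring]
    rw [Complex.exp_add, Complex.exp_mul_I, ← Complex.ofReal_exp, ← Complex.ofReal_cos,
      ← Complex.ofReal_sin, Real.cos_neg, Real.sin_neg]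
    push_cast; ring
  have hiff : ∀ A B : ℝ, ((A:ℂ) + (B:ℂ)*Complex.I = 0 ↔ (A = 0 ∧ B = 0)) := by
    intro A B
    constructor
    · intro h
      constructor
      · have := congrArg Complex.re h; simpa using this
      · have := congrArg Complex.im h; simpa using this
    · rintro ⟨hA, hB⟩; rw [hA, hB]; simp
  -- split the three complex conditions into real and imaginary parts
  have hsplit0 : (Δ ((σ0:ℂ) + (θ0:ℂ)*Complex.I) = 0)
      ↔ ((σ0^2 - θ0^2 + a1*σ0 + a0 + er*((α1*σ0+α0)*c + α1*θ0*s) = 0)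
          ∧ (2*σ0*θ0 + a1*θ0 + er*(α1*θ0*c - (α1*σ0+α0)*s) = 0)) := by
    rw [hΔ, hexp0]
    rw [show ((σ0:ℂ) + (θ0:ℂ)*Complex.I) ^ 2 + (a1:ℂ) * ((σ0:ℂ) + (θ0:ℂ)*Complex.I) + (a0:ℂ)
        + ((α1:ℂ) * ((σ0:ℂ) + (θ0:ℂ)*Complex.I) + (α0:ℂ)) * ((er:ℂ) * ((c:ℂ) - (s:ℂ)*Complex.I))
        = ((σ0^2 - θ0^2 + a1*σ0 + a0 + er*((α1*σ0+α0)*c + α1*θ0*s) : ℝ) : ℂ)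
          + ((2*σ0*θ0 + a1*θ0 + er*(α1*θ0*c - (α1*σ0+α0)*s) : ℝ) : ℂ) * Complex.I from by
      apply Complex.ext <;> simp [pow_two, Complex.add_re, Complex.mul_re, Complex.mul_im] <;> ring]
    exact hiff _ _
  have hsplit1 : (2*((σ0:ℂ) + (θ0:ℂ)*Complex.I) + (a1:ℂ)
        + ((α1:ℂ) - (τ:ℂ)*((α1:ℂ)*((σ0:ℂ) + (θ0:ℂ)*Complex.I)+(α0:ℂ)))
          * Complex.exp (-((σ0:ℂ) + (θ0:ℂ)*Complex.I)*(τ:ℂ)) = 0)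
      ↔ ((2*σ0 + a1 + er*((α1*(1-τ*σ0) - τ*α0)*c - τ*α1*θ0*s) = 0)
          ∧ (2*θ0 + er*(-(τ*α1*θ0*c) - (α1*(1-τ*σ0) - τ*α0)*s) = 0)) := by
    rw [hexp0]
    rw [show 2*((σ0:ℂ) + (θ0:ℂ)*Complex.I) + (a1:ℂ)
        + ((α1:ℂ) - (τ:ℂ)*((α1:ℂ)*((σ0:ℂ) + (θ0:ℂ)*Complex.I)+(α0:ℂ)))
          * ((er:ℂ) * ((c:ℂ) - (s:ℂ)*Complex.I))
        = ((2*σ0 + a1 + er*((α1*(1-τ*σ0) - τ*α0)*c - τ*α1*θ0*s) : ℝ) : ℂ)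
          + ((2*θ0 + er*(-(τ*α1*θ0*c) - (α1*(1-τ*σ0) - τ*α0)*s) : ℝ) : ℂ) * Complex.I from by
      apply Complex.ext <;> simp [pow_two, Complex.add_re, Complex.mul_re, Complex.mul_im] <;> ring]
    exact hiff _ _
  have hsplit2 : ((2:ℂ) + (-2*(τ:ℂ)*(α1:ℂ) + (τ:ℂ)^2*((α1:ℂ)*((σ0:ℂ) + (θ0:ℂ)*Complex.I)+(α0:ℂ)))
          * Complex.exp (-((σ0:ℂ) + (θ0:ℂ)*Complex.I)*(τ:ℂ)) = 0)
      ↔ ((2 + er*((-2*τ*α1 + τ^2*(α1*σ0+α0))*c + τ^2*α1*θ0*s) = 0)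
          ∧ (er*(τ^2*α1*θ0*c - (-2*τ*α1 + τ^2*(α1*σ0+α0))*s) = 0)) := by
    rw [hexp0]
    rw [show (2:ℂ) + (-2*(τ:ℂ)*(α1:ℂ) + (τ:ℂ)^2*((α1:ℂ)*((σ0:ℂ) + (θ0:ℂ)*Complex.I)+(α0:ℂ)))
          * ((er:ℂ) * ((c:ℂ) - (s:ℂ)*Complex.I))
        = ((2 + er*((-2*τ*α1 + τ^2*(α1*σ0+α0))*c + τ^2*α1*θ0*s) : ℝ) : ℂ)
          + ((er*(τ^2*α1*θ0*c - (-2*τ*α1 + τ^2*(α1*σ0+α0))*s) : ℝ) : ℂ) * Complex.I from by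
      apply Complex.ext <;> simp [pow_two, Complex.add_re, Complex.mul_re, Complex.mul_im] <;> ring]
    exact hiff _ _
  rw [hsplit0, hsplit1, ne_eq, hsplit2]
  -- rewrite sin(2τθ0)
  have h2x : Real.sin (2*τ*θ0) = 2*s*c := by
    rw [show 2*τ*θ0 = 2*(τ*θ0) by ring, Real.sin_two_mul, ← hs, ← hc]
  -- main algebraic equivalence between the four real equations and the cleared formulas
  have hmain : ((σ0^2 - θ0^2 + a1*σ0 + a0 + er*((α1*σ0+α0)*c + α1*θ0*s) = 0)
        ∧ (2*σ0*θ0 + a1*θ0 + er*(α1*θ0*c - (α1*σ0+α0)*s) = 0)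
        ∧ (2*σ0 + a1 + er*((α1*(1-τ*σ0) - τ*α0)*c - τ*α1*θ0*s) = 0)
        ∧ (2*θ0 + er*(-(τ*α1*θ0*c) - (α1*(1-τ*σ0) - τ*α0)*s) = 0))
      ↔ ((a1*(τ^2*θ0^2 - s^2) = -2*σ0*(τ^2*θ0^2 - s^2) - θ0*(2*τ*θ0 - 2*s*c))
          ∧ (a0*(τ^2*θ0^2 - s^2) = σ0^2*(τ^2*θ0^2 - s^2) + σ0*θ0*(2*τ*θ0-2*s*c)
              + τ^2*θ0^4 + θ0^2*s^2)
          ∧ (er*α1*(τ^2*θ0^2 - s^2) = 2*θ0*(τ*θ0*c - s))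
          ∧ (er*α0*(τ^2*θ0^2 - s^2) = 2*θ0*((σ0 - τ*θ0^2)*s - τ*σ0*θ0*c))) := by
    constructor
    · rintro ⟨h1, h2, h3, h4⟩
      have hu : er*α1*(τ^2*θ0^2 - s^2) = 2*θ0*(τ*θ0*c - s) := by
        linear_combination (τ*s)*h2 - (τ*s*θ0)*h3 - (τ*θ0*c - s)*h4 - (τ^2*θ0^2*er*α1)*hsc
      have hP : er*(α1*σ0+α0)*(τ^2*θ0^2 - s^2) = -2*τ*θ0^3*s := by
        linear_combination (τ*θ0*c+s)*h2 - θ0*(τ*θ0*c+s)*h3 + (τ*θ0^2*s)*h4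
          - (τ^2*θ0^2*er*(α1*σ0+α0))*hsc
      have hv : er*α0*(τ^2*θ0^2 - s^2) = 2*θ0*((σ0 - τ*θ0^2)*s - τ*σ0*θ0*c) := by
        linear_combination hP - σ0*hu
      have hC1' : θ0*(a1*(τ^2*θ0^2 - s^2))
          = θ0*(-2*σ0*(τ^2*θ0^2 - s^2) - θ0*(2*τ*θ0 - 2*s*c)) := by
        linear_combination (τ^2*θ0^2 - s^2)*h2 - (θ0*c)*hu + s*hP - (2*τ*θ0^3)*hsc
      have hC1 : a1*(τ^2*θ0^2 - s^2) = -2*σ0*(τ^2*θ0^2 - s^2) - θ0*(2*τ*θ0 - 2*s*c) :=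
        mul_left_cancel₀ hθ hC1'
      have hC2 : a0*(τ^2*θ0^2 - s^2) = σ0^2*(τ^2*θ0^2 - s^2) + σ0*θ0*(2*τ*θ0-2*s*c)
          + τ^2*θ0^4 + θ0^2*s^2 := by
        linear_combination (τ^2*θ0^2 - s^2)*h1 - σ0*hC1 - c*hP - (θ0*s)*hu
      exact ⟨hC1, hC2, hu, hv⟩
    · rintro ⟨hC1, hC2, hu, hv⟩
      have hP : er*(α1*σ0+α0)*(τ^2*θ0^2 - s^2) = -2*τ*θ0^3*s := by
        linear_combination hv + σ0*hu
      constructor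
      · have h1' : (τ^2*θ0^2 - s^2)*(σ0^2 - θ0^2 + a1*σ0 + a0 + er*((α1*σ0+α0)*c + α1*θ0*s))
            = (τ^2*θ0^2 - s^2)*0 := by
          linear_combination hC2 + σ0*hC1 + c*hP + (θ0*s)*hu
        exact mul_left_cancel₀ hD h1'
      refine ⟨?_, ?_, ?_⟩
      · have h2' : (θ0*(τ^2*θ0^2 - s^2))*(2*σ0*θ0 + a1*θ0 + er*(α1*θ0*c - (α1*σ0+α0)*s))
            = (θ0*(τ^2*θ0^2 - s^2))*0 := by
          linear_combination θ0^2*hC1 + (θ0^2*c)*hu - (θ0*s)*hP + (2*τ*θ0^4)*hsc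
        exact mul_left_cancel₀ (mul_ne_zero hθ hD) h2'
      · have h3' : (τ^2*θ0^2 - s^2)*(2*σ0 + a1 + er*((α1*(1-τ*σ0) - τ*α0)*c - τ*α1*θ0*s))
            = (τ^2*θ0^2 - s^2)*0 := by
          linear_combination hC1 + (c*(1-τ*σ0))*hu - (c*τ)*hv - (τ*θ0*s)*hu + (2*τ*θ0^2)*hsc
        exact mul_left_cancel₀ hD h3'
      · have h4' : (τ^2*θ0^2 - s^2)*(2*θ0 + er*(-(τ*α1*θ0*c) - (α1*(1-τ*σ0) - τ*α0)*s))
            = (τ^2*θ0^2 - s^2)*0 := by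
          linear_combination (-(τ*θ0*c))*hu - (s*(1-τ*σ0))*hu + (τ*s)*hv - (2*τ^2*θ0^3)*hsc
        exact mul_left_cancel₀ hD h4'
  -- the second derivative is nonzero given the cleared formulas for α1, α0
  have hF2ne : (er*α1*(τ^2*θ0^2 - s^2) = 2*θ0*(τ*θ0*c - s))
      → (er*α0*(τ^2*θ0^2 - s^2) = 2*θ0*((σ0 - τ*θ0^2)*s - τ*σ0*θ0*c))
      → ¬((2 + er*((-2*τ*α1 + τ^2*(α1*σ0+α0))*c + τ^2*α1*θ0*s) = 0)
          ∧ (er*(τ^2*α1*θ0*c - (-2*τ*α1 + τ^2*(α1*σ0+α0))*s) = 0)) := by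
    rintro hu hv ⟨hR, hM⟩
    have hcs2 : (τ*θ0*c - s)^2 = 0 := by
      linear_combination (-(τ^2*θ0^2 - s^2)/2)*hR + ((c*(-2*τ+τ^2*σ0) + τ^2*θ0*s)/2)*hu
        + (τ^2*c/2)*hv - (τ^2*θ0^2)*hsc
    have hcs : τ*θ0*c - s = 0 := (pow_eq_zero_iff two_ne_zero).mp hcs2
    have hfin : 2*τ*θ0*(τ^2*θ0^2 - s^2) = 0 := by
      linear_combination (τ^2*θ0^2 - s^2)*hM - (τ^2*θ0*c + 2*τ*s - τ^2*σ0*s)*hu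
        + (s*τ^2)*hv - (2*τ^3*θ0^3)*hsc - (2*τ*θ0*s)*hcs
    have hne : 2*τ*θ0*(τ^2*θ0^2 - s^2) ≠ 0 := by
      apply mul_ne_zero (mul_ne_zero (mul_ne_zero two_ne_zero hτ.ne') hθ) hD
    exact hne hfin
  -- equivalences between the stated formulas and the cleared formulas
  have hD2 : θ0 ^ 2 * τ ^ 2 - s ^ 2 ≠ 0 := by rwa [mul_comm]
  have hfa1 : (a1 = -2*σ0 - θ0*(2*τ*θ0 - Real.sin (2*τ*θ0)) / (τ^2*θ0^2 - s^2))
      ↔ a1*(τ^2*θ0^2 - s^2) = -2*σ0*(τ^2*θ0^2 - s^2) - θ0*(2*τ*θ0 - 2*s*c) := by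
    rw [h2x]
    constructor
    · intro h; rw [h]; field_simp; try ring
    · intro h; field_simp; try linear_combination h
  have hfa0 : (a0 = σ0^2 + (σ0*θ0*(2*τ*θ0 - Real.sin (2*τ*θ0)) + τ^2*θ0^4 + θ0^2*s^2)
        / (τ^2*θ0^2 - s^2))
      ↔ a0*(τ^2*θ0^2 - s^2) = σ0^2*(τ^2*θ0^2 - s^2) + σ0*θ0*(2*τ*θ0-2*s*c)
          + τ^2*θ0^4 + θ0^2*s^2 := by
    rw [h2x]
    constructor
    · intro h; rw [h]; field_simp; try ring
    · intro h; field_simp; try linear_combination h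
  have hfα1 : (α1 = 2*θ0*Ex*(τ*θ0*c - s) / (τ^2*θ0^2 - s^2))
      ↔ er*α1*(τ^2*θ0^2 - s^2) = 2*θ0*(τ*θ0*c - s) := by
    constructor
    · intro h; rw [h]; field_simp; linear_combination (τ*θ0*c - s)*hE1
    · intro h; field_simp; linear_combination Ex*h - (α1*(τ^2*θ0^2 - s^2))*hE1
  have hfα0 : (α0 = 2*θ0*Ex*((σ0 - τ*θ0^2)*s - τ*σ0*θ0*c) / (τ^2*θ0^2 - s^2))
      ↔ er*α0*(τ^2*θ0^2 - s^2) = 2*θ0*((σ0 - τ*θ0^2)*s - τ*σ0*θ0*c) := by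
    constructor
    · intro h; rw [h]; field_simp; linear_combination ((σ0 - τ*θ0^2)*s - τ*σ0*θ0*c)*hE1
    · intro h; field_simp; linear_combination Ex*h - (α0*(τ^2*θ0^2 - s^2))*hE1
  -- final assembly
  constructor
  · rintro ⟨hz0, hz1, -⟩
    obtain ⟨hC1, hC2, hC3, hC4⟩ := hmain.mp ⟨hz0.1, hz0.2, hz1.1, hz1.2⟩
    exact ⟨hfa1.mpr hC1, hfa0.mpr hC2, hfα1.mpr hC3, hfα0.mpr hC4⟩
  · rintro ⟨ha1, ha0, hb1, hb0⟩
    have hC1 := hfa1.mp ha1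
    have hC2 := hfa0.mp ha0
    have hC3 := hfα1.mp hb1
    have hC4 := hfα0.mp hb0
    obtain ⟨h1, h2, h3, h4⟩ := hmain.mpr ⟨hC1, hC2, hC3, hC4⟩
    exact ⟨⟨h1, h2⟩, ⟨h3, h4⟩, hF2ne hC3 hC4⟩
end

section
/- Let n ≥ 1, let P_0(λ) = a_n λ^n + a_{n-1} λ^{n-1} + ... + a_1 λ + a_0 be a real polynomial of degree n (a_n ≠ 0), let P_1(λ) = b_{n-1} λ^{n-1} + ... + b_1 λ + b_0 be a real polynomial of degree at most n-1, let τ > 0, and define the quasipolynomial Δ(λ) = P_0(λ) + P_1(λ) e^{-λτ}. For k ∈ ℕ define the polynomial R_k(λ; s) = Σ_{i=0}^{k} C(k,i) P_0^{(i)}(λ) s^{k-i}, where P_0^{(i)} is the i-th derivative of P_0. If Δ admits a real root λ0 of multiplicity at least n, then for every λ ∈ ℂ: Δ(λ) = (λ - λ0)^n ( a_n + ∫_0^1 e^{-(λ-λ0) τ t} · τ R_{n-1}(λ0; τ t) / (n-1)! dt ). -/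
open Polynomial intervalIntegral

noncomputable def Tc (c : ℂ) (Q : ℂ[X]) : ℂ[X] := derivative Q + C c * Q

lemma deriv_polyexp (Q : ℂ[X]) (c : ℂ) (z : ℂ) :
    deriv (fun z => Q.eval z * Complex.exp (c*z)) z
      = (Tc c Q).eval z * Complex.exp (c*z) := by
  have h1 : HasDerivAt (fun z : ℂ => Q.eval z * Complex.exp (c*z))
      (Q.derivative.eval z * Complex.exp (c*z) + Q.eval z * (Complex.exp (c*z) * c)) z := by
    simpa using (Q.hasDerivAt z).fun_mul (((hasDerivAt_id z).const_mul c).cexp)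
  rw [h1.deriv, Tc]
  simp [eval_add, eval_mul]
  ring

lemma iteratedDeriv_polyexp (Q0 Q1 : ℂ[X]) (c : ℂ) (j : ℕ) :
    iteratedDeriv j (fun z => Q0.eval z + Q1.eval z * Complex.exp (c*z)) =
      fun z => (derivative^[j] Q0).eval z + ((Tc c)^[j] Q1).eval z * Complex.exp (c*z) := by
  induction j with
  | zero => simp
  | succ j ih =>
    rw [iteratedDeriv_succ, ih]
    funext z
    have h1 : HasDerivAt (fun z : ℂ => (derivative^[j] Q0).eval z
        + ((Tc c)^[j] Q1).eval z * Complex.exp (c*z))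
        ((derivative^[j+1] Q0).eval z + (Tc c ((Tc c)^[j] Q1)).eval z * Complex.exp (c*z)) z := by
      have h2 := ((((Tc c)^[j] Q1).hasDerivAt z).fun_mul (((hasDerivAt_id z).const_mul c).cexp))
      have h3 := (((derivative^[j] Q0)).hasDerivAt z)
      have := h3.fun_add h2
      refine this.congr_deriv ?_
      rw [Function.iterate_succ_apply', Tc]
      simp [eval_add, eval_mul]
      ring
    rw [h1.deriv, Function.iterate_succ_apply', Function.iterate_succ_apply']

lemma binom_op (c : ℂ) (j : ℕ) (Q : ℂ[X]) :
    derivative^[j] Q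
      = ∑ i ∈ Finset.range (j+1), ((j.choose i : ℂ) * c^(j-i)) • (Tc (-c))^[i] Q := by
  set Dl : Module.End ℂ ℂ[X] := Polynomial.derivative
  set Tl : Module.End ℂ ℂ[X] := Dl - c • 1 with hTl
  have hfun : (⇑Tl : ℂ[X] → ℂ[X]) = Tc (-c) := by
    funext P
    show Dl P - c • P = _
    simp [Tc, Dl, Polynomial.smul_eq_C_mul, sub_eq_add_neg]
  have hD : Dl = Tl + c • 1 := by rw [hTl]; abel
  have hcomm : Commute Tl (c • (1 : Module.End ℂ ℂ[X])) := by
    have : c • (1 : Module.End ℂ ℂ[X]) = algebraMap ℂ _ c := by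
      simp [Algebra.algebraMap_eq_smul_one]
    rw [this]
    exact (Algebra.commutes c Tl).symm
  have hpow := hcomm.add_pow j
  have happ : Dl ^ j = ∑ i ∈ Finset.range (j+1),
      Tl ^ i * (c • (1:Module.End ℂ ℂ[X])) ^ (j - i) * (j.choose i : Module.End ℂ ℂ[X]) := by
    rw [hD, hpow]
  have h1 : derivative^[j] Q = (Dl ^ j) Q := by
    rw [Module.End.pow_apply]
  rw [h1, happ, LinearMap.sum_apply]
  refine Finset.sum_congr rfl fun i _ => ?_
  rw [Module.End.mul_apply, Module.End.mul_apply]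
  have h2 : ((j.choose i : Module.End ℂ ℂ[X])) Q = (j.choose i : ℂ) • Q := by
    simp [Module.End.natCast_apply, Nat.cast_smul_eq_nsmul]
  rw [h2]
  have h3 : ((c • (1:Module.End ℂ ℂ[X])) ^ (j-i)) = c^(j-i) • 1 := by
    rw [_root_.smul_pow, one_pow]
  rw [h3]
  simp only [LinearMap.map_smul, LinearMap.smul_apply, Module.End.one_apply]
  rw [Module.End.pow_apply, hfun]
  rw [smul_smul, mul_comm]

lemma cont_aux (z : ℂ) (m : ℕ) : Continuous (fun t : ℝ => Complex.exp (-z*t) * (t:ℂ)^m) := by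
  fun_prop

lemma hasDeriv_aux (z : ℂ) (m : ℕ) (t : ℝ) :
    HasDerivAt (fun t : ℝ => Complex.exp (-z*t) * (t:ℂ)^(m+1))
      (-z * (Complex.exp (-z*t) * (t:ℂ)^(m+1)) + (m+1 : ℂ) * (Complex.exp (-z*t) * (t:ℂ)^m)) t := by
  have e1 : HasDerivAt (fun w : ℂ => Complex.exp (-z*w) * w^(m+1))
      (Complex.exp (-z*(t:ℂ)) * (-z*1) * (t:ℂ)^(m+1)
        + Complex.exp (-z*(t:ℂ)) * ((m+1 : ℕ) * (t:ℂ)^m)) (t:ℂ) := by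
    have h1 : HasDerivAt (fun w : ℂ => Complex.exp (-z*w)) (Complex.exp (-z*(t:ℂ)) * (-z*1)) (t:ℂ) := by
      simpa using (((hasDerivAt_id (t:ℂ)).const_mul (-z)).cexp)
    have h2 := hasDerivAt_pow (m+1) (t:ℂ)
    simpa [Nat.add_sub_cancel, mul_comm, mul_assoc, mul_left_comm] using h1.fun_mul h2
  have := e1.comp_ofReal
  convert this using 1
  push_cast
  ring

lemma int_rec (z : ℂ) (m : ℕ) :
    -z * (∫ t in (0:ℝ)..1, Complex.exp (-z*t) * (t:ℂ)^(m+1))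
      + (m+1 : ℂ) * ∫ t in (0:ℝ)..1, Complex.exp (-z*t) * (t:ℂ)^m = Complex.exp (-z) := by
  have hint : ∀ k : ℕ, IntervalIntegrable (fun t : ℝ => Complex.exp (-z*t) * (t:ℂ)^k)
      MeasureTheory.volume 0 1 := fun k => (cont_aux z k).intervalIntegrable _ _
  have h := integral_eq_sub_of_hasDerivAt (fun t _ => hasDeriv_aux z m t)
    (((hint (m+1)).const_mul (-z)).add ((hint m).const_mul ((m:ℂ)+1)))
  rw [integral_add ((hint (m+1)).const_mul (-z)) ((hint m).const_mul ((m:ℂ)+1)),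
    integral_const_mul, integral_const_mul] at h
  rw [h]
  simp

lemma int_base (z : ℂ) :
    z * (∫ t in (0:ℝ)..1, Complex.exp (-z*t) * (t:ℂ)^(0:ℕ)) = 1 - Complex.exp (-z) := by
  have hd : ∀ t : ℝ, HasDerivAt (fun t : ℝ => Complex.exp (-z*t))
      (-z * (Complex.exp (-z*t) * (t:ℂ)^(0:ℕ))) t := by
    intro t
    have e1 : HasDerivAt (fun w : ℂ => Complex.exp (-z*w)) (Complex.exp (-z*(t:ℂ)) * (-z*1)) (t:ℂ) := by
      simpa using (((hasDerivAt_id (t:ℂ)).const_mul (-z)).cexp)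
    have := e1.comp_ofReal
    convert this using 1
    simp
    ring
  have hint : IntervalIntegrable (fun t : ℝ => Complex.exp (-z*t) * (t:ℂ)^(0:ℕ))
      MeasureTheory.volume 0 1 := (cont_aux z 0).intervalIntegrable _ _
  have h := integral_eq_sub_of_hasDerivAt (fun t _ => hd t) (hint.const_mul (-z))
  rw [integral_const_mul] at h
  simp only [Complex.ofReal_one, Complex.ofReal_zero, mul_zero, Complex.exp_zero, mul_one] at h
  linear_combination -h

lemma key_integral (z : ℂ) (m : ℕ) :
    z^(m+1) * ∫ t in (0:ℝ)..1, Complex.exp (-z*t) * (t:ℂ)^m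
      = (m.factorial : ℂ) * (1 - Complex.exp (-z) * ∑ k ∈ Finset.range (m+1), z^k / (k.factorial : ℂ)) := by
  induction m with
  | zero => simpa using int_base z
  | succ m ih =>
    have hrec := int_rec z m
    have hz : z * ∫ t in (0:ℝ)..1, Complex.exp (-z*t) * (t:ℂ)^(m+1)
        = ((m:ℂ)+1) * (∫ t in (0:ℝ)..1, Complex.exp (-z*t) * (t:ℂ)^m) - Complex.exp (-z) := by
      linear_combination -hrec
    have : z^(m+2) * ∫ t in (0:ℝ)..1, Complex.exp (-z*t) * (t:ℂ)^(m+1)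
        = z^(m+1) * (z * ∫ t in (0:ℝ)..1, Complex.exp (-z*t) * (t:ℂ)^(m+1)) := by ring
    rw [this, hz]
    rw [Finset.sum_range_succ (f := fun k => z^k / (k.factorial : ℂ)) (m+1)]
    have hfac : ((m+1).factorial : ℂ) = ((m:ℂ)+1) * (m.factorial : ℂ) := by
      push_cast [Nat.factorial_succ]; ring
    have hne : ((m+1).factorial : ℂ) ≠ 0 :=
      Nat.cast_ne_zero.mpr (Nat.factorial_ne_zero _)
    have h2 : ((m+1).factorial : ℂ) * (Complex.exp (-z) * (z^(m+1) / ((m+1).factorial : ℂ)))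
        = Complex.exp (-z) * z^(m+1) := by field_simp
    linear_combination ((m:ℂ)+1) * ih + h2
      - (1 - Complex.exp (-z) * ∑ k ∈ Finset.range (m+1), z^k / (k.factorial : ℂ)) * hfac

lemma eval_iterate_deriv_smul (p : ℂ[X]) (i : ℕ) (x : ℂ) :
    (derivative^[i] p).eval x = (i.factorial : ℂ) * (hasseDeriv i p).eval x := by
  rw [← Polynomial.factorial_smul_hasseDeriv]
  show ((i.factorial • hasseDeriv i) p).eval x = _
  rw [LinearMap.smul_apply, eval_smul, nsmul_eq_mul]

lemma taylor_sum (p : ℂ[X]) (d : ℕ) (hd : p.natDegree ≤ d) (x μ : ℂ) :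
    p.eval (x + μ)
      = ∑ i ∈ Finset.range (d+1), ((derivative^[i] p).eval x / (i.factorial : ℂ)) * μ^i := by
  have h1 : p.eval (x + μ) = (taylor x p).eval μ := by
    rw [taylor_eval, add_comm]
  rw [h1, eval_eq_sum_range' (lt_of_le_of_lt (by rwa [natDegree_taylor]) (Nat.lt_succ_self d))]
  refine Finset.sum_congr rfl fun i _ => ?_
  rw [taylor_coeff, eval_iterate_deriv_smul]
  have : (i.factorial : ℂ) ≠ 0 := Nat.cast_ne_zero.mpr (Nat.factorial_ne_zero _)
  field_simp

lemma deriv_top_eval (p : ℂ[X]) (n : ℕ) (hn : p.natDegree ≤ n) (x : ℂ) :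
    (derivative^[n] p).eval x = (n.factorial : ℂ) * p.coeff n := by
  rw [eval_iterate_deriv_smul]
  congr 1
  have : hasseDeriv n p = C (p.coeff n) := by
    ext k
    rw [hasseDeriv_coeff, coeff_C]
    rcases Nat.eq_zero_or_pos k with hk | hk
    · subst hk; simp
    · have : p.coeff (k + n) = 0 := coeff_eq_zero_of_natDegree_lt (by omega)
      simp [this, hk.ne']
  rw [this, eval_C]

lemma sum_triangle {M : Type*} [AddCommMonoid M] (n : ℕ) (f : ℕ → ℕ → M) :
    ∑ i ∈ Finset.range n, ∑ k ∈ Finset.range (n - i), f i k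
      = ∑ j ∈ Finset.range n, ∑ i ∈ Finset.range (j+1), f i (j - i) := by
  rw [Finset.sum_sigma' (Finset.range n) (fun i => Finset.range (n - i)) (fun i k => f i k),
    Finset.sum_sigma' (Finset.range n) (fun j => Finset.range (j+1)) (fun j i => f i (j - i))]
  refine Finset.sum_nbij' (fun p => ⟨p.1 + p.2, p.1⟩) (fun p => ⟨p.2, p.1 - p.2⟩) ?_ ?_ ?_ ?_ ?_
  · rintro ⟨i, k⟩ h
    simp only [Finset.mem_sigma, Finset.mem_range] at *
    omega
  · rintro ⟨j, i⟩ h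
    simp only [Finset.mem_sigma, Finset.mem_range] at *
    omega
  · rintro ⟨i, k⟩ h
    simp only [Finset.mem_sigma, Finset.mem_range] at h
    simp [Nat.add_sub_cancel_left]
  · rintro ⟨j, i⟩ h
    simp only [Finset.mem_sigma, Finset.mem_range] at h
    simp only []
    congr 1 <;> omega
  · rintro ⟨i, k⟩ h
    simp only [Finset.mem_sigma, Finset.mem_range] at h
    simp [Nat.add_sub_cancel_left]

lemma evalmap (q : Polynomial ℝ) (x : ℝ) :
    (q.map (algebraMap ℝ ℂ)).eval (x:ℂ) = ((q.eval x : ℝ) : ℂ) := by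
  rw [Polynomial.eval_map]
  exact Polynomial.eval₂_at_apply _ x
/-- factorization of a quasipolynomial with an `n`-multiple real root:
if `Δ(λ) = P₀(λ) + P₁(λ)e^{-λτ}` (with `deg P₀ = n`, `deg P₁ ≤ n - 1`) has a real root
`lam0` of multiplicity at least `n`, then
`Δ(λ) = (λ - lam0)^n (aₙ + ∫_0^1 e^{-(λ-lam0)τt} τ R_{n-1}(lam0; τt)/(n-1)! dt)`,
where `R_k(λ; s) = Σ_{i≤k} C(k,i) P₀^{(i)}(λ) s^{k-i}` and `aₙ` is the leading
coefficient of `P₀`. -/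
theorem stmt_9 (n : ℕ) (hn : 1 ≤ n) (P0 P1 : Polynomial ℝ)
    (hdeg0 : P0.natDegree = n) (hdeg1 : P1.degree < (n : ℕ)) (τ : ℝ) (hτ : 0 < τ)
    (Δ : ℂ → ℂ)
    (hΔ : ∀ lam : ℂ, Δ lam =
      Polynomial.aeval lam P0 + Polynomial.aeval lam P1 * Complex.exp (-lam * (τ : ℂ)))
    (R : ℕ → ℝ → ℝ → ℝ)
    (hR : ∀ (k : ℕ) (lam s : ℝ), R k lam s =
      ∑ i ∈ Finset.range (k + 1),
        (k.choose i : ℝ) * ((Polynomial.derivative^[i] P0).eval lam) * s ^ (k - i))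
    (lam0 : ℝ) (hroot : ∀ j < n, iteratedDeriv j Δ (lam0 : ℂ) = 0) :
    ∀ lam : ℂ, Δ lam = (lam - (lam0 : ℂ)) ^ n *
      ((P0.leadingCoeff : ℂ) + ∫ t in (0 : ℝ)..1,
        Complex.exp (-(lam - (lam0 : ℂ)) * (τ : ℂ) * (t : ℂ)) *
          ((τ * R (n - 1) lam0 (τ * t) / ((n - 1).factorial : ℝ) : ℝ) : ℂ)) := by
  intro lam
  set c : ℂ := -(τ:ℂ) with hc
  set Q0 : ℂ[X] := P0.map (algebraMap ℝ ℂ) with hQ0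
  set Q1 : ℂ[X] := P1.map (algebraMap ℝ ℂ) with hQ1
  set Pc : ℕ → ℂ := fun i => (((Polynomial.derivative^[i] P0).eval lam0 : ℝ) : ℂ) with hPcdef
  have hPc : ∀ i : ℕ, (derivative^[i] Q0).eval (lam0:ℂ) = Pc i := by
    intro i
    rw [hQ0, Polynomial.iterate_derivative_map, evalmap]
  have hQ0deg : Q0.natDegree = n := by
    rw [hQ0, Polynomial.natDegree_map_eq_of_injective
      (algebraMap ℝ ℂ).injective, hdeg0]
  have hQ1deg : Q1.natDegree ≤ n - 1 := by
    have h1 : P1.natDegree ≤ n - 1 := by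
      by_cases h : P1 = 0
      · simp [h]
      · have := (Polynomial.natDegree_lt_iff_degree_lt h).mpr hdeg1
        omega
    calc Q1.natDegree ≤ P1.natDegree := Polynomial.natDegree_map_le
    _ ≤ n - 1 := h1
  have hΔfun : Δ = fun w : ℂ => Q0.eval w + Q1.eval w * Complex.exp (c*w) := by
    funext w
    rw [hΔ w, show -w*(τ:ℂ) = c*w by rw [hc]; ring]
    simp only [Polynomial.aeval_def, hQ0, hQ1, Polynomial.eval_map]
  -- root conditions
  have hroot' : ∀ j < n, (derivative^[j] Q0).eval (lam0:ℂ)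
      + ((Tc c)^[j] Q1).eval (lam0:ℂ) * Complex.exp (c*(lam0:ℂ)) = 0 := by
    intro j hj
    have h := hroot j hj
    rw [hΔfun, iteratedDeriv_polyexp] at h
    exact h
  set E : ℂ := Complex.exp (c * (lam0:ℂ)) with hE
  have key1 : ∀ i < n, ((Tc c)^[i] Q1).eval (lam0:ℂ) * E = -(Pc i) := by
    intro i hi
    have h := hroot' i hi
    rw [hPc] at h
    linear_combination h
  have key2 : ∀ j < n, (derivative^[j] Q1).eval (lam0:ℂ) * E
      = -∑ i ∈ Finset.range (j+1), (j.choose i : ℂ) * Pc i * (τ:ℂ)^(j-i) := by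
    intro j hj
    have hb := binom_op (τ:ℂ) j Q1
    rw [show -(τ:ℂ) = c from rfl] at hb
    rw [hb, Polynomial.eval_finset_sum]
    simp_rw [Polynomial.eval_smul, smul_eq_mul]
    rw [Finset.sum_mul, ← Finset.sum_neg_distrib]
    refine Finset.sum_congr rfl fun i hi => ?_
    have hi' : i < n := by
      have := Finset.mem_range.mp hi; omega
    have := key1 i hi'
    calc ((j.choose i : ℂ) * (τ:ℂ)^(j-i) * ((Tc c)^[i] Q1).eval (lam0:ℂ)) * E
        = (j.choose i : ℂ) * (τ:ℂ)^(j-i) * (((Tc c)^[i] Q1).eval (lam0:ℂ) * E) := by ring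
      _ = (j.choose i : ℂ) * (τ:ℂ)^(j-i) * (-(Pc i)) := by rw [this]
      _ = -((j.choose i : ℂ) * Pc i * (τ:ℂ)^(j-i)) := by ring
  -- setup
  set μ : ℂ := lam - (lam0:ℂ) with hmu
  set z : ℂ := μ * (τ:ℂ) with hzdef
  set e : ℂ := Complex.exp (-z) with hedef
  set F : ℂ := (((n-1).factorial : ℕ) : ℂ) with hF
  set Bc : ℕ → ℂ := fun i => (((n-1).choose i : ℕ) : ℂ) * Pc i * (τ:ℂ)^(n-i) / F with hBc
  set Ii : ℕ → ℂ := fun m => ∫ t in (0:ℝ)..1, Complex.exp (-z*t) * (t:ℂ)^m with hIi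
  have hFne : F ≠ 0 := by rw [hF]; exact_mod_cast Nat.cast_ne_zero.mpr (Nat.factorial_ne_zero _)
  -- Step 1 : the integral as a finite sum
  have hJ : (∫ t in (0:ℝ)..1, Complex.exp (-μ * (τ:ℂ) * (t:ℂ)) *
        ((τ * R (n - 1) lam0 (τ * t) / ((n - 1).factorial : ℝ) : ℝ) : ℂ))
      = ∑ i ∈ Finset.range n, Bc i * Ii (n-1-i) := by
    rw [intervalIntegral.integral_congr
      (g := fun t : ℝ => ∑ i ∈ Finset.range n, Bc i * (Complex.exp (-z*(t:ℂ)) * (t:ℂ)^(n-1-i)))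
      ?_]
    · rw [intervalIntegral.integral_finset_sum
        (fun i _ => (continuous_const.fun_mul (cont_aux z (n-1-i))).intervalIntegrable _ _)]
      exact Finset.sum_congr rfl fun i _ => intervalIntegral.integral_const_mul _ _
    · intro t _
      show Complex.exp (-μ * (τ:ℂ) * (t:ℂ)) * _ = _
      rw [hR]
      have hargs : -μ * (τ:ℂ) * (t:ℂ) = -z*(t:ℂ) := by rw [hzdef]; ring
      rw [hargs, show n - 1 + 1 = n from by omega]
      push_cast
      rw [Finset.mul_sum, Finset.sum_div, Finset.mul_sum]
      refine Finset.sum_congr rfl fun i hi => ?_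
      have hi' : i < n := Finset.mem_range.mp hi
      simp only [hBc, hPcdef, hF]
      rw [show n - i = (n-1-i)+1 from by omega]
      push_cast
      ring
  -- Step 2 : per-term evaluation
  have hterm : ∀ i ∈ Finset.range n, μ^n * (Bc i * Ii (n-1-i))
      = Pc i / (i.factorial:ℂ) * μ^i
        * (1 - e * ∑ k ∈ Finset.range (n-i), z^k/(k.factorial:ℂ)) := by
    intro i hi
    have hi' : i < n := Finset.mem_range.mp hi
    have hkey := key_integral z (n-1-i)
    rw [show n-1-i+1 = n-i from by omega] at hkey
    have hμsplit : μ^n = μ^i * μ^(n-i) := by rw [← pow_add]; congr 1; omega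
    have hfactN := Nat.choose_mul_factorial_mul_factorial (show i ≤ n-1 by omega)
    have hfact : (((n-1).choose i : ℕ) : ℂ) * (i.factorial:ℂ) * ((n-1-i).factorial:ℂ) = F := by
      rw [hF]; exact_mod_cast congrArg (Nat.cast : ℕ → ℂ) hfactN
    have hchne : (((n-1).choose i : ℕ) : ℂ) ≠ 0 := by
      exact_mod_cast Nat.cast_ne_zero.mpr (Nat.choose_pos (show i ≤ n-1 by omega)).ne'
    have hine : (i.factorial:ℂ) ≠ 0 := Nat.cast_ne_zero.mpr (Nat.factorial_ne_zero _)
    have hmne : ((n-1-i).factorial:ℂ) ≠ 0 := Nat.cast_ne_zero.mpr (Nat.factorial_ne_zero _)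
    calc μ^n * (Bc i * Ii (n-1-i))
        = ((((n-1).choose i : ℕ):ℂ) * Pc i / F) * μ^i * (z^(n-i) * Ii (n-1-i)) := by
          simp only [hBc]
          rw [hμsplit, show z^(n-i) = μ^(n-i) * (τ:ℂ)^(n-i) from by rw [hzdef, mul_pow]]
          ring
      _ = ((((n-1).choose i : ℕ):ℂ) * Pc i / F) * μ^i
            * (((n-1-i).factorial:ℂ) * (1 - e * ∑ k ∈ Finset.range (n-i), z^k/(k.factorial:ℂ))) := by
          rw [hkey]
      _ = Pc i / (i.factorial:ℂ) * μ^i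
            * (1 - e * ∑ k ∈ Finset.range (n-i), z^k/(k.factorial:ℂ)) := by
          rw [← hfact]; field_simp
  -- Step 3 : sum the terms
  have hsum : μ^n * (∑ i ∈ Finset.range n, Bc i * Ii (n-1-i))
      = (∑ i ∈ Finset.range n, Pc i / (i.factorial:ℂ) * μ^i)
        - ∑ i ∈ Finset.range n, Pc i / (i.factorial:ℂ) * μ^i
            * (e * ∑ k ∈ Finset.range (n-i), z^k/(k.factorial:ℂ)) := by
    rw [Finset.mul_sum, Finset.sum_congr rfl hterm, ← Finset.sum_sub_distrib]
    exact Finset.sum_congr rfl fun i _ => by ring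
  -- Step 4 : Taylor expansion of Q0
  have hA : (P0.leadingCoeff : ℂ) * μ^n + ∑ i ∈ Finset.range n, Pc i / (i.factorial:ℂ) * μ^i
      = Q0.eval lam := by
    have ht := taylor_sum Q0 n (le_of_eq hQ0deg) (lam0:ℂ) μ
    rw [show (lam0:ℂ) + μ = lam from by rw [hmu]; ring] at ht
    rw [ht, Finset.sum_range_succ, deriv_top_eval Q0 n (le_of_eq hQ0deg)]
    have hnfac : (n.factorial : ℂ) ≠ 0 := Nat.cast_ne_zero.mpr (Nat.factorial_ne_zero _)
    have hcoeff : Q0.coeff n = (P0.leadingCoeff : ℂ) := by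
      rw [hQ0, Polynomial.coeff_map, Polynomial.leadingCoeff, hdeg0]
      rfl
    rw [hcoeff]
    simp only [hPc]
    rw [mul_comm ((n.factorial:ℂ)) _, mul_div_assoc, div_self hnfac, mul_one, add_comm]
  -- Step 5 : the subtracted double sum is the P1-part
  have hexp : e * E = Complex.exp (c*lam) := by
    rw [hedef, hE, ← Complex.exp_add]
    congr 1
    rw [hzdef, hc, hmu]
    ring
  have hB : (∑ i ∈ Finset.range n, Pc i / (i.factorial:ℂ) * μ^i
        * (e * ∑ k ∈ Finset.range (n-i), z^k/(k.factorial:ℂ)))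
      = -(e * E) * Q1.eval lam := by
    have step1 : (∑ i ∈ Finset.range n, Pc i / (i.factorial:ℂ) * μ^i
          * (e * ∑ k ∈ Finset.range (n-i), z^k/(k.factorial:ℂ)))
        = e * ∑ i ∈ Finset.range n, ∑ k ∈ Finset.range (n-i),
            (Pc i * (τ:ℂ)^k / ((i.factorial:ℂ)*(k.factorial:ℂ))) * μ^(i+k) := by
      rw [Finset.mul_sum]
      refine Finset.sum_congr rfl fun i _ => ?_
      rw [Finset.mul_sum, Finset.mul_sum, Finset.mul_sum]
      refine Finset.sum_congr rfl fun k _ => ?_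
      rw [pow_add, show z^k = μ^k * (τ:ℂ)^k from by rw [hzdef, mul_pow]]
      ring
    rw [step1, sum_triangle n
      (fun i k => (Pc i * (τ:ℂ)^k / ((i.factorial:ℂ)*(k.factorial:ℂ))) * μ^(i+k))]
    have step2 : ∀ j ∈ Finset.range n,
        ∑ i ∈ Finset.range (j+1),
            (Pc i * (τ:ℂ)^(j-i) / ((i.factorial:ℂ)*((j-i).factorial:ℂ))) * μ^(i+(j-i))
        = -((derivative^[j] Q1).eval (lam0:ℂ) * E) / (j.factorial:ℂ) * μ^j := by
      intro j hj
      have hj' : j < n := Finset.mem_range.mp hj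
      have hstep : ∑ i ∈ Finset.range (j+1),
            (Pc i * (τ:ℂ)^(j-i) / ((i.factorial:ℂ)*((j-i).factorial:ℂ))) * μ^(i+(j-i))
          = (∑ i ∈ Finset.range (j+1), (j.choose i : ℂ) * Pc i * (τ:ℂ)^(j-i))
              / (j.factorial:ℂ) * μ^j := by
        rw [Finset.sum_div, Finset.sum_mul]
        refine Finset.sum_congr rfl fun i hi => ?_
        have hij : i ≤ j := by have := Finset.mem_range.mp hi; omega
        rw [show i + (j-i) = j from by omega]
        have hfct : ((j.choose i : ℕ):ℂ) * (i.factorial:ℂ) * ((j-i).factorial:ℂ)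
            = (j.factorial:ℂ) := by
          exact_mod_cast congrArg (Nat.cast : ℕ → ℂ)
            (Nat.choose_mul_factorial_mul_factorial hij)
        have h1 : (i.factorial:ℂ) ≠ 0 := Nat.cast_ne_zero.mpr (Nat.factorial_ne_zero _)
        have h2 : ((j-i).factorial:ℂ) ≠ 0 := Nat.cast_ne_zero.mpr (Nat.factorial_ne_zero _)
        have h3 : ((j.choose i : ℕ):ℂ) ≠ 0 := by
          exact_mod_cast Nat.cast_ne_zero.mpr (Nat.choose_pos hij).ne'
        rw [← hfct]
        field_simp
      rw [hstep]
      have hk2 : (∑ i ∈ Finset.range (j+1), (j.choose i : ℂ) * Pc i * (τ:ℂ)^(j-i))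
          = -((derivative^[j] Q1).eval (lam0:ℂ) * E) := by
        linear_combination key2 j hj'
      rw [hk2]
    rw [Finset.sum_congr rfl step2]
    have htay1 := taylor_sum Q1 (n-1) hQ1deg (lam0:ℂ) μ
    rw [show n-1+1 = n from by omega,
      show (lam0:ℂ) + μ = lam from by rw [hmu]; ring] at htay1
    rw [htay1, Finset.mul_sum, Finset.mul_sum]
    refine Finset.sum_congr rfl fun j _ => ?_
    ring
  -- Final assembly
  rw [hΔfun]
  show Q0.eval lam + Q1.eval lam * Complex.exp (c*lam) = _
  rw [hJ]
  linear_combination -hsum - hA + hB - Q1.eval lam * hexp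
end

section
/- For α ∈ ℝ define the quasipolynomial Δ(λ; α) = λ + α(1 - e^{-λ}). Then: (i) Δ(0; α) = 0 for every α ∈ ℝ, and 0 is a root of Δ(·; α) of multiplicity at least 2 if and only if α = -1; (ii) if α < -1, then Δ(·; α) has a real root x > 0 (so the system is unstable); (iii) if α > -1, then every root λ ∈ ℂ of Δ(·; α) with λ ≠ 0 satisfies Re(λ) < 0. -/
/-- scalar delay equation `ẏ + α(y(t) - y(t-1)) = 0`: for
`Δ(λ; α) = λ + α(1 - e^{-λ})`: (i) `0` is always a root, and it has multiplicity at
least 2 iff `α = -1`; (ii) for `α < -1` there is a positive real root; (iii) for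
`α > -1` every nonzero root has negative real part. -/
theorem stmt_11 (Δ : ℝ → ℂ → ℂ)
    (hΔ : ∀ (α : ℝ) (lam : ℂ), Δ α lam = lam + (α : ℂ) * (1 - Complex.exp (-lam))) :
    (∀ α : ℝ, Δ α 0 = 0) ∧
    (∀ α : ℝ, (∀ j < 2, iteratedDeriv j (Δ α) 0 = 0) ↔ α = -1) ∧
    (∀ α : ℝ, α < -1 → ∃ x : ℝ, 0 < x ∧ Δ α (x : ℂ) = 0) ∧
    (∀ α : ℝ, -1 < α → ∀ lam : ℂ, lam ≠ 0 → Δ α lam = 0 → lam.re < 0) := by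
  have hroot : ∀ α : ℝ, Δ α 0 = 0 := by
    intro α; rw [hΔ]; simp
  refine ⟨hroot, ?_, ?_, ?_⟩
  · -- part (i) multiplicity
    intro α
    have hfun : Δ α = fun lam => lam + (α : ℂ) * (1 - Complex.exp (-lam)) :=
      funext (hΔ α)
    have hder : ∀ z : ℂ, HasDerivAt (Δ α) (1 + (α : ℂ) * Complex.exp (-z)) z := by
      intro z
      rw [hfun]
      have h1 : HasDerivAt (fun w : ℂ => Complex.exp (-w)) (-Complex.exp (-z)) z := by
        simpa [Function.comp_def] using (Complex.hasDerivAt_exp (-z)).comp z (hasDerivAt_neg z)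
      have h2 : HasDerivAt (fun w : ℂ => (α : ℂ) * (1 - Complex.exp (-w)))
          ((α : ℂ) * Complex.exp (-z)) z := by
        simpa using (((hasDerivAt_const z (1:ℂ)).sub h1).const_mul (α : ℂ))
      simpa [Pi.add_def] using (hasDerivAt_id z).add h2
    have hd1 : iteratedDeriv 1 (Δ α) 0 = 1 + (α : ℂ) := by
      rw [iteratedDeriv_one, (hder 0).deriv]
      simp
    constructor
    · intro h
      have := h 1 (by norm_num)
      rw [hd1] at this
      have : (α : ℂ) = -1 := by linear_combination this
      exact_mod_cast this
    · intro h j hj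
      interval_cases j
      · simpa [iteratedDeriv_zero] using hroot α
      · rw [hd1, h]; norm_num
  · -- part (ii)
    intro α hα
    set g : ℝ → ℝ := fun x => x + α * (1 - Real.exp (-x)) with hg
    have hcont : Continuous g := by fun_prop
    set a : ℝ := (1 + α) / (2 * α) with ha
    have ha0 : 0 < a := by
      apply div_pos_of_neg_of_neg <;> linarith
    have ha1 : a < 1/2 := by
      rw [ha, div_lt_iff_of_neg (by linarith : 2*α < 0)]
      nlinarith
    have hga : g a < 0 := by
      have hbnd := Real.abs_exp_sub_one_sub_id_le (x := -a) (by
        rw [abs_neg, abs_of_pos ha0]; linarith)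
      have h1 : Real.exp (-a) ≤ 1 - a + a^2 := by
        have := abs_le.1 hbnd
        nlinarith [this.2]
      have h2 : 1 - Real.exp (-a) ≥ a - a^2 := by linarith
      have h3 : α * (1 - Real.exp (-a)) ≤ α * (a - a^2) := by
        exact mul_le_mul_of_nonpos_left h2 (by linarith)
      have hαne : α ≠ 0 := by linarith
      have hprod : 1 + α - α * a = (1 + α) / 2 := by
        rw [ha]; field_simp; ring
      have hle : g a ≤ a * ((1 + α) / 2) := by
        rw [hg]; simp only
        calc a + α * (1 - Real.exp (-a)) ≤ a + α * (a - a^2) := by linarith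
          _ = a * (1 + α - α * a) := by ring
          _ = a * ((1 + α) / 2) := by rw [hprod]
      exact hle.trans_lt (mul_neg_of_pos_of_neg ha0 (by linarith))
    have hgb : 0 < g (1 - α) := by
      have hE : Real.exp (-(1 - α)) > 0 := Real.exp_pos _
      have h1 : 1 - Real.exp (-(1-α)) ≤ 1 := by linarith
      have h2 : α * (1 - Real.exp (-(1-α))) ≥ α := by nlinarith
      rw [hg]; simp only; linarith
    have hab : a ≤ 1 - α := by linarith
    have hmem : (0:ℝ) ∈ Set.Icc (g a) (g (1 - α)) := ⟨hga.le, hgb.le⟩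
    obtain ⟨x, hx, hgx⟩ := intermediate_value_Icc hab hcont.continuousOn hmem
    refine ⟨x, lt_of_lt_of_le ha0 hx.1, ?_⟩
    rw [hΔ]
    have : ((g x : ℝ) : ℂ) = (x:ℂ) + (α:ℂ) * (1 - Complex.exp (-(x:ℂ))) := by
      rw [hg]; push_cast [Complex.ofReal_exp]; ring
    rw [← this, hgx]; simp
  · -- part (iii)
    intro α hα lam hne h0
    by_contra hre
    push_neg at hre
    set x := lam.re with hx
    set y := lam.im with hy
    rw [hΔ] at h0
    -- real and imaginary parts of the equation
    have hexp_re : (Complex.exp (-lam)).re = Real.exp (-x) * Real.cos y := by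
      rw [Complex.exp_re]; simp [hx, hy, Real.cos_neg]
    have hexp_im : (Complex.exp (-lam)).im = -(Real.exp (-x) * Real.sin y) := by
      rw [Complex.exp_im]; simp [hx, hy, Real.sin_neg]
    have hRe : x + α * (1 - Real.exp (-x) * Real.cos y) = 0 := by
      have := congrArg Complex.re h0
      simpa [Complex.add_re, Complex.mul_re, Complex.sub_re, hexp_re, hexp_im] using this
    have hIm : y + α * (Real.exp (-x) * Real.sin y) = 0 := by
      have := congrArg Complex.im h0
      simpa [Complex.add_im, Complex.mul_im, Complex.sub_im, hexp_re, hexp_im] using this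
    have hEx : Real.exp (-x) ≤ 1 := Real.exp_le_one_iff.2 (by linarith)
    have hExpos : 0 < Real.exp (-x) := Real.exp_pos _
    rcases le_or_gt 0 α with hα0 | hα0
    · -- α ≥ 0 : modulus argument
      -- (x+α)^2 + y^2 = α^2 exp(-x)^2 ≤ α^2
      have hsq : (x + α)^2 + y^2 = α^2 * Real.exp (-x)^2 := by
        have hre2 : x + α = α * (Real.exp (-x) * Real.cos y) := by linarith
        have him2 : y = -(α * (Real.exp (-x) * Real.sin y)) := by linarith
        have hpy : Real.sin y ^ 2 + Real.cos y ^ 2 = 1 := Real.sin_sq_add_cos_sq y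
        linear_combination (x + α + α * (Real.exp (-x) * Real.cos y)) * hre2 +
          (y - α * (Real.exp (-x) * Real.sin y)) * him2 +
          α ^ 2 * Real.exp (-x) ^ 2 * hpy
      have hE2 : Real.exp (-x) ^ 2 ≤ 1 := by nlinarith
      have hkey : x ^ 2 + y ^ 2 ≤ 0 := by nlinarith [mul_nonneg hα0 hre, sq_nonneg α]
      have hx2 : x ^ 2 = 0 := le_antisymm (by nlinarith [sq_nonneg y]) (sq_nonneg x)
      have hy2 : y ^ 2 = 0 := le_antisymm (by nlinarith [sq_nonneg x]) (sq_nonneg y)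
      exact hne (Complex.ext (by simpa using pow_eq_zero_iff (n := 2) (by norm_num) |>.1 hx2)
        (by simpa using pow_eq_zero_iff (n := 2) (by norm_num) |>.1 hy2))
    · -- -1 < α < 0
      have hy0 : y = 0 := by
        by_contra hy0
        have hs := Real.abs_sin_le_abs (x := y)
        have : |y| = |α| * Real.exp (-x) * |Real.sin y| := by
          have hy' : y = -α * (Real.exp (-x) * Real.sin y) := by linarith
          conv_lhs => rw [hy']
          rw [abs_mul, abs_mul, abs_neg, abs_of_pos hExpos]; ring
        have hαabs : |α| < 1 := abs_lt.2 ⟨hα, by linarith⟩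
        have hylt : |y| < |y| := by
          calc |y| = |α| * Real.exp (-x) * |Real.sin y| := this
            _ ≤ |α| * 1 * |y| := by
                apply mul_le_mul (by nlinarith [abs_nonneg α]) hs (abs_nonneg _)
                positivity
            _ < 1 * 1 * |y| := by
                have : 0 < |y| := abs_pos.2 hy0
                nlinarith [abs_nonneg α]
            _ = |y| := by ring
        exact absurd hylt (lt_irrefl _)
      -- now lam is real, x > 0
      have hx0 : x ≠ 0 := by
        intro h; exact hne (Complex.ext (by simpa using h) (by simpa using hy0))
      have hxpos : 0 < x := lt_of_le_of_ne hre (Ne.symm hx0)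
      rw [hy0, Real.cos_zero] at hRe
      -- x = -α (1 - e^{-x}) < x since -α < 1 and 1 - e^{-x} < x
      have hlt : 1 - Real.exp (-x) < x := by
        have := Real.add_one_lt_exp (x := -x) (by simpa using hx0)
        linarith
      have hpos : 0 < 1 - Real.exp (-x) := by
        have : Real.exp (-x) < 1 := Real.exp_lt_one_iff.2 (by linarith)
        linarith
      nlinarith
end

section
/- For α ∈ ℝ define the quasipolynomial Δ(λ; α) = λ^2 - α^2 + 2α^2 e^{-λ} - α^2 e^{-2λ}. Then: (i) for every λ ∈ ℂ and α ∈ ℝ, Δ(λ; α) = (λ - α(1 - e^{-λ}))(λ + α(1 - e^{-λ})); (ii) for α = 1, the point λ = 0 is a root of Δ(·; 1) of multiplicity exactly 3, and every root λ ∈ ℂ of Δ(·; 1) with λ ≠ 0 satisfies Re(λ) < 0 (the triple root at the origin is dominant). -/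
private lemma abs_sin_lt_abs {y : ℝ} (hy : y ≠ 0) : |Real.sin y| < |y| := by
  rcases hy.lt_or_gt with h | h
  · rw [abs_of_neg h, abs_lt]
    constructor
    · simpa using Real.sin_lt (neg_pos.2 h)
    · by_cases h1 : -1 ≤ y
      · calc Real.sin y < 0 := Real.sin_neg_of_neg_of_neg_pi_lt h (by nlinarith [Real.pi_gt_three])
          _ < -y := by linarith
      · calc Real.sin y ≤ 1 := Real.sin_le_one y
          _ < -y := by linarith
  · rw [abs_of_pos h, abs_lt]
    constructor
    · by_cases h1 : y ≤ 1
      · have : 0 < Real.sin y := Real.sin_pos_of_pos_of_lt_pi h (by nlinarith [Real.pi_gt_three])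
        linarith
      · have := Real.neg_one_le_sin y; linarith
    · exact Real.sin_lt h

private lemma key_im {x y : ℝ} (hx : 0 ≤ x) (h : |y| ≤ Real.exp (-x) * |Real.sin y|) :
    y = 0 := by
  by_contra hy
  have h1 : Real.exp (-x) ≤ 1 := Real.exp_le_one_iff.2 (by linarith)
  have h2 : |Real.sin y| < |y| := abs_sin_lt_abs hy
  have h3 : Real.exp (-x) * |Real.sin y| ≤ |Real.sin y| := by
    nlinarith [abs_nonneg (Real.sin y)]
  have : |y| < |y| := lt_of_le_of_lt (h.trans h3) h2
  exact lt_irrefl _ this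

/-- inverted pendulum, triple zero singularity: for
`Δ(λ; α) = λ² - α² + 2α²e^{-λ} - α²e^{-2λ}`: (i) `Δ` factorizes as
`(λ - α(1 - e^{-λ}))(λ + α(1 - e^{-λ}))`; (ii) for `α = 1`, `λ = 0` is a root of
multiplicity exactly 3 and every nonzero root has negative real part (the triple root
at the origin is dominant). -/
theorem stmt_12 (Δ : ℝ → ℂ → ℂ)
    (hΔ : ∀ (α : ℝ) (lam : ℂ), Δ α lam =
      lam ^ 2 - (α : ℂ) ^ 2 + 2 * (α : ℂ) ^ 2 * Complex.exp (-lam)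
        - (α : ℂ) ^ 2 * Complex.exp (-2 * lam)) :
    (∀ (α : ℝ) (lam : ℂ), Δ α lam =
      (lam - (α : ℂ) * (1 - Complex.exp (-lam))) * (lam + (α : ℂ) * (1 - Complex.exp (-lam)))) ∧
    ((∀ j < 3, iteratedDeriv j (Δ 1) 0 = 0) ∧ iteratedDeriv 3 (Δ 1) 0 ≠ 0) ∧
    (∀ lam : ℂ, lam ≠ 0 → Δ 1 lam = 0 → lam.re < 0) := by
  have hexp2 : ∀ lam : ℂ, Complex.exp (-2 * lam) = Complex.exp (-lam) ^ 2 := by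
    intro lam
    rw [sq, ← Complex.exp_add]
    ring_nf
  have hfact : ∀ (α : ℝ) (lam : ℂ), Δ α lam =
      (lam - (α : ℂ) * (1 - Complex.exp (-lam))) * (lam + (α : ℂ) * (1 - Complex.exp (-lam))) := by
    intro α lam
    rw [hΔ, hexp2]
    ring
  refine ⟨hfact, ?_, ?_⟩
  · -- derivatives at 0
    have hfun : Δ 1 = fun lam : ℂ =>
        lam ^ 2 - 1 + 2 * Complex.exp (-lam) - Complex.exp (-2 * lam) := by
      funext lam
      rw [hΔ]; push_cast; ring
    -- derivative lemmas
    have he1 : ∀ z : ℂ, HasDerivAt (fun lam : ℂ => Complex.exp (-lam))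
        (-Complex.exp (-z)) z := by
      intro z
      simpa [mul_comm] using (hasDerivAt_neg z).cexp
    have he2 : ∀ z : ℂ, HasDerivAt (fun lam : ℂ => Complex.exp (-2 * lam))
        (-2 * Complex.exp (-2 * z)) z := by
      intro z
      have hlin : HasDerivAt (fun lam : ℂ => -2 * lam) (-2) z := by
        simpa using (hasDerivAt_id z).const_mul (-2 : ℂ)
      simpa [mul_comm] using hlin.cexp
    have hd0 : ∀ z : ℂ, HasDerivAt (Δ 1)
        (2 * z - 2 * Complex.exp (-z) + 2 * Complex.exp (-2 * z)) z := by
      intro z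
      rw [hfun]
      have : HasDerivAt (fun lam : ℂ =>
          lam ^ 2 - 1 + 2 * Complex.exp (-lam) - Complex.exp (-2 * lam))
          (2 * z - 0 + 2 * (-Complex.exp (-z)) - (-2 * Complex.exp (-2 * z))) z := by
        exact ((((hasDerivAt_pow 2 z).sub_const 1).add
          ((he1 z).const_mul 2)).sub (he2 z)).congr_deriv (by ring)
      exact this.congr_deriv (by ring)
    have hd1 : ∀ z : ℂ, HasDerivAt (fun z : ℂ => 2 * z - 2 * Complex.exp (-z)
        + 2 * Complex.exp (-2 * z)) (2 + 2 * Complex.exp (-z) - 4 * Complex.exp (-2 * z)) z := by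
      intro z
      have h2z : HasDerivAt (fun lam : ℂ => 2 * lam) (2 : ℂ) z := by
        simpa using (hasDerivAt_id z).const_mul (2 : ℂ)
      exact ((h2z.sub ((he1 z).const_mul 2)).add ((he2 z).const_mul 2)).congr_deriv (by ring)
    have hd2 : ∀ z : ℂ, HasDerivAt (fun z : ℂ => 2 + 2 * Complex.exp (-z)
        - 4 * Complex.exp (-2 * z)) (-2 * Complex.exp (-z) + 8 * Complex.exp (-2 * z)) z := by
      intro z
      exact ((((he1 z).const_mul 2).const_add 2).sub ((he2 z).const_mul 4)).congr_deriv (by ring)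
    have hD0 : deriv (Δ 1) = fun z : ℂ =>
        2 * z - 2 * Complex.exp (-z) + 2 * Complex.exp (-2 * z) := by
      funext z; exact (hd0 z).deriv
    have hD1 : deriv (fun z : ℂ => 2 * z - 2 * Complex.exp (-z) + 2 * Complex.exp (-2 * z))
        = fun z : ℂ => 2 + 2 * Complex.exp (-z) - 4 * Complex.exp (-2 * z) := by
      funext z; exact (hd1 z).deriv
    have hD2 : deriv (fun z : ℂ => 2 + 2 * Complex.exp (-z) - 4 * Complex.exp (-2 * z))
        = fun z : ℂ => -2 * Complex.exp (-z) + 8 * Complex.exp (-2 * z) := by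
      funext z; exact (hd2 z).deriv
    constructor
    · intro j hj
      interval_cases j
      · rw [iteratedDeriv_zero, hfun]; norm_num
      · rw [iteratedDeriv_one, hD0]; simp
      · rw [show (2 : ℕ) = 1 + 1 from rfl, iteratedDeriv_succ', hD0,
          iteratedDeriv_one, hD1]
        norm_num
    · rw [show (3 : ℕ) = 2 + 1 from rfl, iteratedDeriv_succ', hD0,
        show (2 : ℕ) = 1 + 1 from rfl, iteratedDeriv_succ', hD1, iteratedDeriv_one, hD2]
      norm_num
  · -- dominance
    intro lam hne hroot
    by_contra hre
    push_neg at hre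
    set x := lam.re with hx
    set y := lam.im with hy
    rw [hfact] at hroot
    have hexpre : (Complex.exp (-lam)).re = Real.exp (-x) * Real.cos y := by
      rw [Complex.exp_re]
      simp [Complex.neg_re, Complex.neg_im, Real.cos_neg]
      rfl
    have hexpim : (Complex.exp (-lam)).im = -(Real.exp (-x) * Real.sin y) := by
      rw [Complex.exp_im]
      simp [Complex.neg_re, Complex.neg_im, Real.sin_neg]
      rfl
    rcases mul_eq_zero.1 hroot with h | h
    · -- lam = 1 - exp(-lam)
      have heq : lam = 1 - Complex.exp (-lam) := by
        have := sub_eq_zero.1 h; simpa using this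
      have him : y = Real.exp (-x) * Real.sin y := by
        have := congrArg Complex.im heq
        simpa [hexpim] using this
      have hy0 : y = 0 := by
        apply key_im hre
        nth_rewrite 1 [him]
        rw [abs_mul, abs_of_pos (Real.exp_pos _)]
      have hrel : x = 1 - Real.exp (-x) * Real.cos y := by
        have := congrArg Complex.re heq
        simpa [hexpre] using this
      rw [hy0] at hrel
      simp at hrel
      have hx0 : x ≠ 0 := by
        intro h0
        apply hne
        apply Complex.ext <;> simp [← hx, ← hy, h0, hy0]
      have := Real.add_one_lt_exp (x := -x) (by simpa using hx0)
      linarith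
    · -- lam = exp(-lam) - 1
      have heq : lam = Complex.exp (-lam) - 1 := by
        have : lam + (1 - Complex.exp (-lam)) = 0 := by simpa using h
        linear_combination this
      have him : y = -(Real.exp (-x) * Real.sin y) := by
        have := congrArg Complex.im heq
        simpa [hexpim] using this
      have hy0 : y = 0 := by
        apply key_im hre
        nth_rewrite 1 [him]
        rw [abs_neg, abs_mul, abs_of_pos (Real.exp_pos _)]
      have hrel : x = Real.exp (-x) * Real.cos y - 1 := by
        have := congrArg Complex.re heq
        simpa [hexpre] using this
      rw [hy0] at hrel
      simp at hrel
      have hx0 : x ≠ 0 := by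
        intro h0
        apply hne
        apply Complex.ext <;> simp [← hx, ← hy, h0, hy0]
      have hxpos : 0 < x := lt_of_le_of_ne hre (Ne.symm hx0)
      have : Real.exp (-x) < 1 := Real.exp_lt_one_iff.2 (by linarith)
      linarith
end

section
/- For α ∈ ℝ define the quasipolynomial Δ(λ; α) = λ^2 - α^2 + 2α^2 e^{-λ} - α^2 e^{-2λ}. Then for every α with 0 < α < 1, the point λ = 0 is a root of Δ(·; α) of multiplicity exactly 2, and every root λ ∈ ℂ of Δ(·; α) with λ ≠ 0 satisfies Re(λ) < 0 (the double root at the origin is dominant even though the maximal multiplicity 3 is not attained). -/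
open Complex

private lemma hasDerivAt_exp_neg (x : ℂ) :
    HasDerivAt (fun lam : ℂ => Complex.exp (-lam)) (-Complex.exp (-x)) x := by
  simpa [mul_comm] using (hasDerivAt_neg x).cexp

private lemma hasDerivAt_exp_neg2 (x : ℂ) :
    HasDerivAt (fun lam : ℂ => Complex.exp (-2 * lam)) (-2 * Complex.exp (-2 * x)) x := by
  have h0 : HasDerivAt (fun lam : ℂ => -2 * lam) (-2 : ℂ) x := by
    simpa using (hasDerivAt_id x).const_mul (-2 : ℂ)
  simpa [mul_comm] using h0.cexp

private lemma hasDerivAt_f (c : ℂ) (x : ℂ) :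
    HasDerivAt (fun lam : ℂ =>
        lam ^ 2 - c + 2 * c * Complex.exp (-lam) - c * Complex.exp (-2 * lam))
      (2 * x - 2 * c * Complex.exp (-x) + 2 * c * Complex.exp (-2 * x)) x := by
  have h := (((hasDerivAt_pow 2 x).sub_const c).add
      ((hasDerivAt_exp_neg x).const_mul (2 * c))).sub
      ((hasDerivAt_exp_neg2 x).const_mul c)
  exact h.congr_deriv (by push_cast; ring)

private lemma hasDerivAt_g (c : ℂ) (x : ℂ) :
    HasDerivAt (fun lam : ℂ =>
        2 * lam - 2 * c * Complex.exp (-lam) + 2 * c * Complex.exp (-2 * lam))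
      (2 + 2 * c * Complex.exp (-x) - 4 * c * Complex.exp (-2 * x)) x := by
  have h := ((((hasDerivAt_id x).const_mul (2 : ℂ)).sub
      ((hasDerivAt_exp_neg x).const_mul (2 * c))).add
      ((hasDerivAt_exp_neg2 x).const_mul (2 * c)))
  exact h.congr_deriv (by ring)

private lemma norm_one_sub_exp_neg {lam : ℂ} (h : 0 ≤ lam.re) :
    ‖1 - Complex.exp (-lam)‖ ≤ ‖lam‖ := by
  have key : (1 : ℂ) - Complex.exp (-lam)
      = ∫ t in (0:ℝ)..1, lam * Complex.exp (-(t : ℂ) * lam) := by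
    have hderiv : ∀ t ∈ Set.uIcc (0:ℝ) 1,
        HasDerivAt (fun s : ℝ => -Complex.exp (-(s : ℂ) * lam))
          (lam * Complex.exp (-(t : ℂ) * lam)) t := by
      intro t _
      have h1 : HasDerivAt (fun w : ℂ => Complex.exp (-w * lam))
          (-lam * Complex.exp (-(t : ℂ) * lam)) (t : ℂ) := by
        have h0 : HasDerivAt (fun w : ℂ => -w * lam) (-lam) (t : ℂ) := by
          simpa using ((hasDerivAt_id (t : ℂ)).neg.mul_const lam)
        simpa [mul_comm] using h0.cexp
      have h2 := h1.comp_ofReal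
      simpa [neg_mul] using h2.fun_neg
    have hcont : IntervalIntegrable (fun t : ℝ => lam * Complex.exp (-(t : ℂ) * lam))
        MeasureTheory.volume 0 1 := by
      apply Continuous.intervalIntegrable
      continuity
    have := intervalIntegral.integral_eq_sub_of_hasDerivAt hderiv hcont
    rw [this]
    push_cast
    simp only [neg_mul, one_mul, zero_mul, neg_zero, Complex.exp_zero]
    ring
  rw [key]
  have hb : ∀ t ∈ Set.uIoc (0:ℝ) 1, ‖lam * Complex.exp (-(t : ℂ) * lam)‖ ≤ ‖lam‖ := by
    intro t ht
    rw [norm_mul]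
    rw [show ‖Complex.exp (-(t : ℂ) * lam)‖ = Real.exp ((-(t : ℂ) * lam).re) from by
      rw [Complex.norm_exp]]
    have ht0 : 0 ≤ t := by
      rcases Set.mem_uIoc.mp ht with h' | h'
      · exact le_of_lt h'.1
      · linarith [h'.1, h'.2]
    have hre : (-(t : ℂ) * lam).re = -(t * lam.re) := by simp
    rw [hre]
    have : Real.exp (-(t * lam.re)) ≤ 1 := by
      rw [Real.exp_le_one_iff]
      have : 0 ≤ t * lam.re := mul_nonneg ht0 h
      linarith
    nlinarith [norm_nonneg lam]
  have := intervalIntegral.norm_integral_le_of_norm_le_const hb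
  simpa using this

/-- inverted pendulum, dominant double root for `0 < α < 1`: for
`Δ(λ; α) = λ² - α² + 2α²e^{-λ} - α²e^{-2λ}` with `0 < α < 1`, the point `λ = 0` is a
root of multiplicity exactly 2 and every nonzero root has negative real part (the
double root at the origin is dominant even though the maximal multiplicity 3 is not
attained). -/
theorem stmt_13 (Δ : ℝ → ℂ → ℂ)
    (hΔ : ∀ (α : ℝ) (lam : ℂ), Δ α lam =
      lam ^ 2 - (α : ℂ) ^ 2 + 2 * (α : ℂ) ^ 2 * Complex.exp (-lam)
        - (α : ℂ) ^ 2 * Complex.exp (-2 * lam)) :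
    ∀ α : ℝ, 0 < α → α < 1 →
      ((∀ j < 2, iteratedDeriv j (Δ α) 0 = 0) ∧ iteratedDeriv 2 (Δ α) 0 ≠ 0) ∧
      (∀ lam : ℂ, lam ≠ 0 → Δ α lam = 0 → lam.re < 0) := by
  intro α hα0 hα1
  set c : ℂ := (α : ℂ) ^ 2 with hc
  have hfun : Δ α = fun lam : ℂ =>
      lam ^ 2 - c + 2 * c * Complex.exp (-lam) - c * Complex.exp (-2 * lam) :=
    funext (hΔ α)
  have hderiv1 : deriv (Δ α) = fun x : ℂ =>
      2 * x - 2 * c * Complex.exp (-x) + 2 * c * Complex.exp (-2 * x) := by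
    funext x
    rw [hfun]
    exact (hasDerivAt_f c x).deriv
  constructor
  · constructor
    · intro j hj
      interval_cases j
      · rw [iteratedDeriv_zero, hfun]
        simp only [neg_zero, Complex.exp_zero, mul_one, mul_zero, ne_eq, OfNat.ofNat_ne_zero,
          not_false_eq_true, zero_pow]
        ring
      · rw [iteratedDeriv_one, hderiv1]
        simp only [mul_zero, neg_zero, Complex.exp_zero, mul_one]
        ring
    · have : iteratedDeriv 2 (Δ α) 0 = 2 - 2 * c := by
        rw [show (2:ℕ) = 1 + 1 from rfl, iteratedDeriv_succ, iteratedDeriv_one, hderiv1]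
        have := (hasDerivAt_g c 0).deriv
        rw [this]
        simp only [neg_zero, mul_zero, Complex.exp_zero, mul_one]
        ring
      rw [this]
      intro h
      have hc1 : c = 1 := by
        linear_combination -h / 2
      rw [hc] at hc1
      have : (α : ℂ) ^ 2 = ((α ^ 2 : ℝ) : ℂ) := by push_cast; ring
      rw [this] at hc1
      have : (α : ℝ) ^ 2 = 1 := by exact_mod_cast hc1
      nlinarith
  · intro lam hlam hroot
    by_contra hre
    push_neg at hre
    rw [hΔ α lam] at hroot
    have hE2 : Complex.exp (-2 * lam) = Complex.exp (-lam) ^ 2 := by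
      rw [← Complex.exp_nat_mul]
      norm_num
    rw [hE2] at hroot
    have hfac : lam ^ 2 = ((α : ℂ) * (1 - Complex.exp (-lam))) ^ 2 := by
      linear_combination hroot
    have hnorm : ‖lam‖ ^ 2 = (α * ‖1 - Complex.exp (-lam)‖) ^ 2 := by
      have := congrArg norm hfac
      rw [norm_pow, norm_pow, norm_mul, Complex.norm_real] at this
      rw [this, Real.norm_eq_abs, abs_of_pos hα0]
    have hle : ‖1 - Complex.exp (-lam)‖ ≤ ‖lam‖ := norm_one_sub_exp_neg hre
    have hpos : 0 < ‖lam‖ := norm_pos_iff.mpr hlam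
    have h1 : ‖1 - Complex.exp (-lam)‖ ^ 2 ≤ ‖lam‖ ^ 2 :=
      pow_le_pow_left₀ (norm_nonneg _) hle 2
    have h2 : α ^ 2 * ‖1 - Complex.exp (-lam)‖ ^ 2 ≤ α ^ 2 * ‖lam‖ ^ 2 :=
      mul_le_mul_of_nonneg_left h1 (sq_nonneg α)
    have h3 : 0 < (1 - α ^ 2) * (‖lam‖ * ‖lam‖) :=
      mul_pos (by nlinarith) (mul_pos hpos hpos)
    nlinarith
end
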